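/- arXiv:2106.09801 — 7 statements merged into one kernel-verified Lean document; each statement's English description precedes it below -/
import Mathlib

section
/- Let M and N be finite disjoint sets, P a partition of M and Q a partition of N. For every partial bijection S ⊆ P × Q (i.e. (p, q), (p, q') ∈ S implies q = q', and (p, q), (p', q) ∈ S implies p = p'), define G_S = {p ∪ q : (p, q) ∈ S} ∪ {p ∈ P : there is no q with (p, q) ∈ S} ∪ {q ∈ Q : there is no p with (p, q) ∈ S}. Then the map S ↦ G_S is a bijection from the set of partial bijections between P and Q onto the set of coupled partitions P ∪̃ Q. -/
/-- A partition of a set `S`: a family of pairwise disjoint nonempty subsets of `S`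
whose union is `S`. -/
def IsPartitionOf {α : Type*} (S : Set α) (P : Set (Set α)) : Prop :=
  (∀ p ∈ P, p.Nonempty) ∧ (∀ p ∈ P, p ⊆ S) ∧ P.Pairwise Disjoint ∧ ⋃₀ P = S

/-- For disjoint sets `M`, `N` and partitions `P` of `M`, `Q` of `N`, the set of coupled
partitions `P ∪̃ Q`: partitions `G` of `M ∪ N` with `{g ∩ M : g ∈ G} \ {∅} = P` and
`{g ∩ N : g ∈ G} \ {∅} = Q`. -/
def coupledPartitions {α : Type*} (M N : Set α) (P Q : Set (Set α)) :
    Set (Set (Set α)) :=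
  {G | IsPartitionOf (M ∪ N) G ∧
    ((fun g => g ∩ M) '' G) \ {∅} = P ∧ ((fun g => g ∩ N) '' G) \ {∅} = Q}

/-- A partial bijection `S ⊆ P × Q`: `(p, q), (p, q') ∈ S → q = q'` and
`(p, q), (p', q) ∈ S → p = p'`. -/
def IsPartialBij {α : Type*} (P Q : Set (Set α)) (S : Set (Set α × Set α)) : Prop :=
  (∀ s ∈ S, s.1 ∈ P ∧ s.2 ∈ Q) ∧
  (∀ p q q', (p, q) ∈ S → (p, q') ∈ S → q = q') ∧
  (∀ p p' q, (p, q) ∈ S → (p', q) ∈ S → p = p')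

/-- The map `S ↦ G_S = {p ∪ q : (p,q) ∈ S} ∪ {unmatched p ∈ P} ∪ {unmatched q ∈ Q}` is a
bijection from the set of partial bijections between `P` and `Q` onto the set of coupled
partitions `P ∪̃ Q`. -/
theorem stmt_1 {α : Type*} (M N : Set α) (hM : M.Finite) (hN : N.Finite)
    (hMN : Disjoint M N) (P Q : Set (Set α))
    (hP : IsPartitionOf M P) (hQ : IsPartitionOf N Q) :
    Set.BijOn
      (fun S : Set (Set α × Set α) =>
        ((fun s : Set α × Set α => s.1 ∪ s.2) '' S) ∪
          {p ∈ P | ∀ q, (p, q) ∉ S} ∪ {q ∈ Q | ∀ p, (p, q) ∉ S})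
      {S | IsPartialBij P Q S}
      (coupledPartitions M N P Q) := by
  obtain ⟨hPne, hPM, hPd, hPU⟩ := hP
  obtain ⟨hQne, hQN, hQd, hQU⟩ := hQ
  -- basic facts
  have hpN : ∀ p ∈ P, p ∩ N = ∅ := fun p hp => (hMN.mono_left (hPM p hp)).inter_eq
  have hqM : ∀ q ∈ Q, q ∩ M = ∅ := fun q hq => (hMN.symm.mono_left (hQN q hq)).inter_eq
  have hpM : ∀ p ∈ P, p ∩ M = p := fun p hp => Set.inter_eq_self_of_subset_left (hPM p hp)
  have hqN : ∀ q ∈ Q, q ∩ N = q := fun q hq => Set.inter_eq_self_of_subset_left (hQN q hq)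
  have hpuqM : ∀ p ∈ P, ∀ q ∈ Q, (p ∪ q) ∩ M = p := by
    intro p hp q hq
    rw [Set.union_inter_distrib_right, hpM p hp, hqM q hq, Set.union_empty]
  have hpuqN : ∀ p ∈ P, ∀ q ∈ Q, (p ∪ q) ∩ N = q := by
    intro p hp q hq
    rw [Set.union_inter_distrib_right, hpN p hp, hqN q hq, Set.empty_union]
  have hPeq : ∀ p ∈ P, ∀ p' ∈ P, ∀ x, x ∈ p → x ∈ p' → p = p' := by
    intro p hp p' hp' x hx hx'
    by_contra h
    exact (Set.disjoint_left.mp (hPd hp hp' h) hx) hx'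
  have hQeq : ∀ q ∈ Q, ∀ q' ∈ Q, ∀ x, x ∈ q → x ∈ q' → q = q' := by
    intro q hq q' hq' x hx hx'
    by_contra h
    exact (Set.disjoint_left.mp (hQd hq hq' h) hx) hx'
  -- membership characterization of the image of S
  have hmemF : ∀ (S : Set (Set α × Set α)) (g : Set α),
      g ∈ ((fun s : Set α × Set α => s.1 ∪ s.2) '' S) ∪
        {p ∈ P | ∀ q, (p, q) ∉ S} ∪ {q ∈ Q | ∀ p, (p, q) ∉ S} ↔
      (∃ p q, (p, q) ∈ S ∧ g = p ∪ q) ∨ (g ∈ P ∧ ∀ q, (g, q) ∉ S) ∨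
        (g ∈ Q ∧ ∀ p, (p, g) ∉ S) := by
    intro S g
    simp only [Set.mem_union, Set.mem_image, Set.mem_setOf_eq, Set.mem_sep_iff,
      Prod.exists]
    constructor
    · rintro ((⟨a, b, hab, rfl⟩ | h) | h)
      · exact Or.inl ⟨a, b, hab, rfl⟩
      · exact Or.inr (Or.inl h)
      · exact Or.inr (Or.inr h)
    · rintro (⟨a, b, hab, rfl⟩ | h | h)
      · exact Or.inl (Or.inl ⟨a, b, hab, rfl⟩)
      · exact Or.inl (Or.inr h)
      · exact Or.inr h
  -- key: if S is a partial bijection, two members of G_S sharing a point are equal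
  have hFeq : ∀ S, IsPartialBij P Q S → ∀ g, ((∃ p q, (p, q) ∈ S ∧ g = p ∪ q) ∨
      (g ∈ P ∧ ∀ q, (g, q) ∉ S) ∨ (g ∈ Q ∧ ∀ p, (p, g) ∉ S)) →
      ∀ g', ((∃ p q, (p, q) ∈ S ∧ g' = p ∪ q) ∨ (g' ∈ P ∧ ∀ q, (g', q) ∉ S) ∨
      (g' ∈ Q ∧ ∀ p, (p, g') ∉ S)) → ∀ x, x ∈ g → x ∈ g' → g = g' := by
    intro S hS g hg g' hg' x hx hx'
    obtain ⟨hS1, hSq, hSp⟩ := hS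
    have key : ∀ h, ((∃ p q, (p, q) ∈ S ∧ h = p ∪ q) ∨ (h ∈ P ∧ ∀ q, (h, q) ∉ S) ∨
        (h ∈ Q ∧ ∀ p, (p, h) ∉ S)) → x ∈ h →
        (∃ p, p ∈ P ∧ x ∈ p ∧
          ((∃ q, (p, q) ∈ S ∧ h = p ∪ q) ∨ (h = p ∧ ∀ q, (p, q) ∉ S))) ∨
        (∃ q, q ∈ Q ∧ x ∈ q ∧
          ((∃ p, (p, q) ∈ S ∧ h = p ∪ q) ∨ (h = q ∧ ∀ p, (p, q) ∉ S))) := by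
      rintro h (⟨p, q, hpq, rfl⟩ | ⟨hhP, hun⟩ | ⟨hhQ, hun⟩) hxh
      · rcases hxh with hxp | hxq
        · exact Or.inl ⟨p, (hS1 _ hpq).1, hxp, Or.inl ⟨q, hpq, rfl⟩⟩
        · exact Or.inr ⟨q, (hS1 _ hpq).2, hxq, Or.inl ⟨p, hpq, rfl⟩⟩
      · exact Or.inl ⟨h, hhP, hxh, Or.inr ⟨rfl, hun⟩⟩
      · exact Or.inr ⟨h, hhQ, hxh, Or.inr ⟨rfl, hun⟩⟩
    rcases key g hg hx with ⟨p, hp, hxp, hc⟩ | ⟨q, hq, hxq, hc⟩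
    · rcases key g' hg' hx' with ⟨p', hp', hxp', hc'⟩ | ⟨q', hq', hxq', hc'⟩
      · have hpp : p = p' := hPeq p hp p' hp' x hxp hxp'
        subst hpp
        rcases hc with ⟨q, hq1, rfl⟩ | ⟨rfl, hun⟩
        · rcases hc' with ⟨q', hq1', rfl⟩ | ⟨rfl, hun'⟩
          · rw [hSq p q q' hq1 hq1']
          · exact absurd hq1 (hun' q)
        · rcases hc' with ⟨q', hq1', rfl⟩ | ⟨heq, _⟩
          · exact absurd hq1' (hun q')
          · rw [heq]
      · exact absurd (hQN q' hq' hxq') (Set.disjoint_left.mp hMN (hPM p hp hxp))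
    · rcases key g' hg' hx' with ⟨p', hp', hxp', hc'⟩ | ⟨q', hq', hxq', hc'⟩
      · exact absurd (hQN q hq hxq) (Set.disjoint_left.mp hMN (hPM p' hp' hxp'))
      · have hqq : q = q' := hQeq q hq q' hq' x hxq hxq'
        subst hqq
        rcases hc with ⟨p, hp1, rfl⟩ | ⟨rfl, hun⟩
        · rcases hc' with ⟨p', hp1', rfl⟩ | ⟨rfl, hun'⟩
          · rw [hSp p p' q hp1 hp1']
          · exact absurd hp1 (hun' p)
        · rcases hc' with ⟨p', hp1', rfl⟩ | ⟨heq, _⟩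
          · exact absurd hp1' (hun p')
          · rw [heq]
  refine ⟨?_, ?_, ?_⟩
  · -- MapsTo
    intro S hS
    simp only [Set.mem_setOf_eq] at hS
    obtain ⟨hS1, hSq, hSp⟩ := hS
    refine ⟨⟨?_, ?_, ?_, ?_⟩, ?_, ?_⟩
    · -- nonempty
      intro g hg
      rcases (hmemF S g).mp hg with ⟨p, q, hpq, rfl⟩ | ⟨hgP, _⟩ | ⟨hgQ, _⟩
      · exact (hPne p (hS1 _ hpq).1).mono Set.subset_union_left
      · exact hPne g hgP
      · exact hQne g hgQ
    · -- subset of M ∪ N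
      intro g hg
      rcases (hmemF S g).mp hg with ⟨p, q, hpq, rfl⟩ | ⟨hgP, _⟩ | ⟨hgQ, _⟩
      · exact Set.union_subset_union (hPM p (hS1 _ hpq).1) (hQN q (hS1 _ hpq).2)
      · exact (hPM g hgP).trans Set.subset_union_left
      · exact (hQN g hgQ).trans Set.subset_union_right
    · -- pairwise disjoint
      intro g hg g' hg' hne
      rw [Set.disjoint_left]
      intro x hx hx'
      exact hne (hFeq S ⟨hS1, hSq, hSp⟩ g ((hmemF S g).mp hg) g'
        ((hmemF S g').mp hg') x hx hx')
    · -- union is M ∪ N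
      apply Set.Subset.antisymm
      · apply Set.sUnion_subset
        intro g hg
        rcases (hmemF S g).mp hg with ⟨p, q, hpq, rfl⟩ | ⟨hgP, _⟩ | ⟨hgQ, _⟩
        · exact Set.union_subset_union (hPM p (hS1 _ hpq).1) (hQN q (hS1 _ hpq).2)
        · exact (hPM g hgP).trans Set.subset_union_left
        · exact (hQN g hgQ).trans Set.subset_union_right
      · rintro x (hxM | hxN)
        · rw [← hPU] at hxM
          obtain ⟨p, hp, hxp⟩ := hxM
          by_cases hm : ∃ q, (p, q) ∈ S
          · obtain ⟨q, hq⟩ := hm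
            exact ⟨p ∪ q, (hmemF S _).mpr (Or.inl ⟨p, q, hq, rfl⟩), Or.inl hxp⟩
          · push_neg at hm
            exact ⟨p, (hmemF S _).mpr (Or.inr (Or.inl ⟨hp, hm⟩)), hxp⟩
        · rw [← hQU] at hxN
          obtain ⟨q, hq, hxq⟩ := hxN
          by_cases hm : ∃ p, (p, q) ∈ S
          · obtain ⟨p, hp⟩ := hm
            exact ⟨p ∪ q, (hmemF S _).mpr (Or.inl ⟨p, q, hp, rfl⟩), Or.inr hxq⟩
          · push_neg at hm
            exact ⟨q, (hmemF S _).mpr (Or.inr (Or.inr ⟨hq, hm⟩)), hxq⟩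
    · -- trace on M equals P
      apply Set.Subset.antisymm
      · rintro x ⟨⟨g, hg, rfl⟩, hne⟩
        simp only [Set.mem_singleton_iff] at hne
        show g ∩ M ∈ P
        rcases (hmemF S g).mp hg with ⟨p, q, hpq, rfl⟩ | ⟨hgP, _⟩ | ⟨hgQ, _⟩
        · rw [hpuqM p (hS1 _ hpq).1 q (hS1 _ hpq).2]; exact (hS1 _ hpq).1
        · rw [hpM g hgP]; exact hgP
        · exact absurd (hqM g hgQ) hne
      · intro p hp
        by_cases hm : ∃ q, (p, q) ∈ S
        · obtain ⟨q, hq⟩ := hm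
          refine ⟨⟨p ∪ q, (hmemF S _).mpr (Or.inl ⟨p, q, hq, rfl⟩), ?_⟩, ?_⟩
          · exact hpuqM p hp q (hS1 _ hq).2
          · simpa using (hPne p hp).ne_empty
        · push_neg at hm
          refine ⟨⟨p, (hmemF S _).mpr (Or.inr (Or.inl ⟨hp, hm⟩)), hpM p hp⟩, ?_⟩
          simpa using (hPne p hp).ne_empty
    · -- trace on N equals Q
      apply Set.Subset.antisymm
      · rintro x ⟨⟨g, hg, rfl⟩, hne⟩
        simp only [Set.mem_singleton_iff] at hne
        show g ∩ N ∈ Q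
        rcases (hmemF S g).mp hg with ⟨p, q, hpq, rfl⟩ | ⟨hgP, _⟩ | ⟨hgQ, _⟩
        · rw [hpuqN p (hS1 _ hpq).1 q (hS1 _ hpq).2]; exact (hS1 _ hpq).2
        · exact absurd (hpN g hgP) hne
        · rw [hqN g hgQ]; exact hgQ
      · intro q hq
        by_cases hm : ∃ p, (p, q) ∈ S
        · obtain ⟨p, hp⟩ := hm
          refine ⟨⟨p ∪ q, (hmemF S _).mpr (Or.inl ⟨p, q, hp, rfl⟩), ?_⟩, ?_⟩
          · exact hpuqN p (hS1 _ hp).1 q hq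
          · simpa using (hQne q hq).ne_empty
        · push_neg at hm
          refine ⟨⟨q, (hmemF S _).mpr (Or.inr (Or.inr ⟨hq, hm⟩)), hqN q hq⟩, ?_⟩
          simpa using (hQne q hq).ne_empty
  · -- InjOn
    intro S₁ hS₁ S₂ hS₂ hF
    simp only [Set.mem_setOf_eq] at hS₁ hS₂
    have main : ∀ S T : Set (Set α × Set α), IsPartialBij P Q S → IsPartialBij P Q T →
        (((fun s : Set α × Set α => s.1 ∪ s.2) '' S) ∪
          {p ∈ P | ∀ q, (p, q) ∉ S} ∪ {q ∈ Q | ∀ p, (p, q) ∉ S}) =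
        (((fun s : Set α × Set α => s.1 ∪ s.2) '' T) ∪
          {p ∈ P | ∀ q, (p, q) ∉ T} ∪ {q ∈ Q | ∀ p, (p, q) ∉ T}) →
        ∀ p q, (p, q) ∈ S → (p, q) ∈ T := by
      intro S T hS hT hFST p q hpq
      have hp := (hS.1 _ hpq).1
      have hq := (hS.1 _ hpq).2
      have hmem : p ∪ q ∈ (((fun s : Set α × Set α => s.1 ∪ s.2) '' T) ∪
          {p ∈ P | ∀ q, (p, q) ∉ T} ∪ {q ∈ Q | ∀ p, (p, q) ∉ T}) := by
        rw [← hFST]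
        exact (hmemF S _).mpr (Or.inl ⟨p, q, hpq, rfl⟩)
      rcases (hmemF T _).mp hmem with ⟨p', q', hpq', heq⟩ | ⟨hgP, _⟩ | ⟨hgQ, _⟩
      · have hp' := (hT.1 _ hpq').1
        have hq' := (hT.1 _ hpq').2
        have h1 : p = p' := by
          rw [← hpuqM p hp q hq, ← hpuqM p' hp' q' hq', heq]
        have h2 : q = q' := by
          rw [← hpuqN p hp q hq, ← hpuqN p' hp' q' hq', heq]
        rw [h1, h2]; exact hpq'
      · have h1 := hpN _ hgP
        rw [hpuqN p hp q hq] at h1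
        exact absurd h1 (hQne q hq).ne_empty
      · have h1 := hqM _ hgQ
        rw [hpuqM p hp q hq] at h1
        exact absurd h1 (hPne p hp).ne_empty
    ext ⟨p, q⟩
    exact ⟨fun h => main S₁ S₂ hS₁ hS₂ hF p q h, fun h => main S₂ S₁ hS₂ hS₁ hF.symm p q h⟩
  · -- SurjOn
    intro G hG
    obtain ⟨⟨hGne, hGsub, hGd, hGU⟩, hGM, hGN⟩ := hG
    have hGeq : ∀ g ∈ G, ∀ g' ∈ G, ∀ x, x ∈ g → x ∈ g' → g = g' := by
      intro g hg g' hg' x hx hx'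
      by_contra h
      exact (Set.disjoint_left.mp (hGd hg hg' h) hx) hx'
    have hGsplit : ∀ g ∈ G, g = (g ∩ M) ∪ (g ∩ N) := by
      intro g hg
      rw [← Set.inter_union_distrib_left, Set.inter_eq_self_of_subset_left (hGsub g hg)]
    set S : Set (Set α × Set α) :=
      {s | ∃ g ∈ G, g ∩ M = s.1 ∧ g ∩ N = s.2 ∧ s.1 ≠ ∅ ∧ s.2 ≠ ∅} with hSdef
    have hSmem : ∀ a b, (a, b) ∈ S ↔
        ∃ g ∈ G, g ∩ M = a ∧ g ∩ N = b ∧ a ≠ ∅ ∧ b ≠ ∅ := fun a b => Iff.rfl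
    have hSpb : IsPartialBij P Q S := by
      refine ⟨?_, ?_, ?_⟩
      · rintro ⟨a, b⟩ ⟨g, hg, ha, hb, hane, hbne⟩
        dsimp only at ha hb hane hbne ⊢
        constructor
      
        · rw [← hGM]; exact ⟨⟨g, hg, ha⟩, by simpa using hane⟩
        · rw [← hGN]; exact ⟨⟨g, hg, hb⟩, by simpa using hbne⟩
      · rintro p q q' ⟨g, hg, ha, hb, hane, _⟩ ⟨g', hg', ha', hb', _, _⟩
        dsimp only at ha hb ha' hb' hane
        obtain ⟨x, hx⟩ := Set.nonempty_iff_ne_empty.mpr hane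
        have hx1 : x ∈ g := by have h := hx; rw [← ha] at h; exact h.1
        have hx2 : x ∈ g' := by have h := hx; rw [← ha'] at h; exact h.1
        have hgg : g = g' := hGeq g hg g' hg' x hx1 hx2
        rw [← hb, ← hb', hgg]
      · rintro p p' q ⟨g, hg, ha, hb, _, hbne⟩ ⟨g', hg', ha', hb', _, _⟩
        dsimp only at ha hb ha' hb' hbne
        obtain ⟨x, hx⟩ := Set.nonempty_iff_ne_empty.mpr hbne
        have hx1 : x ∈ g := by have h := hx; rw [← hb] at h; exact h.1
        have hx2 : x ∈ g' := by have h := hx; rw [← hb'] at h; exact h.1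
        have hgg : g = g' := hGeq g hg g' hg' x hx1 hx2
        rw [← ha, ← ha', hgg]
    refine ⟨S, hSpb, ?_⟩
    apply Set.eq_of_subset_of_subset
    · intro g hg
      rcases (hmemF S g).mp hg with ⟨p, q, hpq, rfl⟩ | ⟨hgP, hun⟩ | ⟨hgQ, hun⟩
      · obtain ⟨g', hg', ha, hb, _, _⟩ := hpq
        have h := hGsplit g' hg'
        rw [ha, hb] at h
        rwa [← h]
      · obtain ⟨⟨g', hg', ha⟩, hne⟩ : g ∈ ((fun g => g ∩ M) '' G) \ {∅} := by
          rw [hGM]; exact hgP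
        dsimp only at ha
        simp only [Set.mem_singleton_iff] at hne
        have hbN : g' ∩ N = ∅ := by
          by_contra hb
          exact hun (g' ∩ N) ((hSmem g (g' ∩ N)).mpr ⟨g', hg', ha, rfl, hne, hb⟩)
        have h := hGsplit g' hg'
        rw [ha, hbN, Set.union_empty] at h
        rwa [← h]
      · obtain ⟨⟨g', hg', hb⟩, hne⟩ : g ∈ ((fun g => g ∩ N) '' G) \ {∅} := by
          rw [hGN]; exact hgQ
        dsimp only at hb
        simp only [Set.mem_singleton_iff] at hne
        have haM : g' ∩ M = ∅ := by
          by_contra ha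
          exact hun (g' ∩ M) ((hSmem (g' ∩ M) g).mpr ⟨g', hg', rfl, hb, ha, hne⟩)
        have h := hGsplit g' hg'
        rw [hb, haM, Set.empty_union] at h
        rwa [← h]
    · intro g hg
      have hsplit := hGsplit g hg
      by_cases haM : g ∩ M = ∅
      · have hbne : g ∩ N ≠ ∅ := by
          intro h
          rw [haM, h, Set.union_empty] at hsplit
          exact (hGne g hg).ne_empty hsplit
        have hgeq : g ∩ N = g := by conv_rhs => rw [hsplit, haM, Set.empty_union]
        refine (hmemF S g).mpr (Or.inr (Or.inr ⟨?_, ?_⟩))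
        · rw [← hGN]
          refine ⟨⟨g, hg, hgeq⟩, ?_⟩
          simp only [Set.mem_singleton_iff]
          exact fun h => hbne (hgeq.trans h)
        · rintro p ⟨g', hg', ha', hb', hane, _⟩
          dsimp only at ha' hb' hane
          obtain ⟨x, hx⟩ := Set.nonempty_iff_ne_empty.mpr
            (show g' ∩ N ≠ ∅ by rw [hb', ← hgeq]; exact hbne)
          have hx1 : x ∈ g' := hx.1
          have hx2 : x ∈ g := by have h := hx; rw [hb'] at h; exact h
          have hgg : g = g' := hGeq g hg g' hg' x hx2 hx1
          rw [← hgg] at ha'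
          rw [haM] at ha'
          exact hane ha'.symm
      · by_cases hbN : g ∩ N = ∅
        · have hgeq : g ∩ M = g := by conv_rhs => rw [hsplit, hbN, Set.union_empty]
          refine (hmemF S g).mpr (Or.inr (Or.inl ⟨?_, ?_⟩))
          · rw [← hGM]
            refine ⟨⟨g, hg, hgeq⟩, ?_⟩
            simp only [Set.mem_singleton_iff]
            exact fun h => haM (hgeq.trans h)
          · rintro q ⟨g', hg', ha', hb', _, hbne'⟩
            dsimp only at ha' hb' hbne'
            obtain ⟨x, hx⟩ := Set.nonempty_iff_ne_empty.mpr
              (show g' ∩ M ≠ ∅ by rw [ha', ← hgeq]; exact haM)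
            have hx1 : x ∈ g' := hx.1
            have hx2 : x ∈ g := by have h := hx; rw [ha'] at h; exact h
            have hgg : g = g' := hGeq g hg g' hg' x hx2 hx1
            rw [← hgg] at hb'
            rw [hbN] at hb'
            exact hbne' hb'.symm
        · refine (hmemF S g).mpr (Or.inl ⟨g ∩ M, g ∩ N, ?_, hsplit⟩)
          exact (hSmem (g ∩ M) (g ∩ N)).mpr ⟨g, hg, rfl, rfl, haM, hbN⟩
end

section
/- Every Lions forest is isomorphic — via a bijection of node sets carrying edges to edges, labels to labels, the h0-hyperedge to the h0-hyperedge and the partition H to the partition H — to a Lions forest lying in the smallest class 𝒞 of Lions forests that contains every single-node Lions tree ({x}, ∅, {x}, ∅, x ↦ i) for i ∈ {1, …, d}, and is closed under the operations: T1 ⊛ T2 for T1, T2 ∈ 𝒞 with disjoint node sets; 𝓔[T] for T ∈ 𝒞; and ⌊T⌋_i for T ∈ 𝒞, i ∈ {1, …, d} and any choice of new node x0 outside the node set of T. -/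
/-- A Lions forest over node type `V` with labels in `{1, …, d}` (encoded as `Fin d`).
The data consists of a finite nonempty node set `N`, a set of directed edges `E` pointing
towards the roots, a distinguished hyperedge `h0 ⊆ N`, a partition `H` of `N \ h0`,
a labelling `L`, together with the depth function (number of edges on the path to the root),
subject to the structural conditions (i), (ii), (iii) of a Lions forest. -/
structure LionsForest (V : Type*) (d : ℕ) where
  N : Set V
  E : Set (V × V)
  h0 : Set V
  H : Set (Set V)
  L : V → Fin d
  depth : V → ℕ
  finite_N : N.Finite
  nonempty_N : N.Nonempty
  mem_of_edge : ∀ x y : V, (x, y) ∈ E → x ∈ N ∧ y ∈ N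
  edge_unique : ∀ x y z : V, (x, y) ∈ E → (x, z) ∈ E → y = z
  h0_subset : h0 ⊆ N
  H_partition : IsPartitionOf (N \ h0) H
  depth_root : ∀ x ∈ N, (∀ y, (x, y) ∉ E) → depth x = 0
  depth_edge : ∀ x y : V, (x, y) ∈ E → depth x = depth y + 1
  h0_root : h0.Nonempty → ∃ x ∈ h0, ∀ y, (x, y) ∉ E
  hyper_parent : ∀ h ∈ insert h0 H \ {(∅ : Set V)}, ∀ x ∈ h, ∀ y ∈ h,
    depth x < depth y → ∀ z, (y, z) ∈ E → z ∈ h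
  hyper_sibling : ∀ h ∈ insert h0 H \ {(∅ : Set V)}, ∀ x₁ ∈ h, ∀ y₁ ∈ h,
    depth x₁ = depth y₁ → ∀ x₂ y₂, (x₁, x₂) ∈ E → (y₁, y₂) ∈ E → x₂ ≠ y₂ →
      x₂ ∈ h ∧ y₂ ∈ h

/-- The smallest class of Lions forests (over node type `V`, with labels in `Fin d`)
containing every single-node Lions tree `({x}, ∅, {x}, ∅, x ↦ i)`, and closed under the
product `⊛` of forests with disjoint node sets, the integration operator `𝓔`, and the
grafting operators `⌊·⌋ᵢ` (for any choice of new node `x0`). -/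
inductive InGenClass {V : Type*} {d : ℕ} : LionsForest V d → Prop
  | single (T : LionsForest V d) (x : V) (i : Fin d)
      (hN : T.N = {x}) (hE : T.E = ∅) (hh0 : T.h0 = {x}) (hH : T.H = ∅)
      (hL : T.L x = i) : InGenClass T
  | prod (T T1 T2 : LionsForest V d) :
      InGenClass T1 → InGenClass T2 → Disjoint T1.N T2.N →
      T.N = T1.N ∪ T2.N → T.E = T1.E ∪ T2.E → T.h0 = T1.h0 ∪ T2.h0 →
      T.H = T1.H ∪ T2.H →
      (∀ x ∈ T1.N, T.L x = T1.L x) → (∀ x ∈ T2.N, T.L x = T2.L x) → InGenClass T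
  | integ (T T' : LionsForest V d) :
      InGenClass T' →
      T.N = T'.N → T.E = T'.E → T.h0 = ∅ →
      T.H = insert T'.h0 T'.H \ {(∅ : Set V)} →
      (∀ x ∈ T'.N, T.L x = T'.L x) → InGenClass T
  | graft (T T' : LionsForest V d) (x0 : V) (i : Fin d) :
      InGenClass T' → x0 ∉ T'.N →
      T.N = insert x0 T'.N →
      T.E = T'.E ∪ {e : V × V | e.1 ∈ T'.N ∧ (∀ y, (e.1, y) ∉ T'.E) ∧ e.2 = x0} →
      T.h0 = insert x0 T'.h0 → T.H = T'.H →
      (∀ x ∈ T'.N, T.L x = T'.L x) → T.L x0 = i → InGenClass T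

/-- An isomorphism of Lions forests: a bijection of node sets carrying edges to edges,
labels to labels, the `h0`-hyperedge to the `h0`-hyperedge and the partition `H` to the
partition `H`. -/
def LFIso {V W : Type*} {d : ℕ} (T : LionsForest V d) (T' : LionsForest W d) : Prop :=
  ∃ φ : V → W,
    Set.BijOn φ T.N T'.N ∧
    (∀ x ∈ T.N, ∀ y ∈ T.N, ((x, y) ∈ T.E ↔ (φ x, φ y) ∈ T'.E)) ∧
    (∀ x ∈ T.N, T'.L (φ x) = T.L x) ∧
    φ '' T.h0 = T'.h0 ∧
    (Set.image φ) '' T.H = T'.H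
namespace LionsForest

variable {V : Type*} {d : ℕ}

/-! ### Parent and root functions -/

open Classical in
noncomputable def par (T : LionsForest V d) (x : V) : V :=
  if h : ∃ y, (x, y) ∈ T.E then h.choose else x

lemma par_edge {T : LionsForest V d} {x : V} (h : ∃ y, (x, y) ∈ T.E) :
    (x, T.par x) ∈ T.E := by
  rw [par, dif_pos h]; exact h.choose_spec

lemma edge_par {T : LionsForest V d} {x y : V} (h : (x, y) ∈ T.E) : T.par x = y :=
  T.edge_unique x _ y (par_edge ⟨y, h⟩) h

lemma exists_edge_of_depth_pos {T : LionsForest V d} {x : V} (hx : x ∈ T.N)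
    (hd : 0 < T.depth x) : ∃ y, (x, y) ∈ T.E := by
  by_contra h
  push_neg at h
  have := T.depth_root x hx h
  omega

lemma no_edge_of_depth_zero {T : LionsForest V d} {x : V} (hx : T.depth x = 0) :
    ∀ y, (x, y) ∉ T.E := by
  intro y h
  have := T.depth_edge x y h
  omega

lemma depth_par {T : LionsForest V d} {x : V} (hx : x ∈ T.N) (h : 0 < T.depth x) :
    T.depth (T.par x) + 1 = T.depth x ∧ T.par x ∈ T.N := by
  have he := par_edge (exists_edge_of_depth_pos hx h)
  exact ⟨(T.depth_edge _ _ he).symm, (T.mem_of_edge _ _ he).2⟩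

lemma iter_par {T : LionsForest V d} {x : V} (hx : x ∈ T.N) :
    ∀ k, k ≤ T.depth x → T.par^[k] x ∈ T.N ∧ T.depth (T.par^[k] x) = T.depth x - k := by
  intro k
  induction k with
  | zero => intro _; simpa using hx
  | succ k ih =>
    intro hk
    obtain ⟨hmem, hdep⟩ := ih (by omega)
    have hpos : 0 < T.depth (T.par^[k] x) := by omega
    obtain ⟨h1, h2⟩ := depth_par hmem hpos
    rw [Function.iterate_succ_apply']
    exact ⟨h2, by omega⟩

noncomputable def rootOf (T : LionsForest V d) (x : V) : V := T.par^[T.depth x] x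

lemma rootOf_mem {T : LionsForest V d} {x : V} (hx : x ∈ T.N) : T.rootOf x ∈ T.N :=
  (iter_par hx _ le_rfl).1

lemma depth_rootOf {T : LionsForest V d} {x : V} (hx : x ∈ T.N) :
    T.depth (T.rootOf x) = 0 := by
  have := (iter_par hx _ le_rfl).2
  simpa [rootOf] using this

lemma rootOf_of_depth_zero {T : LionsForest V d} {x : V} (h : T.depth x = 0) :
    T.rootOf x = x := by simp [rootOf, h]

lemma rootOf_rootOf {T : LionsForest V d} {x : V} (hx : x ∈ T.N) :
    T.rootOf (T.rootOf x) = T.rootOf x :=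
  rootOf_of_depth_zero (depth_rootOf hx)

lemma rootOf_par {T : LionsForest V d} {x : V} (hx : x ∈ T.N) (h : 0 < T.depth x) :
    T.rootOf (T.par x) = T.rootOf x := by
  have hd : T.depth (T.par x) + 1 = T.depth x := (depth_par hx h).1
  rw [rootOf, rootOf, ← hd, Function.iterate_succ_apply]

lemma rootOf_edge {T : LionsForest V d} {x y : V} (h : (x, y) ∈ T.E) :
    T.rootOf x = T.rootOf y := by
  have hx := (T.mem_of_edge x y h).1
  have hpos : 0 < T.depth x := by
    have := T.depth_edge x y h; omega
  rw [← rootOf_par hx hpos, edge_par h]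

lemma rootOf_no_edge {T : LionsForest V d} {x : V} (hx : x ∈ T.N) :
    ∀ y, (T.rootOf x, y) ∉ T.E :=
  no_edge_of_depth_zero (depth_rootOf hx)

/-! ### Hyperedge set facts -/

lemma empty_not_mem_H (T : LionsForest V d) : (∅ : Set V) ∉ T.H := by
  intro h
  exact (T.H_partition.1 _ h).ne_empty rfl

lemma hset_mem_h0 {T : LionsForest V d} (h : T.h0.Nonempty) :
    T.h0 ∈ insert T.h0 T.H \ {(∅ : Set V)} :=
  ⟨Set.mem_insert _ _, by simpa using h.ne_empty⟩

lemma hset_mem_H {T : LionsForest V d} {h : Set V} (hh : h ∈ T.H) :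
    h ∈ insert T.h0 T.H \ {(∅ : Set V)} :=
  ⟨Set.mem_insert_of_mem _ hh, by simpa using (T.H_partition.1 _ hh).ne_empty⟩

lemma hset_subset {T : LionsForest V d} {h : Set V}
    (hh : h ∈ insert T.h0 T.H \ {(∅ : Set V)}) : h ⊆ T.N := by
  rcases hh.1 with rfl | hh'
  · exact T.h0_subset
  · exact (T.H_partition.2.1 _ hh').trans Set.diff_subset

lemma rootOf_mem_hyper {T : LionsForest V d} {h : Set V}
    (hh : h ∈ insert T.h0 T.H \ {(∅ : Set V)}) :
    ∀ n x y, x ∈ h → y ∈ h → T.depth x + T.depth y ≤ n → T.rootOf x ≠ T.rootOf y →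
      T.rootOf x ∈ h ∧ T.rootOf y ∈ h := by
  intro n
  induction n with
  | zero =>
    intro x y hx hy hsum _
    have hx0 : T.depth x = 0 := by omega
    have hy0 : T.depth y = 0 := by omega
    rw [rootOf_of_depth_zero hx0, rootOf_of_depth_zero hy0]
    exact ⟨hx, hy⟩
  | succ n ih =>
    intro x y hx hy hsum hne
    have hxN : x ∈ T.N := hset_subset hh hx
    have hyN : y ∈ T.N := hset_subset hh hy
    rcases lt_trichotomy (T.depth x) (T.depth y) with hlt | heq | hgt
    · have hypos : 0 < T.depth y := by omega
      have he := par_edge (exists_edge_of_depth_pos hyN hypos)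
      have hz : T.par y ∈ h := T.hyper_parent h hh x hx y hy hlt _ he
      have hroot : T.rootOf (T.par y) = T.rootOf y := rootOf_par hyN hypos
      have := ih x (T.par y) hx hz (by have := (depth_par hyN hypos).1; omega)
        (by rw [hroot]; exact hne)
      rw [hroot] at this
      exact this
    · rcases Nat.eq_zero_or_pos (T.depth x) with h0 | hpos
      · rw [rootOf_of_depth_zero h0, rootOf_of_depth_zero (heq ▸ h0)]
        exact ⟨hx, hy⟩
      · have hypos : 0 < T.depth y := heq ▸ hpos
        have hex := par_edge (exists_edge_of_depth_pos hxN hpos)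
        have hey := par_edge (exists_edge_of_depth_pos hyN hypos)
        have hrx : T.rootOf (T.par x) = T.rootOf x := rootOf_par hxN hpos
        have hry : T.rootOf (T.par y) = T.rootOf y := rootOf_par hyN hypos
        have hpne : T.par x ≠ T.par y := by
          intro hcon
          exact hne (by rw [← hrx, hcon, hry])
        obtain ⟨hx2, hy2⟩ := T.hyper_sibling h hh x hx y hy heq _ _ hex hey hpne
        have h1 := ih (T.par x) y hx2 hy (by have := (depth_par hxN hpos).1; omega)
          (by rw [hrx]; exact hne)
        have h2 := ih x (T.par y) hx hy2 (by have := (depth_par hyN hypos).1; omega)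
          (by rw [hry]; exact hne)
        exact ⟨hrx ▸ h1.1, hry ▸ h2.2⟩
    · have hxpos : 0 < T.depth x := by omega
      have he := par_edge (exists_edge_of_depth_pos hxN hxpos)
      have hz : T.par x ∈ h := T.hyper_parent h hh y hy x hx hgt _ he
      have hroot : T.rootOf (T.par x) = T.rootOf x := rootOf_par hxN hxpos
      have := ih (T.par x) y hz hy (by have := (depth_par hxN hxpos).1; omega)
        (by rw [hroot]; exact hne)
      rw [hroot] at this
      exact this

lemma par_mem_h0 {T : LionsForest V d} (hne : T.h0.Nonempty) {x : V} (hx : x ∈ T.h0)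
    (hd : 0 < T.depth x) : T.par x ∈ T.h0 := by
  obtain ⟨r, hr, hroot⟩ := T.h0_root hne
  have hr0 : T.depth r = 0 := T.depth_root r (T.h0_subset hr) hroot
  exact T.hyper_parent T.h0 (hset_mem_h0 hne) r hr x hx (by omega) _
    (par_edge (exists_edge_of_depth_pos (T.h0_subset hx) hd))

lemma iter_par_mem_h0 {T : LionsForest V d} (hne : T.h0.Nonempty) {x : V} (hx : x ∈ T.h0) :
    ∀ k, k ≤ T.depth x → T.par^[k] x ∈ T.h0 := by
  intro k
  induction k with
  | zero => intro _; simpa using hx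
  | succ k ih =>
    intro hk
    have h1 := ih (by omega)
    have h2 := iter_par (T.h0_subset hx) k (by omega)
    rw [Function.iterate_succ_apply']
    exact par_mem_h0 hne h1 (by omega)

lemma rootOf_mem_h0 {T : LionsForest V d} (hne : T.h0.Nonempty) {x : V} (hx : x ∈ T.h0) :
    T.rootOf x ∈ T.h0 :=
  iter_par_mem_h0 hne hx _ le_rfl

end LionsForest
namespace LionsForest

variable {V : Type*} {d : ℕ}

/-- Restriction of a Lions forest to the union of the connected components whose
root satisfies `P`. -/
noncomputable def restrict (T : LionsForest V d) (P : V → Prop)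
    (hne : ∃ x ∈ T.N, P (T.rootOf x))
    (hsplit : ∀ h ∈ T.H, ∀ x ∈ h, P (T.rootOf x) → ∀ y ∈ h, P (T.rootOf y)) :
    LionsForest V d where
  N := {x ∈ T.N | P (T.rootOf x)}
  E := {e ∈ T.E | P (T.rootOf e.1)}
  h0 := {x ∈ T.h0 | P (T.rootOf x)}
  H := {h ∈ T.H | ∀ x ∈ h, P (T.rootOf x)}
  L := T.L
  depth := T.depth
  finite_N := T.finite_N.subset (Set.sep_subset _ _)
  nonempty_N := hne
  mem_of_edge := by
    rintro x y ⟨he, hP⟩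
    obtain ⟨hx, hy⟩ := T.mem_of_edge x y he
    exact ⟨⟨hx, hP⟩, ⟨hy, (rootOf_edge he) ▸ hP⟩⟩
  edge_unique := fun x y z hy hz => T.edge_unique x y z hy.1 hz.1
  h0_subset := fun x hx => ⟨T.h0_subset hx.1, hx.2⟩
  H_partition := by
    obtain ⟨hne', hsub, hdis, huni⟩ := T.H_partition
    refine ⟨fun p hp => hne' p hp.1, ?_, hdis.mono (Set.sep_subset _ _), ?_⟩
    · rintro p ⟨hp, hPp⟩ x hx
      have := hsub p hp hx
      exact ⟨⟨this.1, hPp x hx⟩, fun hc => this.2 hc.1⟩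
    · ext x
      constructor
      · rintro ⟨p, ⟨hp, hPp⟩, hx⟩
        have := hsub p hp hx
        exact ⟨⟨this.1, hPp x hx⟩, fun hc => this.2 hc.1⟩
      · rintro ⟨⟨hxN, hPx⟩, hxh0⟩
        have hx' : x ∈ T.N \ T.h0 := ⟨hxN, fun hc => hxh0 ⟨hc, hPx⟩⟩
        rw [← huni] at hx'
        obtain ⟨p, hp, hxp⟩ := hx'
        exact ⟨p, ⟨hp, hsplit p hp x hxp hPx⟩, hxp⟩
  depth_root := by
    rintro x ⟨hxN, hPx⟩ hnoe
    refine T.depth_root x hxN fun y hy => hnoe y ⟨hy, hPx⟩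
  depth_edge := fun x y he => T.depth_edge x y he.1
  h0_root := by
    rintro ⟨y, hy, hPy⟩
    have hne0 : T.h0.Nonempty := ⟨y, hy⟩
    refine ⟨T.rootOf y, ⟨rootOf_mem_h0 hne0 hy, ?_⟩, fun z hz =>
      rootOf_no_edge (T.h0_subset hy) z hz.1⟩
    rw [rootOf_rootOf (T.h0_subset hy)]
    exact hPy
  hyper_parent := by
    rintro h ⟨hh, hne'⟩ x hx y hy hlt z ⟨hz, hPz⟩
    rcases hh with rfl | ⟨hhH, hPh⟩
    · obtain ⟨w, hw⟩ := Set.nonempty_iff_ne_empty.mpr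
        (fun e => hne' (Set.mem_singleton_iff.mpr e))
      have hne0 : T.h0.Nonempty := ⟨w, hw.1⟩
      have := T.hyper_parent T.h0 (hset_mem_h0 hne0) x hx.1 y hy.1 hlt z hz
      exact ⟨this, (rootOf_edge hz) ▸ hy.2⟩
    · exact T.hyper_parent h (hset_mem_H hhH) x hx y hy hlt z hz
  hyper_sibling := by
    rintro h ⟨hh, hne'⟩ x₁ hx₁ y₁ hy₁ heq x₂ y₂ hex hey hxy
    rcases hh with rfl | ⟨hhH, hPh⟩
    · obtain ⟨w, hw⟩ := Set.nonempty_iff_ne_empty.mpr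
        (fun e => hne' (Set.mem_singleton_iff.mpr e))
      have hne0 : T.h0.Nonempty := ⟨w, hw.1⟩
      obtain ⟨h1, h2⟩ := T.hyper_sibling T.h0 (hset_mem_h0 hne0) x₁ hx₁.1 y₁ hy₁.1 heq
        x₂ y₂ hex.1 hey.1 hxy
      exact ⟨⟨h1, (rootOf_edge hex.1) ▸ hx₁.2⟩, ⟨h2, (rootOf_edge hey.1) ▸ hy₁.2⟩⟩
    · exact T.hyper_sibling h (hset_mem_H hhH) x₁ hx₁ y₁ hy₁ heq x₂ y₂ hex.1 hey.1 hxy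

end LionsForest
namespace LionsForest

variable {V : Type*} {d : ℕ}

/-- Predecessor for the integration operation: move a hyperedge `h ∈ H` containing a root
into the `h0` slot (possible when `h0 = ∅`). -/
def erase0 (T : LionsForest V d) (h : Set V) (hh : h ∈ T.H) (h0e : T.h0 = ∅)
    (hroot : ∃ x ∈ h, ∀ y, (x, y) ∉ T.E) : LionsForest V d where
  N := T.N
  E := T.E
  h0 := h
  H := T.H \ {h}
  L := T.L
  depth := T.depth
  finite_N := T.finite_N
  nonempty_N := T.nonempty_N
  mem_of_edge := T.mem_of_edge
  edge_unique := T.edge_unique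
  h0_subset := (T.H_partition.2.1 h hh).trans Set.diff_subset
  H_partition := by
    obtain ⟨hne', hsub, hdis, huni⟩ := T.H_partition
    refine ⟨fun p hp => hne' p hp.1, ?_, hdis.mono Set.diff_subset, ?_⟩
    · rintro p ⟨hp, hph⟩ x hx
      refine ⟨(hsub p hp hx).1, fun hxh => ?_⟩
      exact Set.disjoint_left.mp (hdis hp hh (by simpa using hph)) hx hxh
    · ext x
      constructor
      · rintro ⟨p, ⟨hp, hph⟩, hx⟩
        refine ⟨(hsub p hp hx).1, fun hxh => ?_⟩
        exact Set.disjoint_left.mp (hdis hp hh (by simpa using hph)) hx hxh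
      · rintro ⟨hxN, hxh⟩
        have hx' : x ∈ T.N \ T.h0 := ⟨hxN, by rw [h0e]; exact Set.notMem_empty x⟩
        rw [← huni] at hx'
        obtain ⟨p, hp, hxp⟩ := hx'
        refine ⟨p, ⟨hp, ?_⟩, hxp⟩
        simp only [Set.mem_singleton_iff]
        rintro rfl
        exact hxh hxp
  depth_root := T.depth_root
  depth_edge := T.depth_edge
  h0_root := fun _ => hroot
  hyper_parent := by
    have key : insert h (T.H \ {h}) \ {(∅ : Set V)} = insert T.h0 T.H \ {(∅ : Set V)} := by
      rw [h0e]
      ext p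
      simp only [Set.mem_diff, Set.mem_insert_iff, Set.mem_singleton_iff]
      constructor
      · rintro ⟨hp | ⟨hp, _⟩, hne⟩
        · exact ⟨Or.inr (hp ▸ hh), hne⟩
        · exact ⟨Or.inr hp, hne⟩
      · rintro ⟨hp | hp, hne⟩
        · exact absurd hp hne
        · by_cases hph : p = h
          · exact ⟨Or.inl hph, hne⟩
          · exact ⟨Or.inr ⟨hp, hph⟩, hne⟩
    intro h' hh'
    exact T.hyper_parent h' (key ▸ hh')
  hyper_sibling := by
    have key : insert h (T.H \ {h}) \ {(∅ : Set V)} = insert T.h0 T.H \ {(∅ : Set V)} := by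
      rw [h0e]
      ext p
      simp only [Set.mem_diff, Set.mem_insert_iff, Set.mem_singleton_iff]
      constructor
      · rintro ⟨hp | ⟨hp, _⟩, hne⟩
        · exact ⟨Or.inr (hp ▸ hh), hne⟩
        · exact ⟨Or.inr hp, hne⟩
      · rintro ⟨hp | hp, hne⟩
        · exact absurd hp hne
        · by_cases hph : p = h
          · exact ⟨Or.inl hph, hne⟩
          · exact ⟨Or.inr ⟨hp, hph⟩, hne⟩
    intro h' hh'
    exact T.hyper_sibling h' (key ▸ hh')

/-- Predecessor for the grafting operation: remove the unique root `r` (which lies in `h0`)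
of a single-component Lions forest. -/
def unGraft (T : LionsForest V d) (r : V) (hr : r ∈ T.h0) (hroot : ∀ y, (r, y) ∉ T.E)
    (hcomp : ∀ x ∈ T.N, T.rootOf x = r) (hx₁ : ∃ x ∈ T.N, x ≠ r) : LionsForest V d where
  N := T.N \ {r}
  E := {e ∈ T.E | e.2 ≠ r}
  h0 := T.h0 \ {r}
  H := T.H
  L := T.L
  depth := fun v => T.depth v - 1
  finite_N := T.finite_N.diff
  nonempty_N := by
    obtain ⟨x, hx, hxr⟩ := hx₁
    exact ⟨x, hx, hxr⟩
  mem_of_edge := by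
    rintro x y ⟨he, hyr⟩
    obtain ⟨hx, hy⟩ := T.mem_of_edge x y he
    refine ⟨⟨hx, ?_⟩, ⟨hy, hyr⟩⟩
    rintro rfl
    exact hroot y he
  edge_unique := fun x y z hy hz => T.edge_unique x y z hy.1 hz.1
  h0_subset := fun x hx => ⟨T.h0_subset hx.1, hx.2⟩
  H_partition := by
    have hseteq : (T.N \ {r}) \ (T.h0 \ {r}) = T.N \ T.h0 := by
      ext x
      simp only [Set.mem_diff, Set.mem_singleton_iff]
      constructor
      · rintro ⟨⟨hxN, hxr⟩, hh⟩
        exact ⟨hxN, fun hx0 => hh ⟨hx0, hxr⟩⟩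
      · rintro ⟨hxN, hx0⟩
        exact ⟨⟨hxN, fun e => hx0 (e ▸ hr)⟩, fun c => hx0 c.1⟩
    exact hseteq ▸ T.H_partition
  depth_root := by
    rintro x ⟨hxN, hxr⟩ hnoe
    have hr0 : T.depth r = 0 := T.depth_root r (T.h0_subset hr) hroot
    have hpos : 0 < T.depth x := by
      rcases Nat.eq_zero_or_pos (T.depth x) with h0 | hp
      · exact absurd ((rootOf_of_depth_zero h0).symm.trans (hcomp x hxN)) hxr
      · exact hp
    obtain ⟨w, hw⟩ := exists_edge_of_depth_pos hxN hpos
    have hwr : w = r := by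
      by_contra hc
      exact hnoe w ⟨hw, hc⟩
    have : T.depth x = T.depth w + 1 := T.depth_edge x w hw
    rw [hwr, hr0] at this
    show T.depth x - 1 = 0
    omega
  depth_edge := by
    rintro x y ⟨he, hyr⟩
    have h1 := T.depth_edge x y he
    have hyN := (T.mem_of_edge x y he).2
    have hpos : 0 < T.depth y := by
      rcases Nat.eq_zero_or_pos (T.depth y) with h0 | hp
      · exact absurd ((rootOf_of_depth_zero h0).symm.trans (hcomp y hyN)) hyr
      · exact hp
    show T.depth x - 1 = (T.depth y - 1) + 1
    omega
  h0_root := by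
    rintro ⟨y, hy, hyr⟩
    simp only [Set.mem_singleton_iff] at hyr
    have hne0 : T.h0.Nonempty := ⟨y, hy⟩
    have hyN := T.h0_subset hy
    have hr0 : T.depth r = 0 := T.depth_root r (T.h0_subset hr) hroot
    have hpos : 0 < T.depth y := by
      rcases Nat.eq_zero_or_pos (T.depth y) with h0 | hp
      · exact absurd ((rootOf_of_depth_zero h0).symm.trans (hcomp y hyN)) hyr
      · exact hp
    set k := T.depth y - 1 with hk
    have hz : T.par^[k] y ∈ T.h0 := iter_par_mem_h0 hne0 hy k (by omega)
    obtain ⟨hzN, hzdep⟩ := iter_par hyN k (by omega)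
    have hzdep1 : T.depth (T.par^[k] y) = 1 := by omega
    refine ⟨T.par^[k] y, ⟨hz, ?_⟩, ?_⟩
    · simp only [Set.mem_singleton_iff]
      intro hc
      rw [hc, hr0] at hzdep1
      omega
    · rintro w ⟨hew, hwr⟩
      have hd := T.depth_edge _ w hew
      have hwN := (T.mem_of_edge _ w hew).2
      have hw0 : T.depth w = 0 := by omega
      exact hwr ((rootOf_of_depth_zero hw0).symm.trans (hcomp w hwN))
  hyper_parent := by
    rintro h' ⟨hh', hne'⟩ x hx y hy hlt z ⟨hez, hzr⟩
    have hlt' : T.depth x - 1 < T.depth y - 1 := hlt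
    have hlt2 : T.depth x < T.depth y := by omega
    rcases hh' with rfl | hh'
    · -- h' = h0 \ {r}
      have hne0 : T.h0.Nonempty := ⟨x, hx.1⟩
      have hz0 : z ∈ T.h0 :=
        T.hyper_parent T.h0 (hset_mem_h0 hne0) x hx.1 y hy.1 hlt2 z hez
      exact ⟨hz0, by simpa using hzr⟩
    · exact T.hyper_parent h' (hset_mem_H hh') x hx y hy hlt2 z hez
  hyper_sibling := by
    rintro h' ⟨hh', hne'⟩ x₁ hx₁' y₁ hy₁ heq x₂ y₂ hex hey hxy
    have heq' : T.depth x₁ - 1 = T.depth y₁ - 1 := heq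
    have hdx : 0 < T.depth x₁ := by
      have := T.depth_edge x₁ x₂ hex.1; omega
    have hdy : 0 < T.depth y₁ := by
      have := T.depth_edge y₁ y₂ hey.1; omega
    have heq2 : T.depth x₁ = T.depth y₁ := by omega
    rcases hh' with rfl | hh'
    · have hne0 : T.h0.Nonempty := ⟨x₁, hx₁'.1⟩
      obtain ⟨h1, h2⟩ := T.hyper_sibling T.h0 (hset_mem_h0 hne0) x₁ hx₁'.1 y₁ hy₁.1 heq2
        x₂ y₂ hex.1 hey.1 hxy
      exact ⟨⟨h1, by simpa using hex.2⟩, ⟨h2, by simpa using hey.2⟩⟩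
    · exact T.hyper_sibling h' (hset_mem_H hh') x₁ hx₁' y₁ hy₁ heq2 x₂ y₂ hex.1 hey.1 hxy

end LionsForest
namespace LionsForest

variable {V : Type*} {d : ℕ}

open Classical in
lemma inGen_aux : ∀ n : ℕ, ∀ T : LionsForest V d,
    2 * T.N.ncard + (if T.h0 = ∅ then 1 else 0) ≤ n → InGenClass T := by
  intro n
  induction n with
  | zero =>
    intro T h
    have : 0 < T.N.ncard := (Set.ncard_pos T.finite_N).mpr T.nonempty_N
    omega
  | succ n ih =>
    intro T hT
    have hNpos : 0 < T.N.ncard := (Set.ncard_pos T.finite_N).mpr T.nonempty_N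
    by_cases h0e : T.h0 = ∅
    · -- integration case
      obtain ⟨x, hx⟩ := T.nonempty_N
      have hrN : T.rootOf x ∈ T.N := rootOf_mem hx
      have hrdiff : T.rootOf x ∈ T.N \ T.h0 := ⟨hrN, by rw [h0e]; exact Set.notMem_empty _⟩
      rw [← T.H_partition.2.2.2] at hrdiff
      obtain ⟨h, hhH, hrh⟩ := hrdiff
      have hroot : ∃ y ∈ h, ∀ z, (y, z) ∉ T.E := ⟨T.rootOf x, hrh, rootOf_no_edge hx⟩
      set T'' := T.erase0 h hhH h0e hroot with hT''
      have hh0ne : T''.h0 ≠ ∅ := (T.H_partition.1 h hhH).ne_empty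
      have hgen : InGenClass T'' := by
        refine ih T'' ?_
        have : T''.N = T.N := rfl
        rw [this, if_neg hh0ne]
        rw [if_pos h0e] at hT
        omega
      refine InGenClass.integ T T'' hgen rfl rfl h0e ?_ (fun _ _ => rfl)
      -- T.H = insert h (T.H \ {h}) \ {∅}
      ext p
      simp only [Set.mem_diff, Set.mem_insert_iff, Set.mem_singleton_iff]
      constructor
      · intro hp
        refine ⟨?_, (T.H_partition.1 p hp).ne_empty⟩
        by_cases hph : p = h
        · exact Or.inl hph
        · exact Or.inr ⟨hp, hph⟩
      · rintro ⟨hp | ⟨hp, _⟩, _⟩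
        · exact hp ▸ hhH
        · exact hp
    · -- h0 nonempty
      have h0ne : T.h0.Nonempty := Set.nonempty_iff_ne_empty.mpr h0e
      obtain ⟨r, hr, hroot⟩ := T.h0_root h0ne
      have hrN : r ∈ T.N := T.h0_subset hr
      have hr0 : T.depth r = 0 := T.depth_root r hrN hroot
      have hrr : T.rootOf r = r := rootOf_of_depth_zero hr0
      by_cases hcomp : ∀ x ∈ T.N, T.rootOf x = r
      · by_cases htriv : T.N = {r}
        · -- single-node case
          have hh0 : T.h0 = {r} :=
            Set.Subset.antisymm (htriv ▸ T.h0_subset) (Set.singleton_subset_iff.mpr hr)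
          have hE : T.E = ∅ := by
            ext ⟨a, b⟩
            simp only [Set.mem_empty_iff_false, iff_false]
            intro he
            obtain ⟨ha, hb⟩ := T.mem_of_edge a b he
            rw [htriv] at ha hb
            simp only [Set.mem_singleton_iff] at ha hb
            have := T.depth_edge a b he
            rw [ha, hb] at this
            omega
          have hH : T.H = ∅ := by
            ext p
            simp only [Set.mem_empty_iff_false, iff_false]
            intro hp
            obtain ⟨y, hy⟩ := T.H_partition.1 p hp
            have := T.H_partition.2.1 p hp hy
            rw [htriv, hh0] at this
            exact this.2 this.1
          exact InGenClass.single T r (T.L r) htriv hE hh0 hH rfl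
        · -- graft case
          have hx₁ : ∃ y ∈ T.N, y ≠ r := by
            by_contra hc
            push_neg at hc
            exact htriv (Set.eq_singleton_iff_unique_mem.mpr ⟨hrN, hc⟩)
          set T'' := T.unGraft r hr hroot hcomp hx₁ with hT''
          have hgen : InGenClass T'' := by
            refine ih T'' ?_
            have hcard : T''.N.ncard = T.N.ncard - 1 := by
              show (T.N \ {r}).ncard = T.N.ncard - 1
              rw [Set.ncard_diff_singleton_of_mem hrN]
            rw [if_neg h0e] at hT
            have : (if T''.h0 = ∅ then 1 else 0) ≤ 1 := by split <;> omega
            omega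
          have hrnot : r ∉ T''.N := fun c => c.2 rfl
          have hNr : T.N = insert r T''.N := by
            show T.N = insert r (T.N \ {r})
            rw [Set.insert_diff_singleton, Set.insert_eq_self.mpr hrN]
          have hh0r : T.h0 = insert r T''.h0 := by
            show T.h0 = insert r (T.h0 \ {r})
            rw [Set.insert_diff_singleton, Set.insert_eq_self.mpr hr]
          have hE : T.E = T''.E ∪ {e : V × V | e.1 ∈ T''.N ∧ (∀ y, (e.1, y) ∉ T''.E) ∧ e.2 = r} := by
            ext ⟨a, b⟩
            constructor
            · intro he
              by_cases hb : b = r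
              · right
                refine ⟨⟨(T.mem_of_edge a b he).1, ?_⟩, ?_, hb⟩
                · rintro rfl
                  exact hroot b he
                · rintro w ⟨hew, hwr⟩
                  exact hwr ((T.edge_unique a w b hew he).trans hb)
              · exact Or.inl ⟨he, hb⟩
            · rintro (⟨he, _⟩ | ⟨⟨haN, har⟩, hno, hb⟩)
              · exact he
              · simp only [Set.mem_singleton_iff] at har
                have hb' : b = r := hb
                have hpos : 0 < T.depth a := by
                  rcases Nat.eq_zero_or_pos (T.depth a) with h0 | hp
                  · exact absurd ((rootOf_of_depth_zero h0).symm.trans (hcomp a haN)) har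
                  · exact hp
                obtain ⟨w, hw⟩ := exists_edge_of_depth_pos haN hpos
                have hwr : w = r := by
                  by_contra hc
                  exact hno w ⟨hw, hc⟩
                have hwb : w = b := hwr.trans hb'.symm
                exact hwb ▸ hw
          exact InGenClass.graft T T'' r (T.L r) hgen hrnot hNr hE hh0r rfl
            (fun _ _ => rfl) rfl
      · -- product case
        push_neg at hcomp
        obtain ⟨x₀, hx₀, hx₀r⟩ := hcomp
        have hsplit1 : ∀ h ∈ T.H, ∀ a ∈ h, T.rootOf a = r → ∀ b ∈ h, T.rootOf b = r := by
          intro h hh a ha hra b hb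
          by_contra hrb
          have hmem := rootOf_mem_hyper (hset_mem_H hh) (T.depth a + T.depth b) a b ha hb
            le_rfl (by rw [hra]; exact fun e => hrb e.symm)
          have hsub := T.H_partition.2.1 h hh
          exact (hsub hmem.1).2 (by rw [hra]; exact hr)
        have hsplit2 : ∀ h ∈ T.H, ∀ a ∈ h, T.rootOf a ≠ r → ∀ b ∈ h, T.rootOf b ≠ r := by
          intro h hh a ha hra b hb hrb
          exact hra (hsplit1 h hh b hb hrb a ha)
        set T1 := T.restrict (fun v => v = r) ⟨r, hrN, hrr⟩ hsplit1 with hT1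
        set T2 := T.restrict (fun v => v ≠ r) ⟨x₀, hx₀, hx₀r⟩ hsplit2 with hT2
        have hN1 : T1.N = {x ∈ T.N | T.rootOf x = r} := rfl
        have hN2 : T2.N = {x ∈ T.N | T.rootOf x ≠ r} := rfl
        have hss1 : T1.N ⊂ T.N := ⟨Set.sep_subset _ _, fun hc => hx₀r (hc hx₀).2⟩
        have hss2 : T2.N ⊂ T.N := ⟨Set.sep_subset _ _, fun hc => (hc hrN).2 hrr⟩
        have hc1 : T1.N.ncard < T.N.ncard := Set.ncard_lt_ncard hss1 T.finite_N
        have hc2 : T2.N.ncard < T.N.ncard := Set.ncard_lt_ncard hss2 T.finite_N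
        rw [if_neg h0e] at hT
        have hgen1 : InGenClass T1 := by
          refine ih T1 ?_
          have : (if T1.h0 = ∅ then 1 else 0) ≤ 1 := by split <;> omega
          omega
        have hgen2 : InGenClass T2 := by
          refine ih T2 ?_
          have : (if T2.h0 = ∅ then 1 else 0) ≤ 1 := by split <;> omega
          omega
        have hdisj : Disjoint T1.N T2.N := by
          rw [Set.disjoint_left]
          rintro a ⟨_, h1⟩ ⟨_, h2⟩
          exact h2 h1
        refine InGenClass.prod T T1 T2 hgen1 hgen2 hdisj ?_ ?_ ?_ ?_
          (fun _ _ => rfl) (fun _ _ => rfl)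
        · ext a
          constructor
          · intro ha
            by_cases hra : T.rootOf a = r
            · exact Or.inl ⟨ha, hra⟩
            · exact Or.inr ⟨ha, hra⟩
          · rintro (⟨ha, _⟩ | ⟨ha, _⟩) <;> exact ha
        · ext e
          constructor
          · intro he
            by_cases hra : T.rootOf e.1 = r
            · exact Or.inl ⟨he, hra⟩
            · exact Or.inr ⟨he, hra⟩
          · rintro (⟨he, _⟩ | ⟨he, _⟩) <;> exact he
        · ext a
          constructor
          · intro ha
            by_cases hra : T.rootOf a = r
            · exact Or.inl ⟨ha, hra⟩
            · exact Or.inr ⟨ha, hra⟩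
          · rintro (⟨ha, _⟩ | ⟨ha, _⟩) <;> exact ha
        · ext p
          constructor
          · intro hp
            obtain ⟨a, ha⟩ := T.H_partition.1 p hp
            by_cases hra : T.rootOf a = r
            · exact Or.inl ⟨hp, hsplit1 p hp a ha hra⟩
            · exact Or.inr ⟨hp, hsplit2 p hp a ha hra⟩
          · rintro (⟨hp, _⟩ | ⟨hp, _⟩) <;> exact hp

open Classical in
lemma inGenClass_all (T : LionsForest V d) : InGenClass T :=
  inGen_aux (2 * T.N.ncard + (if T.h0 = ∅ then 1 else 0)) T le_rfl

end LionsForest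

/-- Every Lions forest is isomorphic to a Lions forest lying in the smallest class of Lions
forests containing the single-node Lions trees and closed under products, integration and
grafting. -/
theorem stmt_4 {V : Type*} {d : ℕ} (hd : 1 ≤ d) (T : LionsForest V d) :
    ∃ T' : LionsForest V d, InGenClass T' ∧ LFIso T T' := by
  refine ⟨T, T.inGenClass_all, id, Set.bijOn_id _, fun _ _ _ _ => Iff.rfl,
    fun _ _ => rfl, Set.image_id _, ?_⟩
  have : Set.image (id : V → V) = id := funext fun s => Set.image_id s
  rw [this]
  exact Set.image_id _
end

section
/- For every Lions forest T, the dual Lions forest T* = (H', D) is a connected graph. Moreover, setting H^{(0)} = {h ∈ H' : h contains a root of T} and, inductively, H^{(i+1)} = {h ∈ H' ∖ (H^{(0)} ∪ ⋯ ∪ H^{(i)}) : there exists h' ∈ H^{(i)} with {h, h'} ∈ D}, the nonempty sets among H^{(0)}, H^{(1)}, … form a partition of H', and for every i the restriction of T* to H^{(i)} is a disjoint union of complete graphs; that is, for h, h', h'' ∈ H^{(i)} with {h, h'} ∈ D, {h', h''} ∈ D and h ≠ h'', one has {h, h''} ∈ D. -/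
/-- A root of the forest: a node with no outgoing edge. -/
def LionsForest.IsRoot {V : Type*} {d : ℕ} (T : LionsForest V d) (x : V) : Prop :=
  x ∈ T.N ∧ ∀ y, (x, y) ∉ T.E

/-- The set of hyperedges `H' = (H ∪ {h0}) \ {∅}` of a Lions forest. -/
def LionsForest.hyperedges {V : Type*} {d : ℕ} (T : LionsForest V d) : Set (Set V) :=
  insert T.h0 T.H \ {∅}

/-- The adjacency relation of the dual Lions forest `T* = (H', D)`: two distinct hyperedges
`h1, h2 ∈ H'` are adjacent iff `h1 ∪ h2` satisfies the structural conditions (ii), (iii) of a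
hyperedge. -/
def dualAdj {V : Type*} {d : ℕ} (T : LionsForest V d) (h1 h2 : Set V) : Prop :=
  h1 ∈ T.hyperedges ∧ h2 ∈ T.hyperedges ∧ h1 ≠ h2 ∧
  (∀ x ∈ h1 ∪ h2, ∀ y ∈ h1 ∪ h2, T.depth x < T.depth y →
    ∀ z, (y, z) ∈ T.E → z ∈ h1 ∪ h2) ∧
  (∀ x₁ ∈ h1 ∪ h2, ∀ y₁ ∈ h1 ∪ h2, T.depth x₁ = T.depth y₁ →
    ∀ x₂ y₂, (x₁, x₂) ∈ T.E → (y₁, y₂) ∈ T.E → x₂ ≠ y₂ →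
      x₂ ∈ h1 ∪ h2 ∧ y₂ ∈ h1 ∪ h2)

/-- Auxiliary recursion computing `(H⁽ⁱ⁾, H⁽⁰⁾ ∪ ⋯ ∪ H⁽ⁱ⁾)`: the layer `H⁽⁰⁾` consists of the
hyperedges containing a root, and `H⁽ⁱ⁺¹⁾` of the hyperedges not in any earlier layer that are
dual-adjacent to a hyperedge of `H⁽ⁱ⁾`. -/
def dualLayerAux {V : Type*} {d : ℕ} (T : LionsForest V d) :
    ℕ → Set (Set V) × Set (Set V)
  | 0 =>
      ({h ∈ T.hyperedges | ∃ x ∈ h, T.IsRoot x},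
        {h ∈ T.hyperedges | ∃ x ∈ h, T.IsRoot x})
  | i + 1 =>
      ({h ∈ T.hyperedges | h ∉ (dualLayerAux T i).2 ∧
          ∃ h' ∈ (dualLayerAux T i).1, dualAdj T h h'},
        (dualLayerAux T i).2 ∪
          {h ∈ T.hyperedges | h ∉ (dualLayerAux T i).2 ∧
            ∃ h' ∈ (dualLayerAux T i).1, dualAdj T h h'})

/-- The layer `H⁽ⁱ⁾` of hyperedges of a Lions forest. -/
def dualLayer {V : Type*} {d : ℕ} (T : LionsForest V d) (i : ℕ) : Set (Set V) :=
  (dualLayerAux T i).1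

namespace LionsAux

open Classical

variable {V : Type*} {d : ℕ}

/-- Minimal depth of a hyperedge. -/
noncomputable def md (T : LionsForest V d) (h : Set V) : ℕ := sInf (T.depth '' h)

lemma he_nonempty (T : LionsForest V d) {h : Set V} (hh : h ∈ T.hyperedges) : h.Nonempty := by
  rcases hh with ⟨_, hne⟩
  exact Set.nonempty_iff_ne_empty.2 (by simpa using hne)

lemma he_subset (T : LionsForest V d) {h : Set V} (hh : h ∈ T.hyperedges) : h ⊆ T.N := by
  rcases hh with ⟨hins, -⟩
  rcases Set.mem_insert_iff.1 hins with rfl | hH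
  · exact T.h0_subset
  · exact fun x hx => ((T.H_partition.2.1 h hH) hx).1

lemma exists_he (T : LionsForest V d) {x : V} (hx : x ∈ T.N) : ∃ h ∈ T.hyperedges, x ∈ h := by
  by_cases hx0 : x ∈ T.h0
  · refine ⟨T.h0, ⟨Set.mem_insert _ _, ?_⟩, hx0⟩
    simp only [Set.mem_singleton_iff]
    intro he; rw [he] at hx0; exact hx0
  · have hxm : x ∈ ⋃₀ T.H := by
      rw [T.H_partition.2.2.2]; exact ⟨hx, hx0⟩
    obtain ⟨h, hh, hxh⟩ := hxm
    refine ⟨h, ⟨Set.mem_insert_of_mem _ hh, ?_⟩, hxh⟩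
    simp only [Set.mem_singleton_iff]
    intro he; rw [he] at hxh; exact hxh

lemma he_disjoint (T : LionsForest V d) {h1 h2 : Set V} (h1m : h1 ∈ T.hyperedges)
    (h2m : h2 ∈ T.hyperedges) {x : V} (hx1 : x ∈ h1) (hx2 : x ∈ h2) : h1 = h2 := by
  rcases h1m with ⟨hi1, -⟩
  rcases h2m with ⟨hi2, -⟩
  rcases Set.mem_insert_iff.1 hi1 with rfl | hH1 <;> rcases Set.mem_insert_iff.1 hi2 with e2 | hH2
  · exact e2.symm
  · exact absurd hx1 ((T.H_partition.2.1 h2 hH2) hx2).2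
  · exact absurd (e2 ▸ hx2) ((T.H_partition.2.1 h1 hH1) hx1).2
  · by_contra hne
    exact (T.H_partition.2.2.1 hH1 hH2 hne).le_bot ⟨hx1, hx2⟩

lemma depth_pos_edge (T : LionsForest V d) {x : V} (hx : x ∈ T.N) (hd : 0 < T.depth x) :
    ∃ y, (x, y) ∈ T.E := by
  by_contra hc
  push_neg at hc
  rw [T.depth_root x hx hc] at hd
  omega

lemma md_mem (T : LionsForest V d) {h : Set V} (hne : h.Nonempty) :
    ∃ x ∈ h, T.depth x = md T h := by
  obtain ⟨x, hx, hd⟩ := Nat.sInf_mem (hne.image T.depth)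
  exact ⟨x, hx, hd⟩

lemma md_le (T : LionsForest V d) {h : Set V} {x : V} (hx : x ∈ h) : md T h ≤ T.depth x :=
  Nat.sInf_le ⟨x, hx, rfl⟩

lemma parent_unique (T : LionsForest V d) {h : Set V} (hh : h ∈ T.hyperedges) {x y px py : V}
    (hx : x ∈ h) (hy : y ∈ h) (hdx : T.depth x = md T h) (hdy : T.depth y = md T h)
    (hex : (x, px) ∈ T.E) (hey : (y, py) ∈ T.E) : px = py := by
  by_contra hne
  have hs := T.hyper_sibling h hh x hx y hy (hdx.trans hdy.symm) px py hex hey hne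
  have h1 := md_le T hs.1
  have h2 := T.depth_edge x px hex
  omega

/-- The common parent of the minimal-depth nodes of a hyperedge. -/
noncomputable def pnode (T : LionsForest V d) (h : Set V) : V :=
  if hp : ∃ p, ∃ x ∈ h, T.depth x = md T h ∧ (x, p) ∈ T.E then hp.choose
  else T.nonempty_N.choose

lemma pnode_ex (T : LionsForest V d) {h : Set V} (hh : h ∈ T.hyperedges) (hm : 0 < md T h) :
    ∃ x ∈ h, T.depth x = md T h ∧ (x, pnode T h) ∈ T.E := by
  obtain ⟨x, hx, hdx⟩ := md_mem T (he_nonempty T hh)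
  obtain ⟨p, hp⟩ := depth_pos_edge T (he_subset T hh hx) (by omega)
  have hex : ∃ p, ∃ x ∈ h, T.depth x = md T h ∧ (x, p) ∈ T.E := ⟨p, x, hx, hdx, hp⟩
  rw [pnode, dif_pos hex]
  exact hex.choose_spec

lemma pnode_spec (T : LionsForest V d) {h : Set V} (hh : h ∈ T.hyperedges) (hm : 0 < md T h)
    {x p : V} (hx : x ∈ h) (hdx : T.depth x = md T h) (hex : (x, p) ∈ T.E) :
    p = pnode T h := by
  obtain ⟨y, hy, hdy, hey⟩ := pnode_ex T hh hm
  exact parent_unique T hh hx hy hdx hdy hex hey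

lemma pnode_depth (T : LionsForest V d) {h : Set V} (hh : h ∈ T.hyperedges) (hm : 0 < md T h) :
    T.depth (pnode T h) + 1 = md T h := by
  obtain ⟨x, hx, hdx, hex⟩ := pnode_ex T hh hm
  have := T.depth_edge x _ hex
  omega

lemma pnode_memN (T : LionsForest V d) {h : Set V} (hh : h ∈ T.hyperedges) (hm : 0 < md T h) :
    pnode T h ∈ T.N := by
  obtain ⟨x, hx, hdx, hex⟩ := pnode_ex T hh hm
  exact (T.mem_of_edge x _ hex).2

/-- The hyperedge containing a node. -/
noncomputable def hOf (T : LionsForest V d) (x : V) : Set V :=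
  if hx : ∃ h ∈ T.hyperedges, x ∈ h then hx.choose else ∅

lemma hOf_spec (T : LionsForest V d) {x : V} (hx : x ∈ T.N) :
    hOf T x ∈ T.hyperedges ∧ x ∈ hOf T x := by
  have hex := exists_he T hx
  rw [hOf, dif_pos hex]
  exact hex.choose_spec

lemma hOf_eq (T : LionsForest V d) {x : V} {h : Set V} (hh : h ∈ T.hyperedges) (hx : x ∈ h) :
    hOf T x = h := by
  obtain ⟨hm, hmem⟩ := hOf_spec T (he_subset T hh hx)
  exact he_disjoint T hm hh hmem hx

/-- The hyperedge containing the parent of the minimal-depth nodes. -/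
noncomputable def pii (T : LionsForest V d) (h : Set V) : Set V := hOf T (pnode T h)

lemma pii_mem (T : LionsForest V d) {h : Set V} (hh : h ∈ T.hyperedges) (hm : 0 < md T h) :
    pii T h ∈ T.hyperedges ∧ pnode T h ∈ pii T h :=
  hOf_spec T (pnode_memN T hh hm)

lemma md_pii_lt (T : LionsForest V d) {h : Set V} (hh : h ∈ T.hyperedges) (hm : 0 < md T h) :
    md T (pii T h) < md T h := by
  have h1 := md_le T (pii_mem T hh hm).2
  have h2 := pnode_depth T hh hm
  omega

lemma pii_ne (T : LionsForest V d) {h : Set V} (hh : h ∈ T.hyperedges) (hm : 0 < md T h) :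
    pii T h ≠ h := by
  intro he
  have hmem := (pii_mem T hh hm).2
  rw [he] at hmem
  have h1 := md_le T hmem
  have h2 := pnode_depth T hh hm
  omega
lemma adj_symm (T : LionsForest V d) {h1 h2 : Set V} (h : dualAdj T h1 h2) : dualAdj T h2 h1 := by
  obtain ⟨a, b, c, d', e⟩ := h
  exact ⟨b, a, c.symm, by rw [Set.union_comm h2 h1]; exact d',
    by rw [Set.union_comm h2 h1]; exact e⟩

lemma parent_in_union (T : LionsForest V d) {h : Set V} (hh : h ∈ T.hyperedges)
    (hm : 0 < md T h) {w z : V} (hw : w ∈ h ∪ pii T h) (hz : (w, z) ∈ T.E)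
    (hgt : md T (pii T h) < T.depth w) : z ∈ h ∪ pii T h := by
  obtain ⟨hpm, hpmem⟩ := pii_mem T hh hm
  rcases hw with hw | hw
  · rcases lt_or_eq_of_le (md_le T hw) with hlt | heq
    · obtain ⟨x, hx, hdx⟩ := md_mem T (he_nonempty T hh)
      exact Or.inl (T.hyper_parent h hh x hx w hw (by omega) z hz)
    · have hzz := pnode_spec T hh hm hw heq.symm hz
      exact Or.inr (hzz ▸ hpmem)
  · obtain ⟨x, hx, hdx⟩ := md_mem T (he_nonempty T hpm)
    exact Or.inr (T.hyper_parent _ hpm x hx w hw (by omega) z hz)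

lemma adj_pi (T : LionsForest V d) {h : Set V} (hh : h ∈ T.hyperedges) (hm : 0 < md T h) :
    dualAdj T h (pii T h) := by
  obtain ⟨hpm, hpmem⟩ := pii_mem T hh hm
  have hpd : T.depth (pnode T h) + 1 = md T h := pnode_depth T hh hm
  have hmdp : md T (pii T h) ≤ T.depth (pnode T h) := md_le T hpmem
  have hlow : ∀ w ∈ h ∪ pii T h, md T (pii T h) ≤ T.depth w := by
    rintro w (hw | hw)
    · have := md_le T hw; omega
    · exact md_le T hw
  refine ⟨hh, hpm, (pii_ne T hh hm).symm, ?_, ?_⟩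
  · intro x hx y hy hxy z hz
    exact parent_in_union T hh hm hy hz (lt_of_le_of_lt (hlow x hx) hxy)
  · intro x1 hx1 y1 hy1 hdep x2 y2 he1 he2 hne
    rcases lt_or_eq_of_le (hlow x1 hx1) with hlt | heq
    · exact ⟨parent_in_union T hh hm hx1 he1 hlt,
        parent_in_union T hh hm hy1 he2 (hdep ▸ hlt)⟩
    · exfalso
      have hx1p : x1 ∈ pii T h := by
        rcases hx1 with hx1 | hx1
        · have := md_le T hx1; omega
        · exact hx1
      have hy1p : y1 ∈ pii T h := by
        rcases hy1 with hy1 | hy1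
        · have := md_le T hy1; omega
        · exact hy1
      rcases Nat.eq_zero_or_pos (md T (pii T h)) with h0 | hpos
      · have := T.depth_edge x1 x2 he1; omega
      · have e1 := pnode_spec T hpm hpos hx1p heq.symm he1
        have e2 := pnode_spec T hpm hpos hy1p (by omega) he2
        exact hne (e1.trans e2.symm)

lemma adj_roots (T : LionsForest V d) {h1 h2 : Set V} (h1m : h1 ∈ T.hyperedges)
    (h2m : h2 ∈ T.hyperedges) (hne : h1 ≠ h2) (m1 : md T h1 = 0) (m2 : md T h2 = 0) :
    dualAdj T h1 h2 := by
  obtain ⟨x1, hx1, hd1⟩ := md_mem T (he_nonempty T h1m)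
  obtain ⟨x2, hx2, hd2⟩ := md_mem T (he_nonempty T h2m)
  have key : ∀ w ∈ h1 ∪ h2, ∀ z, (w, z) ∈ T.E → z ∈ h1 ∪ h2 := by
    rintro w (hw | hw) z hz
    · exact Or.inl (T.hyper_parent h1 h1m x1 hx1 w hw
        (by have := T.depth_edge w z hz; omega) z hz)
    · exact Or.inr (T.hyper_parent h2 h2m x2 hx2 w hw
        (by have := T.depth_edge w z hz; omega) z hz)
  exact ⟨h1m, h2m, hne, fun x _ y hy _ z hz => key y hy z hz,
    fun a ha b hb _ p q hp hq _ => ⟨key a ha p hp, key b hb q hq⟩⟩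

lemma adj_sib (T : LionsForest V d) {h1 h2 : Set V} (h1m : h1 ∈ T.hyperedges)
    (h2m : h2 ∈ T.hyperedges) (hne : h1 ≠ h2) (hm1 : 0 < md T h1) (hm2 : 0 < md T h2)
    (hp : pnode T h1 = pnode T h2) : dualAdj T h1 h2 := by
  have hd1 := pnode_depth T h1m hm1
  have hd2 := pnode_depth T h2m hm2
  have hmeq : md T h1 = md T h2 := by rw [← hd1, ← hd2, hp]
  obtain ⟨x1, hx1, hdx1⟩ := md_mem T (he_nonempty T h1m)
  obtain ⟨x2, hx2, hdx2⟩ := md_mem T (he_nonempty T h2m)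
  have key : ∀ w ∈ h1 ∪ h2, md T h1 < T.depth w → ∀ z, (w, z) ∈ T.E → z ∈ h1 ∪ h2 := by
    rintro w (hw | hw) hgt z hz
    · exact Or.inl (T.hyper_parent h1 h1m x1 hx1 w hw (by omega) z hz)
    · exact Or.inr (T.hyper_parent h2 h2m x2 hx2 w hw (by omega) z hz)
  have hlow : ∀ w ∈ h1 ∪ h2, md T h1 ≤ T.depth w := by
    rintro w (hw | hw)
    · exact md_le T hw
    · have := md_le T hw; omega
  refine ⟨h1m, h2m, hne, ?_, ?_⟩
  · intro x hx y hy hxy z hz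
    exact key y hy (lt_of_le_of_lt (hlow x hx) hxy) z hz
  · intro a ha b hb hd p q hp' hq' hpq
    rcases lt_or_eq_of_le (hlow a ha) with hlt | heq
    · exact ⟨key a ha hlt p hp', key b hb (hd ▸ hlt) q hq'⟩
    · exfalso
      have hpa : p = pnode T h1 := by
        rcases ha with ha | ha
        · exact (pnode_spec T h1m hm1 ha heq.symm hp')
        · rw [hp]; exact pnode_spec T h2m hm2 ha (by omega) hp'
      have hqa : q = pnode T h1 := by
        rcases hb with hb | hb
        · exact (pnode_spec T h1m hm1 hb (by omega) hq')
        · rw [hp]; exact pnode_spec T h2m hm2 hb (by omega) hq'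
      exact hpq (hpa.trans hqa.symm)

lemma adj_lt (T : LionsForest V d) {h1 h2 : Set V} (hadj : dualAdj T h1 h2)
    (hlt : md T h1 < md T h2) : h1 = pii T h2 := by
  obtain ⟨h1m, h2m, hne, hpar, hsib⟩ := hadj
  obtain ⟨x, hx, hdx⟩ := md_mem T (he_nonempty T h1m)
  obtain ⟨y, hy, hdy⟩ := md_mem T (he_nonempty T h2m)
  obtain ⟨p, hp⟩ := depth_pos_edge T (he_subset T h2m hy) (by omega)
  have hpz : p ∈ h1 ∪ h2 := hpar x (Or.inl hx) y (Or.inr hy) (by omega) p hp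
  have hdp := T.depth_edge y p hp
  have hp1 : p ∈ h1 := by
    rcases hpz with h | h
    · exact h
    · exfalso; have := md_le T h; omega
  have hpn := pnode_spec T h2m (by omega) hy hdy hp
  rw [pii, ← hpn]
  exact (hOf_eq T h1m hp1).symm

lemma adj_cases (T : LionsForest V d) {h1 h2 : Set V} (hadj : dualAdj T h1 h2) :
    (md T h1 = 0 ∧ md T h2 = 0) ∨
    (0 < md T h1 ∧ 0 < md T h2 ∧ pnode T h1 = pnode T h2) ∨
    (md T h1 < md T h2 ∧ h1 = pii T h2) ∨ (md T h2 < md T h1 ∧ h2 = pii T h1) := by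
  rcases lt_trichotomy (md T h1) (md T h2) with hlt | heq | hgt
  · exact Or.inr (Or.inr (Or.inl ⟨hlt, adj_lt T hadj hlt⟩))
  · rcases Nat.eq_zero_or_pos (md T h1) with h0 | hpos
    · exact Or.inl ⟨h0, heq ▸ h0⟩
    · by_cases hpq : pnode T h1 = pnode T h2
      · exact Or.inr (Or.inl ⟨hpos, heq ▸ hpos, hpq⟩)
      · exfalso
        obtain ⟨h1m, h2m, hne, hpar, hsib⟩ := hadj
        obtain ⟨x1, hx1, hd1, he1⟩ := pnode_ex T h1m hpos
        obtain ⟨y1, hy1, hd2, he2⟩ := pnode_ex T h2m (heq ▸ hpos)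
        have hs := hsib x1 (Or.inl hx1) y1 (Or.inr hy1) (by omega) _ _ he1 he2 hpq
        have hdp := T.depth_edge x1 _ he1
        rcases hs.1 with h | h
        · have := md_le T h; omega
        · have := md_le T h; omega
  · exact Or.inr (Or.inr (Or.inr ⟨hgt, adj_lt T (adj_symm T hadj) hgt⟩))
noncomputable def rk (T : LionsForest V d) (h : Set V) : ℕ :=
  if he : ∃ k, md T ((pii T)^[k] h) = 0 then Nat.find he else 0

lemma rk_ex (T : LionsForest V d) :
    ∀ n (h : Set V), h ∈ T.hyperedges → md T h = n → ∃ k, md T ((pii T)^[k] h) = 0 := by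
  intro n
  induction n using Nat.strong_induction_on with
  | _ n ih =>
    intro h hh hmd
    rcases Nat.eq_zero_or_pos n with rfl | hpos
    · exact ⟨0, hmd⟩
    · have hm : 0 < md T h := hmd ▸ hpos
      obtain ⟨k, hk⟩ := ih (md T (pii T h)) (by rw [← hmd]; exact md_pii_lt T hh hm)
        (pii T h) (pii_mem T hh hm).1 rfl
      exact ⟨k + 1, by rwa [Function.iterate_succ_apply]⟩

lemma rk_of_md_zero (T : LionsForest V d) {h : Set V} (hm : md T h = 0) : rk T h = 0 := by
  have he : ∃ k, md T ((pii T)^[k] h) = 0 := ⟨0, hm⟩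
  rw [rk, dif_pos he]
  exact Nat.le_zero.1 (Nat.find_le (by simpa using hm))

lemma rk_succ (T : LionsForest V d) {h : Set V} (hh : h ∈ T.hyperedges) (hm : 0 < md T h) :
    rk T h = rk T (pii T h) + 1 := by
  have he : ∃ k, md T ((pii T)^[k] h) = 0 := rk_ex T (md T h) h hh rfl
  have he' : ∃ k, md T ((pii T)^[k] (pii T h)) = 0 :=
    rk_ex T (md T (pii T h)) (pii T h) (pii_mem T hh hm).1 rfl
  rw [rk, dif_pos he, rk, dif_pos he']
  have h0 : Nat.find he ≠ 0 := by
    intro hc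
    have := Nat.find_spec he
    rw [hc] at this
    simp only [Function.iterate_zero_apply] at this
    omega
  obtain ⟨j, hj⟩ := Nat.exists_eq_succ_of_ne_zero h0
  have hle1 : Nat.find he' ≤ j := by
    apply Nat.find_le
    have := Nat.find_spec he
    rw [hj, Function.iterate_succ_apply] at this
    exact this
  have hle2 : Nat.find he ≤ Nat.find he' + 1 := by
    apply Nat.find_le
    rw [Function.iterate_succ_apply]
    exact Nat.find_spec he'
  omega

lemma rk_pos_md_pos (T : LionsForest V d) {h : Set V} (hh : h ∈ T.hyperedges)
    (hr : rk T h ≠ 0) : 0 < md T h := by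
  rcases Nat.eq_zero_or_pos (md T h) with h0 | hpos
  · exact absurd (rk_of_md_zero T h0) hr
  · exact hpos

lemma md_zero_of_rk_zero (T : LionsForest V d) {h : Set V} (hh : h ∈ T.hyperedges)
    (hr : rk T h = 0) : md T h = 0 := by
  by_contra hc
  rw [rk_succ T hh (Nat.pos_of_ne_zero hc)] at hr
  omega

lemma adj_rk (T : LionsForest V d) {h1 h2 : Set V} (hadj : dualAdj T h1 h2) :
    rk T h1 = rk T h2 ∨ rk T h1 = rk T h2 + 1 ∨ rk T h2 = rk T h1 + 1 := by
  have h1m := hadj.1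
  have h2m := hadj.2.1
  rcases adj_cases T hadj with ⟨m1, m2⟩ | ⟨m1, m2, hp⟩ | ⟨hlt, hpe⟩ | ⟨hlt, hpe⟩
  · rw [rk_of_md_zero T m1, rk_of_md_zero T m2]; left; rfl
  · left
    rw [rk_succ T h1m m1, rk_succ T h2m m2]
    congr 1
    rw [pii, pii, hp]
  · right; right
    rw [rk_succ T h2m (by omega), ← hpe]
  · right; left
    rw [rk_succ T h1m (by omega), ← hpe]

lemma root_iff_md (T : LionsForest V d) {h : Set V} (hh : h ∈ T.hyperedges) :
    (∃ x ∈ h, T.IsRoot x) ↔ md T h = 0 := by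
  constructor
  · rintro ⟨x, hx, hxN, hroot⟩
    have := md_le T hx
    rw [T.depth_root x hxN hroot] at this
    omega
  · intro hm
    obtain ⟨x, hx, hdx⟩ := md_mem T (he_nonempty T hh)
    refine ⟨x, hx, he_subset T hh hx, fun y hy => ?_⟩
    have := T.depth_edge x y hy
    omega

lemma layer_eq (T : LionsForest V d) :
    ∀ i, dualLayer T i = {h | h ∈ T.hyperedges ∧ rk T h = i} ∧
      (dualLayerAux T i).2 = {h | h ∈ T.hyperedges ∧ rk T h ≤ i} := by
  intro i
  induction i with
  | zero =>
    have hs : {h | h ∈ T.hyperedges ∧ ∃ x ∈ h, T.IsRoot x}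
        = {h | h ∈ T.hyperedges ∧ rk T h = 0} := by
      ext h
      simp only [Set.mem_setOf_eq]
      constructor
      · rintro ⟨hh, hroot⟩
        exact ⟨hh, rk_of_md_zero T ((root_iff_md T hh).1 hroot)⟩
      · rintro ⟨hh, hr⟩
        exact ⟨hh, (root_iff_md T hh).2 (md_zero_of_rk_zero T hh hr)⟩
    constructor
    · show (dualLayerAux T 0).1 = _
      rw [dualLayerAux]
      simpa [Set.sep_setOf] using hs
    · rw [dualLayerAux]
      simp only
      rw [show {h | h ∈ T.hyperedges ∧ rk T h ≤ 0} = {h | h ∈ T.hyperedges ∧ rk T h = 0} by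
        ext h; simp [Nat.le_zero]]
      simpa [Set.sep_setOf] using hs
  | succ i ih =>
    have hlayer : dualLayer T (i + 1) = {h | h ∈ T.hyperedges ∧ rk T h = i + 1} := by
      show (dualLayerAux T (i + 1)).1 = _
      rw [dualLayerAux]
      simp only
      rw [show (dualLayerAux T i).1 = dualLayer T i from rfl, ih.1, ih.2]
      ext h
      simp only [Set.mem_sep_iff, Set.mem_setOf_eq]
      constructor
      · rintro ⟨hh, hnot, h', ⟨h'm, h'rk⟩, hadj⟩
        push_neg at hnot
        have hgt : i < rk T h := hnot hh
        refine ⟨hh, ?_⟩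
        rcases adj_rk T hadj with e | e | e <;> omega
      · rintro ⟨hh, hrk⟩
        have hm : 0 < md T h := rk_pos_md_pos T hh (by omega)
        refine ⟨hh, ?_, pii T h, ⟨(pii_mem T hh hm).1, ?_⟩, adj_pi T hh hm⟩
        · rintro ⟨-, hle⟩; omega
        · have := rk_succ T hh hm; omega
    refine ⟨hlayer, ?_⟩
    rw [show (dualLayerAux T (i + 1)).2
        = (dualLayerAux T i).2 ∪ (dualLayerAux T (i + 1)).1 by rw [dualLayerAux]]
    rw [ih.2]
    rw [show (dualLayerAux T (i+1)).1 = dualLayer T (i+1) from rfl, hlayer]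
    ext h
    simp only [Set.mem_union, Set.mem_setOf_eq]
    constructor
    · rintro (⟨hh, hle⟩ | ⟨hh, he⟩) <;> exact ⟨hh, by omega⟩
    · rintro ⟨hh, hle⟩
      rcases Nat.lt_or_ge (rk T h) (i + 1) with hlt | hge
      · exact Or.inl ⟨hh, by omega⟩
      · exact Or.inr ⟨hh, by omega⟩
lemma reach_root (T : LionsForest V d) :
    ∀ n (h : Set V), h ∈ T.hyperedges → md T h = n →
      ∃ h', h' ∈ T.hyperedges ∧ md T h' = 0 ∧ Relation.ReflTransGen (dualAdj T) h h' := by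
  intro n
  induction n using Nat.strong_induction_on with
  | _ n ih =>
    intro h hh hmd
    rcases Nat.eq_zero_or_pos n with rfl | hpos
    · exact ⟨h, hh, hmd, Relation.ReflTransGen.refl⟩
    · have hm : 0 < md T h := hmd ▸ hpos
      obtain ⟨h', hh', h0', path⟩ := ih (md T (pii T h)) (by rw [← hmd]; exact md_pii_lt T hh hm)
        (pii T h) (pii_mem T hh hm).1 rfl
      exact ⟨h', hh', h0', Relation.ReflTransGen.head (adj_pi T hh hm) path⟩

end LionsAux

open LionsAux

/-- The dual Lions forest of a Lions forest is connected; the nonempty layers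
`H⁽⁰⁾, H⁽¹⁾, …` form a partition of the set `H'` of hyperedges; and on each layer the dual
adjacency restricts to a disjoint union of complete graphs. -/
theorem stmt_5 {V : Type*} {d : ℕ} (T : LionsForest V d) :
    (∀ h ∈ T.hyperedges, ∀ h' ∈ T.hyperedges,
      Relation.ReflTransGen (dualAdj T) h h') ∧
    IsPartitionOf T.hyperedges
      {L : Set (Set V) | L.Nonempty ∧ ∃ i : ℕ, L = dualLayer T i} ∧
    (∀ i : ℕ, ∀ h ∈ dualLayer T i, ∀ h' ∈ dualLayer T i, ∀ h'' ∈ dualLayer T i,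
      dualAdj T h h' → dualAdj T h' h'' → h ≠ h'' → dualAdj T h h'') := by
  refine ⟨?_, ⟨?_, ?_, ?_, ?_⟩, ?_⟩
  · -- connectivity
    intro h hh h' hh'
    obtain ⟨r, hrm, hr0, path1⟩ := reach_root T (md T h) h hh rfl
    obtain ⟨r', hr'm, hr'0, path2⟩ := reach_root T (md T h') h' hh' rfl
    have path2' : Relation.ReflTransGen (dualAdj T) r' h' :=
      (@Relation.ReflTransGen.symmetric _ (dualAdj T) ⟨fun _ _ hab => adj_symm T hab⟩).symm _ _ path2
    refine path1.trans (Relation.ReflTransGen.trans ?_ path2')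
    rcases eq_or_ne r r' with rfl | hne
    · exact Relation.ReflTransGen.refl
    · exact Relation.ReflTransGen.single (adj_roots T hrm hr'm hne hr0 hr'0)
  · -- nonempty
    rintro L ⟨hLne, -⟩
    exact hLne
  · -- subset
    rintro L ⟨-, i, rfl⟩
    rw [(layer_eq T i).1]
    exact fun h hh => hh.1
  · -- pairwise disjoint
    rintro L1 ⟨-, i, rfl⟩ L2 ⟨-, j, rfl⟩ hne
    have hij : i ≠ j := fun hc => hne (by rw [hc])
    rw [Set.disjoint_left]
    intro h h1 h2
    rw [(layer_eq T i).1] at h1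
    rw [(layer_eq T j).1] at h2
    exact hij (h1.2.symm.trans h2.2)
  · -- union
    ext h
    constructor
    · rintro ⟨L, ⟨-, i, rfl⟩, hmem⟩
      rw [(layer_eq T i).1] at hmem
      exact hmem.1
    · intro hh
      refine ⟨dualLayer T (rk T h), ⟨⟨h, ?_⟩, rk T h, rfl⟩, ?_⟩ <;>
        · rw [(layer_eq T (rk T h)).1]
          exact ⟨hh, rfl⟩
  · -- layers are disjoint unions of cliques
    intro i h hmem h' hmem' h'' hmem'' hadj1 hadj2 hne
    rw [(layer_eq T i).1] at hmem hmem' hmem''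
    obtain ⟨hh, hrk⟩ := hmem
    obtain ⟨hh', hrk'⟩ := hmem'
    obtain ⟨hh'', hrk''⟩ := hmem''
    have hc1 := adj_cases T hadj1
    have hc2 := adj_cases T hadj2
    have hr1 := adj_rk T hadj1
    have hr2 := adj_rk T hadj2
    rcases hc1 with ⟨m1, m2⟩ | ⟨m1, m2, hp1⟩ | ⟨hlt, hpe⟩ | ⟨hlt, hpe⟩
    · -- md h = md h' = 0
      rcases hc2 with ⟨n1, n2⟩ | ⟨n1, n2, hp2⟩ | ⟨hlt2, hpe2⟩ | ⟨hlt2, hpe2⟩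
      · exact adj_roots T hh hh'' hne m1 n2
      · omega
      · -- md h' < md h'' and h' = pii h''
        exfalso
        have := rk_succ T hh'' (by omega)
        rw [← hpe2] at this
        omega
      · omega
    · -- pnode h = pnode h', md both pos
      rcases hc2 with ⟨n1, n2⟩ | ⟨n1, n2, hp2⟩ | ⟨hlt2, hpe2⟩ | ⟨hlt2, hpe2⟩
      · omega
      · exact adj_sib T hh hh'' hne m1 n2 (hp1.trans hp2)
      · exfalso
        have := rk_succ T hh'' (by omega)
        rw [← hpe2] at this
        omega
      · exfalso
        have := rk_succ T hh' (by omega)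
        rw [← hpe2] at this
        omega
    · exfalso
      have := rk_succ T hh' (by omega)
      rw [← hpe] at this
      omega
    · exfalso
      have := rk_succ T hh (by omega)
      rw [← hpe] at this
      omega
end

section
/- Let T = (N, E, h0, H, L) be a Lions forest with dual Lions forest T* = (H', D), and let {h1, h2} ∈ D. Define T' = (N, E, g0, G, L) as follows: if h0 ∈ {h1, h2}, then g0 = h1 ∪ h2 and G = H ∖ {h1, h2}; otherwise, g0 = h0 and G = (H ∖ {h1, h2}) ∪ {h1 ∪ h2}. Then T' is a Lions forest. -/
lemma dualAdj_symm {V : Type*} {d : ℕ} {T : LionsForest V d} {h1 h2 : Set V}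
    (h : dualAdj T h1 h2) : dualAdj T h2 h1 := by
  obtain ⟨a, b, c, p, s⟩ := h
  refine ⟨b, a, c.symm, ?_, ?_⟩ <;> rw [Set.union_comm h2 h1]
  · exact p
  · exact s

/-- The merged forest when `T.h0 = h1`. -/
lemma mergeA {V : Type*} {d : ℕ} (T : LionsForest V d) (h1 h2 : Set V)
    (hadj : dualAdj T h1 h2) (h01 : T.h0 = h1) :
    ∃ T' : LionsForest V d,
      T'.N = T.N ∧ T'.E = T.E ∧ T'.L = T.L ∧
      T'.h0 = h1 ∪ h2 ∧ T'.H = T.H \ {h1, h2} := by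
  obtain ⟨hm1, hm2, hne12, hpar, hsib⟩ := hadj
  obtain ⟨Pne, Psub, Pdis, Pun⟩ := T.H_partition
  have hne1 : h1.Nonempty := Set.nonempty_iff_ne_empty.2 (by simpa using hm1.2)
  have h2H : h2 ∈ T.H := by
    rcases hm2.1 with h | h
    · exact absurd (h.trans h01).symm hne12
    · exact h
  have h2sub : h2 ⊆ T.N \ T.h0 := Psub _ h2H
  refine ⟨{ N := T.N, E := T.E, h0 := h1 ∪ h2, H := T.H \ (insert h1 (Singleton.singleton h2) : Set (Set V)), L := T.L,
            depth := T.depth, finite_N := T.finite_N, nonempty_N := T.nonempty_N,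
            mem_of_edge := T.mem_of_edge, edge_unique := T.edge_unique,
            h0_subset := ?_, H_partition := ?_,
            depth_root := T.depth_root, depth_edge := T.depth_edge,
            h0_root := ?_, hyper_parent := ?_, hyper_sibling := ?_ },
    rfl, rfl, rfl, rfl, rfl⟩
  · exact Set.union_subset (h01 ▸ T.h0_subset) (h2sub.trans Set.diff_subset)
  · refine ⟨fun p hp => Pne p hp.1, ?_, Pdis.mono Set.diff_subset, ?_⟩
    · intro p hp x hx
      have hxN := Psub p hp.1 hx
      refine ⟨hxN.1, ?_⟩
      rintro (hx1 | hx2)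
      · exact hxN.2 (h01 ▸ hx1)
      · have : p ≠ h2 := fun h => hp.2 (by simp [h])
        exact (Pdis hp.1 h2H this).le_bot ⟨hx, hx2⟩
    · ext x
      constructor
      · rintro ⟨p, hp, hx⟩
        have hxN := Psub p hp.1 hx
        refine ⟨hxN.1, ?_⟩
        rintro (hx1 | hx2)
        · exact hxN.2 (h01 ▸ hx1)
        · have : p ≠ h2 := fun h => hp.2 (by simp [h])
          exact (Pdis hp.1 h2H this).le_bot ⟨hx, hx2⟩
      · rintro ⟨hxN, hx12⟩
        have hx' : x ∈ ⋃₀ T.H := Pun ▸ ⟨hxN, fun h => hx12 (Or.inl (h01 ▸ h))⟩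
        obtain ⟨p, hp, hx⟩ := hx'
        refine ⟨p, ⟨hp, ?_⟩, hx⟩
        rintro (rfl | rfl)
        · exact hx12 (Or.inl hx)
        · exact hx12 (Or.inr hx)
  · intro _
    obtain ⟨x, hx, hroot⟩ := T.h0_root (h01 ▸ hne1)
    exact ⟨x, Or.inl (h01 ▸ hx), hroot⟩
  · rintro h ⟨hh, hne⟩
    rcases hh with rfl | hh
    · exact hpar
    · exact T.hyper_parent h ⟨Or.inr hh.1, hne⟩
  · rintro h ⟨hh, hne⟩
    rcases hh with rfl | hh
    · exact hsib
    · exact T.hyper_sibling h ⟨Or.inr hh.1, hne⟩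

/-- Merging two dual-adjacent hyperedges of a Lions forest yields a Lions forest: if
`{h1, h2}` is an edge of the dual Lions forest of `T`, there is a Lions forest `T'` with the
same nodes, edges and labels, whose hyperedge data is obtained by replacing `h1` and `h2` by
`h1 ∪ h2` (this union becoming the `0`-hyperedge when `h0 ∈ {h1, h2}`). -/
theorem stmt_6 {V : Type*} {d : ℕ} (T : LionsForest V d) (h1 h2 : Set V)
    (hadj : dualAdj T h1 h2) :
    ∃ T' : LionsForest V d,
      T'.N = T.N ∧ T'.E = T.E ∧ T'.L = T.L ∧
      ((T.h0 = h1 ∨ T.h0 = h2) →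
        T'.h0 = h1 ∪ h2 ∧ T'.H = T.H \ {h1, h2}) ∧
      (¬(T.h0 = h1 ∨ T.h0 = h2) →
        T'.h0 = T.h0 ∧ T'.H = T.H \ {h1, h2} ∪ {h1 ∪ h2}) := by
  by_cases hc : T.h0 = h1 ∨ T.h0 = h2
  · rcases hc with h01 | h02
    · obtain ⟨T', e1, e2, e3, e4, e5⟩ := mergeA T h1 h2 hadj h01
      exact ⟨T', e1, e2, e3, fun _ => ⟨e4, e5⟩, fun hn => absurd (Or.inl h01) hn⟩
    · obtain ⟨T', e1, e2, e3, e4, e5⟩ := mergeA T h2 h1 (dualAdj_symm hadj) h02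
      rw [Set.union_comm h2 h1] at e4
      rw [Set.pair_comm h2 h1] at e5
      exact ⟨T', e1, e2, e3, fun _ => ⟨e4, e5⟩, fun hn => absurd (Or.inr h02) hn⟩
  · push_neg at hc
    obtain ⟨hn1, hn2⟩ := hc
    obtain ⟨hm1, hm2, hne12, hpar, hsib⟩ := hadj
    obtain ⟨Pne, Psub, Pdis, Pun⟩ := T.H_partition
    have h1H : h1 ∈ T.H := by
      rcases hm1.1 with h | h
      · exact absurd h.symm hn1
      · exact h
    have h2H : h2 ∈ T.H := by
      rcases hm2.1 with h | h
      · exact absurd h.symm hn2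
      · exact h
    refine ⟨{ N := T.N, E := T.E, h0 := T.h0, H := T.H \ (insert h1 (Singleton.singleton h2) : Set (Set V)) ∪ {h1 ∪ h2},
              L := T.L, depth := T.depth,
              finite_N := T.finite_N, nonempty_N := T.nonempty_N,
              mem_of_edge := T.mem_of_edge, edge_unique := T.edge_unique,
              h0_subset := T.h0_subset, H_partition := ?_,
              depth_root := T.depth_root, depth_edge := T.depth_edge,
              h0_root := T.h0_root, hyper_parent := ?_, hyper_sibling := ?_ },
      rfl, rfl, rfl, fun h => absurd h (by tauto), fun _ => ⟨rfl, rfl⟩⟩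
    · refine ⟨?_, ?_, ?_, ?_⟩
      · rintro p (hp | hp)
        · exact Pne p hp.1
        · rw [Set.mem_singleton_iff] at hp
          exact hp ▸ (Pne h1 h1H).mono Set.subset_union_left
      · rintro p (hp | hp)
        · exact Psub p hp.1
        · rw [Set.mem_singleton_iff] at hp
          exact hp ▸ Set.union_subset (Psub _ h1H) (Psub _ h2H)
      · rintro p hp q hq hpq
        rcases hp with hp | hp <;> rcases hq with hq | hq
        · exact Pdis hp.1 hq.1 hpq
        · rw [Set.mem_singleton_iff] at hq
          subst hq
          refine Disjoint.union_right ?_ ?_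
          · exact Pdis hp.1 h1H (fun h => hp.2 (by simp [h]))
          · exact Pdis hp.1 h2H (fun h => hp.2 (by simp [h]))
        · rw [Set.mem_singleton_iff] at hp
          subst hp
          refine Disjoint.union_left ?_ ?_
          · exact (Pdis hq.1 h1H (fun h => hq.2 (by simp [h]))).symm
          · exact (Pdis hq.1 h2H (fun h => hq.2 (by simp [h]))).symm
        · rw [Set.mem_singleton_iff] at hp hq
          exact absurd (hp.trans hq.symm) hpq
      · ext x
        constructor
        · rintro ⟨p, hp | hp, hx⟩
          · exact Psub p hp.1 hx
          · rw [Set.mem_singleton_iff] at hp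
            subst hp
            rcases hx with hx | hx
            · exact Psub _ h1H hx
            · exact Psub _ h2H hx
        · intro hx
          have : x ∈ ⋃₀ T.H := Pun ▸ hx
          obtain ⟨p, hp, hxp⟩ := this
          by_cases hp1 : p = h1
          · exact ⟨h1 ∪ h2, Or.inr rfl, Or.inl (hp1 ▸ hxp)⟩
          by_cases hp2 : p = h2
          · exact ⟨h1 ∪ h2, Or.inr rfl, Or.inr (hp2 ▸ hxp)⟩
          · exact ⟨p, Or.inl ⟨hp, by simp [hp1, hp2]⟩, hxp⟩
    · rintro h ⟨hh, hne⟩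
      rcases hh with hh0 | hh | hh
      · subst hh0; exact T.hyper_parent T.h0 ⟨Or.inl rfl, hne⟩
      · exact T.hyper_parent h ⟨Or.inr hh.1, hne⟩
      · rw [Set.mem_singleton_iff] at hh
        exact hh ▸ hpar
    · rintro h ⟨hh, hne⟩
      rcases hh with hh0 | hh | hh
      · subst hh0; exact T.hyper_sibling T.h0 ⟨Or.inl rfl, hne⟩
      · exact T.hyper_sibling h ⟨Or.inr hh.1, hne⟩
      · rw [Set.mem_singleton_iff] at hh
        exact hh ▸ hsib
end

section
/- Let T be a Lions forest with dual Lions forest T* = (H', D), and let d1, …, dn ∈ D be distinct edges such that the graph (H', {d1, …, dn}) contains no cycle. Then there exist Lions forests T^{(0)} = T, T^{(1)}, …, T^{(n)} such that for every j ∈ {1, …, n}: writing d_j = {h_{j,1}, h_{j,2}} (hyperedges of T), the hyperedges ĥ1 and ĥ2 of T^{(j−1)} containing h_{j,1} and h_{j,2} respectively are distinct, {ĥ1, ĥ2} is an edge of the dual Lions forest of T^{(j−1)}, and T^{(j)} is the merged Lions forest (T^{(j−1)})^{{ĥ1, ĥ2}}. -/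
/-- `T'` is the Lions forest obtained from `T` by merging the two dual-adjacent hyperedges
`h1` and `h2` into `h1 ∪ h2`. -/
def IsMerge {V : Type*} {d : ℕ} (T : LionsForest V d) (h1 h2 : Set V)
    (T' : LionsForest V d) : Prop :=
  T'.N = T.N ∧ T'.E = T.E ∧ T'.L = T.L ∧
  ((T.h0 = h1 ∨ T.h0 = h2) →
    T'.h0 = h1 ∪ h2 ∧ T'.H = T.H \ {h1, h2}) ∧
  (¬(T.h0 = h1 ∨ T.h0 = h2) →
    T'.h0 = T.h0 ∧ T'.H = T.H \ {h1, h2} ∪ {h1 ∪ h2})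

section GoodLemmas

variable {V : Type*} {d : ℕ}

/-- A subset of nodes satisfying the structural conditions (ii) and (iii). -/
def Good (T : LionsForest V d) (S : Set V) : Prop :=
  (∀ x ∈ S, ∀ y ∈ S, T.depth x < T.depth y → ∀ z, (y, z) ∈ T.E → z ∈ S) ∧
  (∀ x₁ ∈ S, ∀ y₁ ∈ S, T.depth x₁ = T.depth y₁ → ∀ x₂ y₂, (x₁, x₂) ∈ T.E →
    (y₁, y₂) ∈ T.E → x₂ ≠ y₂ → x₂ ∈ S ∧ y₂ ∈ S)

lemma dualAdj.good {T : LionsForest V d} {h1 h2 : Set V} (h : dualAdj T h1 h2) :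
    Good T (h1 ∪ h2) := ⟨h.2.2.2.1, h.2.2.2.2⟩

lemma dualAdj.symm {T : LionsForest V d} {h1 h2 : Set V} (h : dualAdj T h1 h2) :
    dualAdj T h2 h1 := by
  obtain ⟨m1, m2, hne, hp, hs⟩ := h
  refine ⟨m2, m1, hne.symm, ?_, ?_⟩ <;> rw [Set.union_comm h2 h1] <;> assumption

lemma good_congr {T T' : LionsForest V d} (hE : T'.E = T.E) (hd : T'.depth = T.depth)
    {S : Set V} (h : Good T S) : Good T' S := by
  unfold Good at *; rw [hE, hd]; exact h

lemma LionsForest.good_hyperedge (T : LionsForest V d) {h : Set V}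
    (hh : h ∈ T.hyperedges) : Good T h :=
  ⟨T.hyper_parent h hh, T.hyper_sibling h hh⟩

lemma parent_exists (T : LionsForest V d) {x : V} (hx : x ∈ T.N) (hd : T.depth x ≠ 0) :
    ∃ z, (x, z) ∈ T.E := by
  by_contra h
  push_neg at h
  exact hd (T.depth_root x hx h)

lemma exists_min_depth (T : LionsForest V d) {S : Set V} (hS : S.Nonempty) :
    ∃ y ∈ S, ∀ x ∈ S, T.depth y ≤ T.depth x := by
  obtain ⟨y, hy, hdy⟩ := Nat.sInf_mem (hS.image T.depth)
  exact ⟨y, hy, fun x hx => hdy ▸ Nat.sInf_le ⟨x, hx, rfl⟩⟩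

lemma LionsForest.hyperedge_nonempty (T : LionsForest V d) {h : Set V}
    (hh : h ∈ T.hyperedges) : h.Nonempty := by
  rw [Set.nonempty_iff_ne_empty]
  exact fun h0 => hh.2 (by simp [h0])

lemma LionsForest.hyperedge_subset (T : LionsForest V d) {h : Set V}
    (hh : h ∈ T.hyperedges) : h ⊆ T.N := by
  rcases hh.1 with h0 | hH
  · exact h0 ▸ T.h0_subset
  · exact (T.H_partition.2.1 h hH).trans Set.diff_subset

lemma LionsForest.hyperedge_disjoint (T : LionsForest V d) {h h' : Set V}
    (hh : h ∈ T.hyperedges) (hh' : h' ∈ T.hyperedges) (hne : h ≠ h') : Disjoint h h' := by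
  have hH0 : ∀ g ∈ T.H, Disjoint T.h0 g := fun g hg =>
    Set.disjoint_of_subset_right (T.H_partition.2.1 g hg) Set.disjoint_sdiff_right
  rcases hh.1 with h1 | h1 <;> rcases hh'.1 with h2 | h2
  · exact absurd (h1.trans h2.symm) hne
  · exact h1 ▸ hH0 h' h2
  · exact (h2 ▸ hH0 h h1).symm
  · exact T.H_partition.2.2.1 h1 h2 hne

/-- A hyperedge containing a point of another hyperedge equals it. -/
lemma LionsForest.hyperedge_eq_of_subset (T : LionsForest V d) {h g : Set V}
    (hh : h ∈ T.hyperedges) (hg : g ∈ T.hyperedges) (hsub : h ⊆ g) : h = g := by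
  by_contra hne
  obtain ⟨v, hv⟩ := T.hyperedge_nonempty hh
  exact (T.hyperedge_disjoint hh hg hne).ne_of_mem hv (hsub hv) rfl

end GoodLemmas
section UnionGood

variable {V : Type*} {d : ℕ} {T : LionsForest V d} {g1 g2 h1 h2 : Set V}

lemma depth_lt_of_edge (T : LionsForest V d) {x z : V} (h : (x, z) ∈ T.E) :
    T.depth z < T.depth x := by
  rw [T.depth_edge x z h]; exact Nat.lt_succ_self _

lemma descend_single
    (hg2 : Good T g2) (hg2N : g2 ⊆ T.N) (hdisj : Disjoint g1 g2)
    (hh1 : h1 ⊆ g1) (hh2 : h2 ⊆ g2) (hC : Good T (h1 ∪ h2))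
    {c x0 : V} (hc : c ∈ h1 ∪ h2) (hx0 : x0 ∈ g2) (s : ℕ) :
    ∀ (k : ℕ) (u : V), u ∈ h2 → T.depth u = s + k → T.depth c ≤ s → T.depth x0 ≤ s →
      ∃ u' ∈ h2, T.depth u' = s := by
  intro k
  induction k with
  | zero => exact fun u hu hd _ _ => ⟨u, hu, hd⟩
  | succ k ih =>
    intro u hu hd hcs hxs
    have huN : u ∈ T.N := hg2N (hh2 hu)
    obtain ⟨z, hz⟩ := parent_exists T huN (by omega)
    have hdz : T.depth u = T.depth z + 1 := T.depth_edge u z hz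
    have hzC : z ∈ h1 ∪ h2 :=
      hC.1 c hc u (Or.inr hu) (by omega) z hz
    have hzg2 : z ∈ g2 :=
      hg2.1 x0 hx0 u (hh2 hu) (by omega) z hz
    have hzh2 : z ∈ h2 := by
      rcases hzC with h | h
      · exact absurd hzg2 (Set.disjoint_left.mp hdisj (hh1 h))
      · exact h
    exact ih z hzh2 (by omega) hcs hxs

lemma descend_pair
    (hg1 : Good T g1) (hg2 : Good T g2) (hg1N : g1 ⊆ T.N) (hg2N : g2 ⊆ T.N)
    (hdisj : Disjoint g1 g2) (hh1 : h1 ⊆ g1) (hh2 : h2 ⊆ g2) (hC : Good T (h1 ∪ h2))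
    {w1 w2 : V} (hw1 : w1 ∈ g1) (hw2 : w2 ∈ g2) (s : ℕ) :
    ∀ (k : ℕ) (u1 u2 : V), u1 ∈ h1 → u2 ∈ h2 → T.depth u1 = s + k → T.depth u2 = s + k →
      T.depth w1 ≤ s → T.depth w2 ≤ s →
      ∃ v1 ∈ h1, ∃ v2 ∈ h2, T.depth v1 = s ∧ T.depth v2 = s := by
  intro k
  induction k with
  | zero => exact fun u1 u2 hu1 hu2 hd1 hd2 _ _ => ⟨u1, hu1, u2, hu2, hd1, hd2⟩
  | succ k ih =>
    intro u1 u2 hu1 hu2 hd1 hd2 hw1s hw2s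
    obtain ⟨z1, hz1⟩ := parent_exists T (hg1N (hh1 hu1)) (by omega)
    obtain ⟨z2, hz2⟩ := parent_exists T (hg2N (hh2 hu2)) (by omega)
    have hdz1 : T.depth u1 = T.depth z1 + 1 := T.depth_edge _ _ hz1
    have hdz2 : T.depth u2 = T.depth z2 + 1 := T.depth_edge _ _ hz2
    have hz1g1 : z1 ∈ g1 := hg1.1 w1 hw1 u1 (hh1 hu1) (by omega) z1 hz1
    have hz2g2 : z2 ∈ g2 := hg2.1 w2 hw2 u2 (hh2 hu2) (by omega) z2 hz2
    have hne : z1 ≠ z2 := fun h => Set.disjoint_left.mp hdisj hz1g1 (h ▸ hz2g2)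
    obtain ⟨hz1C, hz2C⟩ :=
      hC.2 u1 (Or.inl hu1) u2 (Or.inr hu2) (by omega) z1 z2 hz1 hz2 hne
    have hz1h1 : z1 ∈ h1 := by
      rcases hz1C with h | h
      · exact h
      · exact absurd hz1g1 (Set.disjoint_right.mp hdisj (hh2 h))
    have hz2h2 : z2 ∈ h2 := by
      rcases hz2C with h | h
      · exact absurd hz2g2 (Set.disjoint_left.mp hdisj (hh1 h))
      · exact h
    exact ih z1 z2 hz1h1 hz2h2 (by omega) (by omega) hw1s hw2s

lemma cross_parent
    (hg1 : Good T g1) (hg2 : Good T g2) (hg1N : g1 ⊆ T.N) (hg2N : g2 ⊆ T.N)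
    (hdisj : Disjoint g1 g2) (hh1 : h1 ⊆ g1) (hh2 : h2 ⊆ g2)
    (hh1ne : h1.Nonempty) (hh2ne : h2.Nonempty) (hC : Good T (h1 ∪ h2)) :
    ∀ x ∈ g2, ∀ y ∈ g1, (∀ x' ∈ g1, T.depth y ≤ T.depth x') →
      T.depth x < T.depth y → ∀ z, (y, z) ∈ T.E → z ∈ g2 := by
  intro x hx y hy hymin hxy z hz
  obtain ⟨w1, hw1, hw1min⟩ := exists_min_depth T hh1ne
  obtain ⟨w2, hw2, hw2min⟩ := exists_min_depth T hh2ne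
  have hm1 : T.depth y ≤ T.depth w1 := hymin w1 (hh1 hw1)
  by_cases hcase : T.depth w2 < T.depth w1
  · -- min of h2 is below min of h1
    obtain ⟨z1, hz1⟩ := parent_exists T (hg1N (hh1 hw1)) (by omega)
    have hdz1 : T.depth w1 = T.depth z1 + 1 := T.depth_edge _ _ hz1
    have hz1C : z1 ∈ h1 ∪ h2 := hC.1 w2 (Or.inr hw2) w1 (Or.inl hw1) hcase z1 hz1
    have hz1h2 : z1 ∈ h2 := by
      rcases hz1C with h | h
      · exact absurd (hw1min z1 h) (by omega)
      · exact h
    have heq : T.depth w1 = T.depth y := by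
      by_contra hne
      have hlt : T.depth y < T.depth w1 := by omega
      have : z1 ∈ g1 := hg1.1 y hy w1 (hh1 hw1) hlt z1 hz1
      exact Set.disjoint_left.mp hdisj this (hh2 hz1h2)
    have hzz1 : z = z1 := by
      by_contra hne
      obtain ⟨_, h⟩ := hg1.2 y hy w1 (hh1 hw1) heq.symm z z1 hz hz1 hne
      exact Set.disjoint_left.mp hdisj h (hh2 hz1h2)
    exact hzz1 ▸ hh2 hz1h2
  · -- min of h1 is at or below min of h2 : descend h2 to the level of w1
    have hle : T.depth w1 ≤ T.depth w2 := by omega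
    obtain ⟨v, hv, hdv⟩ := descend_single hg2 hg2N hdisj hh1 hh2 hC (Or.inl hw1) hx
      (T.depth w1) (T.depth w2 - T.depth w1) w2 hw2 (by omega) le_rfl (by omega)
    obtain ⟨q1, hq1⟩ := parent_exists T (hg1N (hh1 hw1)) (by omega)
    obtain ⟨q2, hq2⟩ := parent_exists T (hg2N (hh2 hv)) (by omega)
    have hdq1 : T.depth w1 = T.depth q1 + 1 := T.depth_edge _ _ hq1
    have hdq2 : T.depth v = T.depth q2 + 1 := T.depth_edge _ _ hq2
    have hq2g2 : q2 ∈ g2 := hg2.1 x hx v (hh2 hv) (by omega) q2 hq2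
    have hqq : q1 = q2 := by
      by_contra hne
      obtain ⟨hq1C, hq2C⟩ := hC.2 w1 (Or.inl hw1) v (Or.inr hv) (by omega) q1 q2 hq1 hq2 hne
      rcases hq1C with h | h
      · exact absurd (hw1min q1 h) (by omega)
      · exact absurd (hw2min q1 h) (by omega)
    have heq : T.depth w1 = T.depth y := by
      by_contra hne
      have hlt : T.depth y < T.depth w1 := by omega
      have : q1 ∈ g1 := hg1.1 y hy w1 (hh1 hw1) hlt q1 hq1
      exact Set.disjoint_left.mp hdisj this (hqq ▸ hq2g2)
    have hzz : z = q1 := by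
      by_contra hne
      obtain ⟨_, h⟩ := hg1.2 y hy w1 (hh1 hw1) heq.symm z q1 hz hq1 hne
      exact Set.disjoint_left.mp hdisj h (hqq ▸ hq2g2)
    exact hzz ▸ hqq ▸ hq2g2

lemma union_parent
    (hg1 : Good T g1) (hg2 : Good T g2) (hg1N : g1 ⊆ T.N) (hg2N : g2 ⊆ T.N)
    (hdisj : Disjoint g1 g2) (hh1 : h1 ⊆ g1) (hh2 : h2 ⊆ g2)
    (hh1ne : h1.Nonempty) (hh2ne : h2.Nonempty) (hC : Good T (h1 ∪ h2)) :
    ∀ x ∈ g1 ∪ g2, ∀ y ∈ g1 ∪ g2, T.depth x < T.depth y →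
      ∀ z, (y, z) ∈ T.E → z ∈ g1 ∪ g2 := by
  have hC' : Good T (h2 ∪ h1) := by rwa [Set.union_comm]
  intro x hx y hy hlt z hz
  obtain ⟨m1, hm1, hm1min⟩ := exists_min_depth T (hh1ne.mono hh1)
  obtain ⟨m2, hm2, hm2min⟩ := exists_min_depth T (hh2ne.mono hh2)
  rcases hy with hy | hy
  · by_cases hc : T.depth m1 < T.depth y
    · exact Or.inl (hg1.1 m1 hm1 y hy hc z hz)
    · have hymin : ∀ x' ∈ g1, T.depth y ≤ T.depth x' :=
        fun x' hx' => le_trans (by omega) (hm1min x' hx')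
      rcases hx with hx | hx
      · exact absurd (hymin x hx) (by omega)
      · exact Or.inr (cross_parent hg1 hg2 hg1N hg2N hdisj hh1 hh2 hh1ne hh2ne hC
          x hx y hy hymin hlt z hz)
  · by_cases hc : T.depth m2 < T.depth y
    · exact Or.inr (hg2.1 m2 hm2 y hy hc z hz)
    · have hymin : ∀ x' ∈ g2, T.depth y ≤ T.depth x' :=
        fun x' hx' => le_trans (by omega) (hm2min x' hx')
      rcases hx with hx | hx
      · exact Or.inl (cross_parent hg2 hg1 hg2N hg1N hdisj.symm hh2 hh1 hh2ne hh1ne hC'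
          x hx y hy hymin hlt z hz)
      · exact absurd (hymin x hx) (by omega)

end UnionGood
section UnionGood2

variable {V : Type*} {d : ℕ} {T : LionsForest V d} {g1 g2 h1 h2 : Set V}

lemma both_at_depth_aux
    (hg1 : Good T g1) (hg2 : Good T g2) (hg1N : g1 ⊆ T.N) (hg2N : g2 ⊆ T.N)
    (hdisj : Disjoint g1 g2) (hh1 : h1 ⊆ g1) (hh2 : h2 ⊆ g2) (hC : Good T (h1 ∪ h2))
    {w1 w2 u1 u2 : V} (hw1 : w1 ∈ h1) (hw1min : ∀ x ∈ h1, T.depth w1 ≤ T.depth x)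
    (hw2 : w2 ∈ h2)
    (hu1 : u1 ∈ g1) (hu1min : ∀ x ∈ g1, T.depth u1 ≤ T.depth x)
    (hu2 : u2 ∈ g2) (hu2min : ∀ x ∈ g2, T.depth u2 ≤ T.depth x)
    (hk : T.depth u1 = T.depth u2) (hle : T.depth w1 ≤ T.depth w2) :
    ∃ v1 ∈ h1, ∃ v2 ∈ h2, T.depth v1 = T.depth u1 ∧ T.depth v2 = T.depth u1 := by
  have hku2 : T.depth u2 ≤ T.depth w1 := hk ▸ hu1min w1 (hh1 hw1)
  obtain ⟨v, hv, hdv⟩ := descend_single hg2 hg2N hdisj hh1 hh2 hC (Or.inl hw1) hu2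
    (T.depth w1) (T.depth w2 - T.depth w1) w2 hw2 (by omega) le_rfl (by omega)
  exact descend_pair hg1 hg2 hg1N hg2N hdisj hh1 hh2 hC hu1 hu2 (T.depth u1)
    (T.depth w1 - T.depth u1) w1 v hw1 hv (by omega)
    (by omega) le_rfl (by omega)

lemma both_at_depth
    (hg1 : Good T g1) (hg2 : Good T g2) (hg1N : g1 ⊆ T.N) (hg2N : g2 ⊆ T.N)
    (hdisj : Disjoint g1 g2) (hh1 : h1 ⊆ g1) (hh2 : h2 ⊆ g2)
    (hh1ne : h1.Nonempty) (hh2ne : h2.Nonempty) (hC : Good T (h1 ∪ h2))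
    {u1 u2 : V}
    (hu1 : u1 ∈ g1) (hu1min : ∀ x ∈ g1, T.depth u1 ≤ T.depth x)
    (hu2 : u2 ∈ g2) (hu2min : ∀ x ∈ g2, T.depth u2 ≤ T.depth x)
    (hk : T.depth u1 = T.depth u2) :
    ∃ v1 ∈ h1, ∃ v2 ∈ h2, T.depth v1 = T.depth u1 ∧ T.depth v2 = T.depth u1 := by
  have hC' : Good T (h2 ∪ h1) := by rwa [Set.union_comm]
  obtain ⟨w1, hw1, hw1min⟩ := exists_min_depth T hh1ne
  obtain ⟨w2, hw2, hw2min⟩ := exists_min_depth T hh2ne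
  by_cases hle : T.depth w1 ≤ T.depth w2
  · exact both_at_depth_aux hg1 hg2 hg1N hg2N hdisj hh1 hh2 hC hw1 hw1min hw2
      hu1 hu1min hu2 hu2min hk hle
  · obtain ⟨v2, hv2, v1, hv1, hd2, hd1⟩ :=
      both_at_depth_aux hg2 hg1 hg2N hg1N hdisj.symm hh2 hh1 hC' hw2 hw2min hw1
        hu2 hu2min hu1 hu1min hk.symm (by omega)
    exact ⟨v1, hv1, v2, hv2, by omega, by omega⟩

lemma sib_mixed
    (hg1 : Good T g1) (hg2 : Good T g2) (hg1N : g1 ⊆ T.N) (hg2N : g2 ⊆ T.N)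
    (hdisj : Disjoint g1 g2) (hh1 : h1 ⊆ g1) (hh2 : h2 ⊆ g2)
    (hh1ne : h1.Nonempty) (hh2ne : h2.Nonempty) (hC : Good T (h1 ∪ h2)) :
    ∀ x1 ∈ g1, ∀ y1 ∈ g2, T.depth x1 = T.depth y1 → ∀ x2 y2,
      (x1, x2) ∈ T.E → (y1, y2) ∈ T.E → x2 ≠ y2 →
      x2 ∈ g1 ∪ g2 ∧ y2 ∈ g1 ∪ g2 := by
  have hpar := union_parent hg1 hg2 hg1N hg2N hdisj hh1 hh2 hh1ne hh2ne hC
  intro x1 hx1 y1 hy1 hdep x2 y2 hx2 hy2 hne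
  have hdx2 : T.depth x1 = T.depth x2 + 1 := T.depth_edge _ _ hx2
  have hdy2 : T.depth y1 = T.depth y2 + 1 := T.depth_edge _ _ hy2
  obtain ⟨m1, hm1, hm1min⟩ := exists_min_depth T (hh1ne.mono hh1)
  obtain ⟨m2, hm2, hm2min⟩ := exists_min_depth T (hh2ne.mono hh2)
  by_cases hc2 : T.depth m2 < T.depth x1
  · have hy2g2 : y2 ∈ g2 := hg2.1 m2 hm2 y1 hy1 (by omega) y2 hy2
    have hx2S : x2 ∈ g1 ∪ g2 :=
      hpar y2 (Or.inr hy2g2) x1 (Or.inl hx1) (by omega) x2 hx2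
    exact ⟨hx2S, Or.inr hy2g2⟩
  · by_cases hc1 : T.depth m1 < T.depth x1
    · have hx2g1 : x2 ∈ g1 := hg1.1 m1 hm1 x1 hx1 hc1 x2 hx2
      have hy2S : y2 ∈ g1 ∪ g2 :=
        hpar x2 (Or.inl hx2g1) y1 (Or.inr hy1) (by omega) y2 hy2
      exact ⟨Or.inl hx2g1, hy2S⟩
    · -- x1 and y1 are both at the common minimal depth of g1 and g2
      have hx1min : ∀ x ∈ g1, T.depth x1 ≤ T.depth x :=
        fun x hx => le_trans (by omega) (hm1min x hx)
      have hy1min : ∀ x ∈ g2, T.depth y1 ≤ T.depth x := by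
        intro x hx
        have := hm2min x hx
        have := hm2min y1 hy1
        omega
      obtain ⟨v1, hv1, v2, hv2, hdv1, hdv2⟩ :=
        both_at_depth hg1 hg2 hg1N hg2N hdisj hh1 hh2 hh1ne hh2ne hC hx1 hx1min
          hy1 hy1min hdep
      obtain ⟨p1, hp1⟩ := parent_exists T (hg1N (hh1 hv1)) (by omega)
      obtain ⟨p2, hp2⟩ := parent_exists T (hg2N (hh2 hv2)) (by omega)
      by_cases hpx : p1 = x2
      · by_cases hpy : p2 = y2
        · have hpne : p1 ≠ p2 := by rw [hpx, hpy]; exact hne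
          obtain ⟨hp1C, hp2C⟩ :=
            hC.2 v1 (Or.inl hv1) v2 (Or.inr hv2) (by omega) p1 p2 hp1 hp2 hpne
          constructor
          · rcases hp1C with h | h
            · exact hpx ▸ Or.inl (hh1 h)
            · exact hpx ▸ Or.inr (hh2 h)
          · rcases hp2C with h | h
            · exact hpy ▸ Or.inl (hh1 h)
            · exact hpy ▸ Or.inr (hh2 h)
        · obtain ⟨_, hy2g2⟩ := hg2.2 v2 (hh2 hv2) y1 hy1 (by omega) p2 y2 hp2 hy2 hpy
          have hx2S : x2 ∈ g1 ∪ g2 :=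
            hpar y2 (Or.inr hy2g2) x1 (Or.inl hx1) (by omega) x2 hx2
          exact ⟨hx2S, Or.inr hy2g2⟩
      · obtain ⟨_, hx2g1⟩ := hg1.2 v1 (hh1 hv1) x1 hx1 (by omega) p1 x2 hp1 hx2 hpx
        have hy2S : y2 ∈ g1 ∪ g2 :=
          hpar x2 (Or.inl hx2g1) y1 (Or.inr hy1) (by omega) y2 hy2
        exact ⟨Or.inl hx2g1, hy2S⟩

/-- Key lemma: the union of two disjoint good sets bridged by a good union of
sub-hyperedges is good. -/
lemma good_union
    (hg1 : Good T g1) (hg2 : Good T g2) (hg1N : g1 ⊆ T.N) (hg2N : g2 ⊆ T.N)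
    (hdisj : Disjoint g1 g2) (hh1 : h1 ⊆ g1) (hh2 : h2 ⊆ g2)
    (hh1ne : h1.Nonempty) (hh2ne : h2.Nonempty) (hC : Good T (h1 ∪ h2)) :
    Good T (g1 ∪ g2) := by
  have hC' : Good T (h2 ∪ h1) := by rwa [Set.union_comm]
  constructor
  · exact union_parent hg1 hg2 hg1N hg2N hdisj hh1 hh2 hh1ne hh2ne hC
  · intro x1 hx1 y1 hy1 hdep x2 y2 hx2 hy2 hne
    rcases hx1 with hx1 | hx1 <;> rcases hy1 with hy1 | hy1
    · obtain ⟨h1', h2'⟩ := hg1.2 x1 hx1 y1 hy1 hdep x2 y2 hx2 hy2 hne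
      exact ⟨Or.inl h1', Or.inl h2'⟩
    · exact sib_mixed hg1 hg2 hg1N hg2N hdisj hh1 hh2 hh1ne hh2ne hC
        x1 hx1 y1 hy1 hdep x2 y2 hx2 hy2 hne
    · obtain ⟨ha, hb⟩ := sib_mixed hg2 hg1 hg2N hg1N hdisj.symm hh2 hh1 hh2ne hh1ne hC'
        x1 hx1 y1 hy1 hdep x2 y2 hx2 hy2 hne
      exact ⟨ha.symm, hb.symm⟩
    · obtain ⟨h1', h2'⟩ := hg2.2 x1 hx1 y1 hy1 hdep x2 y2 hx2 hy2 hne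
      exact ⟨Or.inr h1', Or.inr h2'⟩

end UnionGood2
section Merge

variable {V : Type*} {d : ℕ}

lemma merge_h0 (T' : LionsForest V d) {g1 g2 : Set V} (h : dualAdj T' g1 g2)
    (hh0 : T'.h0 = g1) :
    ∃ T'' : LionsForest V d, IsMerge T' g1 g2 T'' ∧ T''.depth = T'.depth ∧
      T''.hyperedges = insert (g1 ∪ g2) (T'.hyperedges \ {g1, g2}) := by
  obtain ⟨hg1m, hg2m, hne, hp, hs⟩ := h
  have hgood : Good T' (g1 ∪ g2) := ⟨hp, hs⟩
  have g1ne : g1.Nonempty := T'.hyperedge_nonempty hg1m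
  have g2ne : g2.Nonempty := T'.hyperedge_nonempty hg2m
  have hg1N : g1 ⊆ T'.N := T'.hyperedge_subset hg1m
  have hg2N : g2 ⊆ T'.N := T'.hyperedge_subset hg2m
  have hUne : g1 ∪ g2 ≠ ∅ := (g1ne.mono Set.subset_union_left).ne_empty
  obtain ⟨Hne, Hsub, Hdisj, Hun⟩ := T'.H_partition
  have hg2H : g2 ∈ T'.H := by
    rcases hg2m.1 with h' | h'
    · exact absurd (hh0 ▸ h'.symm) hne
    · exact h'
  have hg1H : g1 ∉ T'.H := by
    intro hmem
    obtain ⟨x, hx⟩ := g1ne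
    exact (Hsub g1 hmem hx).2 (hh0 ▸ hx)
  refine ⟨⟨T'.N, T'.E, g1 ∪ g2, T'.H \ {g1, g2}, T'.L, T'.depth, T'.finite_N,
    T'.nonempty_N, T'.mem_of_edge, T'.edge_unique, Set.union_subset hg1N hg2N,
    ?_, T'.depth_root, T'.depth_edge, ?_, ?_, ?_⟩, ?_, rfl, ?_⟩
  · -- partition
    refine ⟨fun p hp => Hne p hp.1, ?_, Hdisj.mono Set.diff_subset, ?_⟩
    · intro p hp v hv
      have hpne : p ≠ g1 ∧ p ≠ g2 := by
        have := hp.2; simp only [Set.mem_insert_iff, Set.mem_singleton_iff] at this; tauto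
      have h1 := Hsub p hp.1 hv
      have hd2 : Disjoint p g2 := Hdisj hp.1 hg2H hpne.2
      refine ⟨h1.1, ?_⟩
      rintro (hv1 | hv2)
      · exact h1.2 (hh0 ▸ hv1)
      · exact Set.disjoint_left.mp hd2 hv hv2
    · ext v
      simp only [Set.mem_sUnion, Set.mem_diff]
      constructor
      · rintro ⟨p, ⟨hpH, hpn⟩, hvp⟩
        have hpne : p ≠ g1 ∧ p ≠ g2 := by
          simp only [Set.mem_insert_iff, Set.mem_singleton_iff] at hpn; tauto
        have h1 := Hsub p hpH hvp
        have hd2 : Disjoint p g2 := Hdisj hpH hg2H hpne.2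
        refine ⟨h1.1, ?_⟩
        rintro (hv1 | hv2)
        · exact h1.2 (hh0 ▸ hv1)
        · exact Set.disjoint_left.mp hd2 hvp hv2
      · rintro ⟨hvN, hvg⟩
        have hv' : v ∈ ⋃₀ T'.H := by
          rw [Hun]
          exact ⟨hvN, fun hv0 => hvg (Or.inl (hh0 ▸ hv0))⟩
        obtain ⟨p, hpH, hvp⟩ := hv'
        refine ⟨p, ⟨hpH, ?_⟩, hvp⟩
        simp only [Set.mem_insert_iff, Set.mem_singleton_iff]
        rintro (rfl | rfl)
        · exact hg1H hpH
        · exact hvg (Or.inr hvp)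
  · -- h0_root
    intro _
    obtain ⟨x, hx, hroot⟩ := T'.h0_root (by rw [hh0]; exact g1ne)
    exact ⟨x, Or.inl (hh0 ▸ hx), hroot⟩
  · -- hyper_parent
    intro h hh x hx y hy hlt z hz
    rcases hh.1 with h' | h'
    · exact h' ▸ hgood.1 x (h' ▸ hx) y (h' ▸ hy) hlt z hz
    · exact T'.hyper_parent h ⟨Or.inr h'.1, fun he => (Hne h h'.1).ne_empty (by simpa using he)⟩
        x hx y hy hlt z hz
  · -- hyper_sibling
    intro h hh x1 hx1 y1 hy1 hd x2 y2 hx2 hy2 hne12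
    rcases hh.1 with h' | h'
    · subst h'
      exact hgood.2 x1 hx1 y1 hy1 hd x2 y2 hx2 hy2 hne12
    · exact T'.hyper_sibling h ⟨Or.inr h'.1, fun he => (Hne h h'.1).ne_empty (by simpa using he)⟩
        x1 hx1 y1 hy1 hd x2 y2 hx2 hy2 hne12
  · -- IsMerge
    exact ⟨rfl, rfl, rfl, fun _ => ⟨rfl, rfl⟩, fun hcon => absurd (Or.inl hh0) hcon⟩
  · -- hyperedges characterization
    ext s
    simp only [LionsForest.hyperedges, Set.mem_diff, Set.mem_insert_iff,
      Set.mem_singleton_iff, hh0]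
    constructor
    · rintro ⟨hs1, hs2⟩
      rcases hs1 with hs | ⟨hsH, hsne⟩
      · exact Or.inl hs
      · exact Or.inr ⟨⟨Or.inr hsH, hs2⟩, hsne⟩
    · rintro (rfl | ⟨⟨hs, hne'⟩, hsne⟩)
      · exact ⟨Or.inl rfl, hUne⟩
      · rcases hs with rfl | hs
        · exact absurd (Or.inl rfl) hsne
        · exact ⟨Or.inr ⟨hs, hsne⟩, hne'⟩

lemma merge_not_h0 (T' : LionsForest V d) {g1 g2 : Set V} (h : dualAdj T' g1 g2)
    (hh1 : T'.h0 ≠ g1) (hh2 : T'.h0 ≠ g2) :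
    ∃ T'' : LionsForest V d, IsMerge T' g1 g2 T'' ∧ T''.depth = T'.depth ∧
      T''.hyperedges = insert (g1 ∪ g2) (T'.hyperedges \ {g1, g2}) := by
  obtain ⟨hg1m, hg2m, hne, hp, hs⟩ := h
  have hgood : Good T' (g1 ∪ g2) := ⟨hp, hs⟩
  have g1ne : g1.Nonempty := T'.hyperedge_nonempty hg1m
  have g2ne : g2.Nonempty := T'.hyperedge_nonempty hg2m
  have hUne : g1 ∪ g2 ≠ ∅ := (g1ne.mono Set.subset_union_left).ne_empty
  obtain ⟨Hne, Hsub, Hdisj, Hun⟩ := T'.H_partition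
  have hg1H : g1 ∈ T'.H := by
    rcases hg1m.1 with h' | h'
    · exact absurd h'.symm hh1
    · exact h'
  have hg2H : g2 ∈ T'.H := by
    rcases hg2m.1 with h' | h'
    · exact absurd h'.symm hh2
    · exact h'
  refine ⟨⟨T'.N, T'.E, T'.h0, T'.H \ {g1, g2} ∪ {g1 ∪ g2}, T'.L, T'.depth, T'.finite_N,
    T'.nonempty_N, T'.mem_of_edge, T'.edge_unique, T'.h0_subset,
    ?_, T'.depth_root, T'.depth_edge, T'.h0_root, ?_, ?_⟩, ?_, rfl, ?_⟩
  · -- partition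
    refine ⟨?_, ?_, ?_, ?_⟩
    · rintro p (hp | hp)
      · exact Hne p hp.1
      · rw [Set.mem_singleton_iff] at hp
        exact hp ▸ g1ne.mono Set.subset_union_left
    · rintro p (hp | hp)
      · exact Hsub p hp.1
      · rw [Set.mem_singleton_iff] at hp
        exact hp ▸ Set.union_subset (Hsub g1 hg1H) (Hsub g2 hg2H)
    · rintro p (hp | hp) q (hq | hq) hpq
      · exact Hdisj hp.1 hq.1 hpq
      · rw [Set.mem_singleton_iff] at hq
        subst hq
        have hpne : p ≠ g1 ∧ p ≠ g2 := by
          have := hp.2; simp only [Set.mem_insert_iff, Set.mem_singleton_iff] at this; tauto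
        exact Set.disjoint_union_right.mpr
          ⟨Hdisj hp.1 hg1H hpne.1, Hdisj hp.1 hg2H hpne.2⟩
      · rw [Set.mem_singleton_iff] at hp
        subst hp
        have hqne : q ≠ g1 ∧ q ≠ g2 := by
          have := hq.2; simp only [Set.mem_insert_iff, Set.mem_singleton_iff] at this; tauto
        exact (Set.disjoint_union_right.mpr
          ⟨Hdisj hq.1 hg1H hqne.1, Hdisj hq.1 hg2H hqne.2⟩).symm
      · rw [Set.mem_singleton_iff] at hp hq
        exact absurd (hp.trans hq.symm) hpq
    · ext v
      simp only [Set.mem_sUnion]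
      constructor
      · rintro ⟨p, hp | hp, hvp⟩
        · rw [← Hun]; exact ⟨p, hp.1, hvp⟩
        · rw [Set.mem_singleton_iff] at hp
          subst hp
          rw [← Hun]
          rcases hvp with hv | hv
          · exact ⟨g1, hg1H, hv⟩
          · exact ⟨g2, hg2H, hv⟩
      · intro hv
        rw [← Hun] at hv
        obtain ⟨p, hpH, hvp⟩ := hv
        by_cases hp1 : p = g1
        · exact ⟨g1 ∪ g2, Or.inr rfl, Or.inl (hp1 ▸ hvp)⟩
        · by_cases hp2 : p = g2
          · exact ⟨g1 ∪ g2, Or.inr rfl, Or.inr (hp2 ▸ hvp)⟩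
          · refine ⟨p, Or.inl ⟨hpH, ?_⟩, hvp⟩
            simp only [Set.mem_insert_iff, Set.mem_singleton_iff]
            tauto
  · -- hyper_parent
    intro h hh x hx y hy hlt z hz
    rcases hh.1 with h' | h' | h'
    · exact T'.hyper_parent h ⟨Or.inl h', hh.2⟩ x hx y hy hlt z hz
    · exact T'.hyper_parent h ⟨Or.inr h'.1, hh.2⟩ x hx y hy hlt z hz
    · rw [Set.mem_singleton_iff] at h'
      subst h'
      exact hgood.1 x hx y hy hlt z hz
  · -- hyper_sibling
    intro h hh x1 hx1 y1 hy1 hd x2 y2 hx2 hy2 hne12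
    rcases hh.1 with h' | h' | h'
    · exact T'.hyper_sibling h ⟨Or.inl h', hh.2⟩ x1 hx1 y1 hy1 hd x2 y2 hx2 hy2 hne12
    · exact T'.hyper_sibling h ⟨Or.inr h'.1, hh.2⟩ x1 hx1 y1 hy1 hd x2 y2 hx2 hy2 hne12
    · rw [Set.mem_singleton_iff] at h'
      subst h'
      exact hgood.2 x1 hx1 y1 hy1 hd x2 y2 hx2 hy2 hne12
  · -- IsMerge
    exact ⟨rfl, rfl, rfl, fun hcon => absurd hcon (by tauto), fun _ => ⟨rfl, rfl⟩⟩
  · -- hyperedges characterization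
    have hEmp : ∀ p ∈ T'.H, p ≠ ∅ := fun p hp => (Hne p hp).ne_empty
    ext s
    simp only [LionsForest.hyperedges, Set.mem_diff, Set.mem_insert_iff,
      Set.mem_singleton_iff, Set.mem_union]
    constructor
    · rintro ⟨hs1, hs2⟩
      rcases hs1 with rfl | ⟨hsH, hsne⟩ | rfl
      · exact Or.inr ⟨⟨Or.inl rfl, hs2⟩, by tauto⟩
      · exact Or.inr ⟨⟨Or.inr hsH, hs2⟩, hsne⟩
      · exact Or.inl rfl
    · rintro (rfl | ⟨⟨hs, hne'⟩, hsne⟩)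
      · exact ⟨Or.inr (Or.inr rfl), hUne⟩
      · rcases hs with rfl | hs
        · exact ⟨Or.inl rfl, hne'⟩
        · exact ⟨Or.inr (Or.inl ⟨hs, hsne⟩), hne'⟩

lemma exists_merge (T' : LionsForest V d) {g1 g2 : Set V} (h : dualAdj T' g1 g2) :
    ∃ T'' : LionsForest V d, IsMerge T' g1 g2 T'' ∧ T''.depth = T'.depth ∧
      T''.hyperedges = insert (g1 ∪ g2) (T'.hyperedges \ {g1, g2}) := by
  by_cases h1 : T'.h0 = g1
  · exact merge_h0 T' h h1
  · by_cases h2 : T'.h0 = g2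
    · obtain ⟨T'', hm, hd, hh⟩ := merge_h0 T' h.symm h2
      refine ⟨T'', ⟨hm.1, hm.2.1, hm.2.2.1, ?_, ?_⟩, hd, ?_⟩
      · intro _
        obtain ⟨ha, hb⟩ := hm.2.2.2.1 (Or.inl h2)
        exact ⟨by rw [ha, Set.union_comm], by rw [hb, Set.pair_comm]⟩
      · intro hcon
        exact absurd (Or.inr h2) hcon
      · rw [hh, Set.union_comm g2 g1, Set.pair_comm g2 g1]
    · exact merge_not_h0 T' h h1 h2

end Merge
section Main

variable {V : Type*} {d : ℕ}

/-- The dual graph using only the first `j` of the given edges. -/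
def Gj {n : ℕ} (e : Fin n → Set V × Set V) (j : ℕ) : SimpleGraph (Set V) :=
  SimpleGraph.fromRel fun a b => ∃ i : Fin n, (i : ℕ) < j ∧ a = (e i).1 ∧ b = (e i).2

lemma Gj_mono {n : ℕ} (e : Fin n → Set V × Set V) {j j' : ℕ} (h : j ≤ j') :
    Gj e j ≤ Gj e j' := by
  intro a b hab
  rw [Gj, SimpleGraph.fromRel_adj] at hab ⊢
  refine ⟨hab.1, ?_⟩
  rcases hab.2 with ⟨i, hi, h1, h2⟩ | ⟨i, hi, h1, h2⟩
  · exact Or.inl ⟨i, by omega, h1, h2⟩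
  · exact Or.inr ⟨i, by omega, h1, h2⟩

lemma not_reach {n : ℕ} (e : Fin n → Set V × Set V)
    {T : LionsForest V d}
    (hadj : ∀ j, dualAdj T (e j).1 (e j).2)
    (hdist : ∀ j k, j ≠ k →
      ¬((e j).1 = (e k).1 ∧ (e j).2 = (e k).2) ∧
      ¬((e j).1 = (e k).2 ∧ (e j).2 = (e k).1))
    (hacyc : (SimpleGraph.fromRel fun a b : Set V =>
        ∃ j, a = (e j).1 ∧ b = (e j).2).IsAcyclic)
    (j : Fin n) : ¬ (Gj e (j : ℕ)).Reachable (e j).1 (e j).2 := by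
  intro hr
  have hne : (e j).1 ≠ (e j).2 := (hadj j).2.2.1
  have hAdjfull : (SimpleGraph.fromRel fun a b : Set V =>
      ∃ j, a = (e j).1 ∧ b = (e j).2).Adj (e j).1 (e j).2 :=
    (SimpleGraph.fromRel_adj _ _ _).mpr ⟨hne, Or.inl ⟨j, rfl, rfl⟩⟩
  have hbridge := (SimpleGraph.isAcyclic_iff_forall_adj_isBridge.mp hacyc) hAdjfull
  rw [SimpleGraph.isBridge_iff] at hbridge
  apply hbridge
  refine hr.mono ?_
  intro a b hab
  rw [Gj, SimpleGraph.fromRel_adj] at hab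
  obtain ⟨hneab, hor⟩ := hab
  rw [SimpleGraph.deleteEdges_adj]
  constructor
  · rw [SimpleGraph.fromRel_adj]
    refine ⟨hneab, ?_⟩
    rcases hor with ⟨i, hi, h1, h2⟩ | ⟨i, hi, h1, h2⟩
    · exact Or.inl ⟨i, h1, h2⟩
    · exact Or.inr ⟨i, h1, h2⟩
  · intro hmem
    rw [Set.mem_singleton_iff, Sym2.eq_iff] at hmem
    rcases hor with ⟨i, hi, rfl, rfl⟩ | ⟨i, hi, rfl, rfl⟩ <;>
      have hij : i ≠ j := fun h => by subst h; omega
    · obtain hd := hdist i j hij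
      rcases hmem with ⟨ha, hb⟩ | ⟨ha, hb⟩
      · exact hd.1 ⟨ha, hb⟩
      · exact hd.2 ⟨ha, hb⟩
    · obtain hd := hdist i j hij
      rcases hmem with ⟨ha, hb⟩ | ⟨ha, hb⟩
      · exact hd.2 ⟨hb, ha⟩
      · exact hd.1 ⟨hb, ha⟩

/-- The property of a single merging step. -/
def StepProp {n : ℕ} (e : Fin n → Set V × Set V) (j : ℕ) (T' T'' : LionsForest V d) : Prop :=
  ∃ hj : j < n, ∃ g1 g2 : Set V,
    g1 ∈ T'.hyperedges ∧ (e ⟨j, hj⟩).1 ⊆ g1 ∧ g2 ∈ T'.hyperedges ∧ (e ⟨j, hj⟩).2 ⊆ g2 ∧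
    g1 ≠ g2 ∧ dualAdj T' g1 g2 ∧ IsMerge T' g1 g2 T'' ∧ T''.depth = T'.depth ∧
    T''.hyperedges = insert (g1 ∪ g2) (T'.hyperedges \ {g1, g2})

/-- The inductive invariant along the chain of merges. -/
def MergeInv (T : LionsForest V d) {n : ℕ} (e : Fin n → Set V × Set V) (j : ℕ)
    (T' : LionsForest V d) : Prop :=
  T'.N = T.N ∧ T'.E = T.E ∧ T'.depth = T.depth ∧
  (∀ h ∈ T.hyperedges, ∃ g ∈ T'.hyperedges, h ⊆ g) ∧
  (∀ h ∈ T.hyperedges, ∀ h' ∈ T.hyperedges, ∀ g ∈ T'.hyperedges, h ⊆ g → h' ⊆ g →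
    (Gj e j).Reachable h h')

lemma step_exists {n : ℕ} (T : LionsForest V d) (e : Fin n → Set V × Set V)
    (hadj : ∀ j, dualAdj T (e j).1 (e j).2)
    (hdist : ∀ j k, j ≠ k →
      ¬((e j).1 = (e k).1 ∧ (e j).2 = (e k).2) ∧
      ¬((e j).1 = (e k).2 ∧ (e j).2 = (e k).1))
    (hacyc : (SimpleGraph.fromRel fun a b : Set V =>
        ∃ j, a = (e j).1 ∧ b = (e j).2).IsAcyclic)
    (j : Fin n) (T' : LionsForest V d) (hI : MergeInv T e (j : ℕ) T') :
    ∃ T'', StepProp e (j : ℕ) T' T'' := by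
  obtain ⟨hN, hE, hdep, hcont, hreach⟩ := hI
  have had := hadj j
  have h1m : (e j).1 ∈ T.hyperedges := had.1
  have h2m : (e j).2 ∈ T.hyperedges := had.2.1
  obtain ⟨g1, hg1, hsub1⟩ := hcont _ h1m
  obtain ⟨g2, hg2, hsub2⟩ := hcont _ h2m
  have hne : g1 ≠ g2 := by
    rintro rfl
    exact not_reach e hadj hdist hacyc j (hreach _ h1m _ h2m g1 hg1 hsub1 hsub2)
  have hgood : Good T' (g1 ∪ g2) :=
    good_union (T'.good_hyperedge hg1) (T'.good_hyperedge hg2)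
      (T'.hyperedge_subset hg1) (T'.hyperedge_subset hg2)
      (T'.hyperedge_disjoint hg1 hg2 hne) hsub1 hsub2
      (T.hyperedge_nonempty h1m) (T.hyperedge_nonempty h2m)
      (good_congr hE hdep had.good)
  have hda : dualAdj T' g1 g2 := ⟨hg1, hg2, hne, hgood.1, hgood.2⟩
  obtain ⟨T'', hmerge, hd, hh⟩ := exists_merge T' hda
  exact ⟨T'', j.isLt, g1, g2, hg1, hsub1, hg2, hsub2, hne, hda, hmerge, hd, hh⟩

lemma inv_step {n : ℕ} (T : LionsForest V d) (e : Fin n → Set V × Set V)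
    (hadj : ∀ j, dualAdj T (e j).1 (e j).2)
    (j : ℕ) (T' T'' : LionsForest V d)
    (hI : MergeInv T e j T') (hS : StepProp e j T' T'') : MergeInv T e (j + 1) T'' := by
  obtain ⟨hNeq, hE, hdep, hcont, hreach⟩ := hI
  obtain ⟨hj, g1, g2, hg1, hsub1, hg2, hsub2, hne, hda, hmerge, hd, hh⟩ := hS
  have hmono := Gj_mono e (Nat.le_succ j)
  refine ⟨hmerge.1.trans hNeq, hmerge.2.1.trans hE, hd.trans hdep, ?_, ?_⟩
  · intro h hhm
    obtain ⟨g, hg, hsub⟩ := hcont h hhm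
    by_cases hgx : g = g1 ∨ g = g2
    · refine ⟨g1 ∪ g2, by rw [hh]; exact Or.inl rfl, ?_⟩
      rcases hgx with rfl | rfl
      · exact hsub.trans Set.subset_union_left
      · exact hsub.trans Set.subset_union_right
    · exact ⟨g, by rw [hh]; exact Or.inr ⟨hg, by simpa using hgx⟩, hsub⟩
  · intro h hhm h' hh'm g hg hsg hsg'
    rw [hh] at hg
    have h1m : (e ⟨j, hj⟩).1 ∈ T.hyperedges := (hadj ⟨j, hj⟩).1
    have h2m : (e ⟨j, hj⟩).2 ∈ T.hyperedges := (hadj ⟨j, hj⟩).2.1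
    rcases hg with rfl | ⟨hgold, hgne⟩
    · -- g = g1 ∪ g2
      have hloc : ∀ a ∈ T.hyperedges, a ⊆ g1 ∪ g2 →
          (a ⊆ g1) ∨ (a ⊆ g2) := by
        intro a ham hsu
        obtain ⟨ga, hga, hsa⟩ := hcont a ham
        obtain ⟨v, hv⟩ := T.hyperedge_nonempty ham
        rcases hsu hv with hv1 | hv2
        · left
          have : ga = g1 := by
            by_contra hne'
            exact Set.disjoint_left.mp (T'.hyperedge_disjoint hga hg1 hne') (hsa hv) hv1
          exact this ▸ hsa
        · right
          have : ga = g2 := by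
            by_contra hne'
            exact Set.disjoint_left.mp (T'.hyperedge_disjoint hga hg2 hne') (hsa hv) hv2
          exact this ▸ hsa
      have hadj12 : (Gj e (j + 1)).Adj (e ⟨j, hj⟩).1 (e ⟨j, hj⟩).2 := by
        rw [Gj, SimpleGraph.fromRel_adj]
        exact ⟨(hadj ⟨j, hj⟩).2.2.1, Or.inl ⟨⟨j, hj⟩, Nat.lt_succ_self j, rfl, rfl⟩⟩
      have hr1 : ∀ a ∈ T.hyperedges, a ⊆ g1 → (Gj e (j + 1)).Reachable a (e ⟨j, hj⟩).1 :=
        fun a ham hs => (hreach a ham _ h1m g1 hg1 hs hsub1).mono hmono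
      have hr2 : ∀ a ∈ T.hyperedges, a ⊆ g2 → (Gj e (j + 1)).Reachable a (e ⟨j, hj⟩).2 :=
        fun a ham hs => (hreach a ham _ h2m g2 hg2 hs hsub2).mono hmono
      rcases hloc h hhm hsg with hs | hs <;> rcases hloc h' hh'm hsg' with hs' | hs'
      · exact (hreach h hhm h' hh'm g1 hg1 hs hs').mono hmono
      · exact ((hr1 h hhm hs).trans hadj12.reachable).trans (hr2 h' hh'm hs').symm
      · exact ((hr2 h hhm hs).trans hadj12.symm.reachable).trans (hr1 h' hh'm hs').symm
      · exact (hreach h hhm h' hh'm g2 hg2 hs hs').mono hmono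
    · exact (hreach h hhm h' hh'm g hgold hsg hsg').mono hmono

open Classical in
/-- The chain of successively merged forests. -/
noncomputable def chainF (T : LionsForest V d) {n : ℕ} (e : Fin n → Set V × Set V) :
    ℕ → LionsForest V d
  | 0 => T
  | j + 1 =>
    if h : ∃ T'', StepProp e j (chainF T e j) T'' then h.choose else chainF T e j

end Main
/-- Given distinct edges `d₁, …, dₙ` of the dual Lions forest of `T` spanning no cycle, the
hyperedges can be merged successively: there are Lions forests `T⁽⁰⁾ = T, T⁽¹⁾, …, T⁽ⁿ⁾` such
that, at each step `j`, the hyperedges of `T⁽ʲ⁻¹⁾` containing the two ends of `dⱼ` are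
distinct, dual-adjacent in `T⁽ʲ⁻¹⁾`, and `T⁽ʲ⁾` is the corresponding merged Lions forest. -/
theorem stmt_7 {V : Type*} {d : ℕ} (T : LionsForest V d) (n : ℕ)
    (e : Fin n → Set V × Set V)
    (hadj : ∀ j, dualAdj T (e j).1 (e j).2)
    (hdist : ∀ j k, j ≠ k →
      ¬((e j).1 = (e k).1 ∧ (e j).2 = (e k).2) ∧
      ¬((e j).1 = (e k).2 ∧ (e j).2 = (e k).1))
    (hacyc : (SimpleGraph.fromRel fun a b : Set V =>
        ∃ j, a = (e j).1 ∧ b = (e j).2).IsAcyclic) :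
    ∃ Ts : ℕ → LionsForest V d, Ts 0 = T ∧
      ∀ j : Fin n, ∃ g1 g2 : Set V,
        g1 ∈ (Ts (j : ℕ)).hyperedges ∧ (e j).1 ⊆ g1 ∧
        g2 ∈ (Ts (j : ℕ)).hyperedges ∧ (e j).2 ⊆ g2 ∧
        g1 ≠ g2 ∧ dualAdj (Ts (j : ℕ)) g1 g2 ∧
        IsMerge (Ts (j : ℕ)) g1 g2 (Ts ((j : ℕ) + 1)) := by

  classical
  have hinv : ∀ j : ℕ, MergeInv T e j (chainF T e j) := by
    intro j
    induction j with
    | zero =>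
      refine ⟨rfl, rfl, rfl, fun h hh => ⟨h, hh, subset_rfl⟩, ?_⟩
      intro h hhm h' hh'm g hg hsg hsg'
      have h1 : h = g := T.hyperedge_eq_of_subset hhm hg hsg
      have h2 : h' = g := T.hyperedge_eq_of_subset hh'm hg hsg'
      rw [h1, h2]
    | succ j ih =>
      have hch : chainF T e (j + 1) =
          if h : ∃ T'', StepProp e j (chainF T e j) T'' then h.choose
          else chainF T e j := by
        simp only [chainF]
      rw [hch]
      by_cases hex : ∃ T'', StepProp e j (chainF T e j) T''
      · rw [dif_pos hex]
        exact inv_step T e hadj j _ _ ih hex.choose_spec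
      · rw [dif_neg hex]
        obtain ⟨a, b, c, d2, r⟩ := ih
        exact ⟨a, b, c, d2, fun h hhm h' hh'm g hg hsg hsg' =>
          (r h hhm h' hh'm g hg hsg hsg').mono (Gj_mono e (Nat.le_succ j))⟩
  refine ⟨chainF T e, rfl, fun j => ?_⟩
  have hex : ∃ T'', StepProp e (j : ℕ) (chainF T e (j : ℕ)) T'' :=
    step_exists T e hadj hdist hacyc j _ (hinv (j : ℕ))
  have hch : chainF T e ((j : ℕ) + 1) = hex.choose := by
    simp only [chainF]
    rw [dif_pos hex]
  have hsp := hex.choose_spec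
  rw [← hch] at hsp
  obtain ⟨hj, g1, g2, hg1, hs1, hg2, hs2, hne, hda, hm, -, -⟩ := hsp
  exact ⟨g1, g2, hg1, hs1, hg2, hs2, hne, hda, hm⟩
end

section
/- Let α, β > 0 and γ > min(α, β). For i = 1, …, n let p_i be integrability functionals and let q : F^{γ,α,β} → [1, ∞) be such that (p_i, q) is a dual pair of integrability functionals for every i. Let r > 1 be such that 1/r + Σ_{i=1}^n 1/p_i[1] ≤ 1. Define p : F0^{γ,α,β} → ℝ by p[1] = (1/r + Σ_{i=1}^n 1/p_i[1])^{-1} and, for T ∈ F^{γ,α,β}, p[T] = p[1]·q[T]/(q[T] − p[1]). Then p[T] ∈ (1, ∞) for every T ∈ F^{γ,α,β}, p is an integrability functional, and (p, q) is a dual pair of integrability functionals. -/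
/-- The grading `𝒢_{α,β}[T] = α·|h0| + β·|N \ h0|` of a Lions forest. -/
noncomputable def lfGrade {V : Type*} {d : ℕ} (α β : ℝ) (T : LionsForest V d) : ℝ :=
  α * T.h0.ncard + β * (T.N \ T.h0).ncard

/-- `T3 = T1 ⊛ T2` is the product of the Lions forests `T1` and `T2` (with disjoint node
sets). -/
def IsProduct {V : Type*} {d : ℕ} (T1 T2 T3 : LionsForest V d) : Prop :=
  Disjoint T1.N T2.N ∧
  T3.N = T1.N ∪ T2.N ∧ T3.E = T1.E ∪ T2.E ∧
  T3.h0 = T1.h0 ∪ T2.h0 ∧ T3.H = T1.H ∪ T2.H ∧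
  (∀ x ∈ T1.N, T3.L x = T1.L x) ∧ (∀ x ∈ T2.N, T3.L x = T2.L x)

/-- `T' = 𝓔[T]` is the integrated Lions forest: same nodes, edges and labels, empty
`0`-hyperedge, and partition `(H ∪ {h0}) \ {∅}`. -/
def IsInteg {V : Type*} {d : ℕ} (T T' : LionsForest V d) : Prop :=
  T'.N = T.N ∧ T'.E = T.E ∧ T'.h0 = ∅ ∧
  T'.H = insert T.h0 T.H \ {(∅ : Set V)} ∧
  (∀ x ∈ T.N, T'.L x = T.L x)

/-- An admissible cut of a Lions forest: a set `c ⊆ E` of edges such that every directed path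
from a node towards its root contains at most one edge of `c`. -/
def IsAdmissibleCut {V : Type*} {d : ℕ} (T : LionsForest V d) (c : Set (V × V)) : Prop :=
  c ⊆ T.E ∧ ∀ e₁ ∈ c, ∀ e₂ ∈ c, e₁ ≠ e₂ →
    ¬ Relation.ReflTransGen (fun a b : V => (a, b) ∈ T.E) e₁.2 e₂.1

/-- The nodes joined to a root by a directed path using no edge of the cut `c`. -/
def cutRootSet {V : Type*} {d : ℕ} (T : LionsForest V d) (c : Set (V × V)) : Set V :=
  {x ∈ T.N | ∃ r, (∀ z, (r, z) ∉ T.E) ∧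
    Relation.ReflTransGen (fun a b : V => (a, b) ∈ T.E ∧ (a, b) ∉ c) x r}

/-- `R` is the root of the cut `c` of `T`: the restriction of `T` to `cutRootSet T c`. -/
def IsCutRoot {V : Type*} {d : ℕ} (T : LionsForest V d) (c : Set (V × V))
    (R : LionsForest V d) : Prop :=
  R.N = cutRootSet T c ∧
  R.E = {e ∈ T.E | e.1 ∈ cutRootSet T c ∧ e.2 ∈ cutRootSet T c} ∧
  R.h0 = T.h0 ∩ cutRootSet T c ∧
  R.H = ((fun h => h ∩ cutRootSet T c) '' T.H) \ {∅} ∧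
  (∀ x ∈ cutRootSet T c, R.L x = T.L x)

/-- `Pr` is the prune of the cut `c` of `T`: the restriction of `T` to the complement of
`cutRootSet T c`, with the edges of `c` removed. -/
def IsCutPrune {V : Type*} {d : ℕ} (T : LionsForest V d) (c : Set (V × V))
    (Pr : LionsForest V d) : Prop :=
  Pr.N = T.N \ cutRootSet T c ∧
  Pr.E = {e ∈ T.E | e.1 ∈ T.N \ cutRootSet T c ∧ e.2 ∈ T.N \ cutRootSet T c} \ c ∧
  Pr.h0 = T.h0 ∩ (T.N \ cutRootSet T c) ∧
  Pr.H = ((fun h => h ∩ (T.N \ cutRootSet T c)) '' T.H) \ {∅} ∧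
  (∀ x ∈ T.N \ cutRootSet T c, Pr.L x = T.L x)

/-- `T1` admits an admissible cut with (nonempty) prune `T2` and (nonempty) root `T3`. -/
def IsCutOf {V : Type*} {d : ℕ} (T1 T2 T3 : LionsForest V d) : Prop :=
  ∃ c : Set (V × V), IsAdmissibleCut T1 c ∧ IsCutPrune T1 c T2 ∧ IsCutRoot T1 c T3

/-- `(p, q)` (with `p1 = p[𝟏]` the value of `p` at the empty forest) is a dual pair of
integrability functionals on `F^{γ,α,β} = {T : 𝒢_{α,β}[T] ≤ γ}`. -/
def IsDualPair {V : Type*} {d : ℕ} (γ α β : ℝ) (p1 : ℝ)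
    (p q : LionsForest V d → ℝ) : Prop :=
  (1 ≤ p1) ∧
  (∀ T : LionsForest V d, lfGrade α β T ≤ γ → 1 ≤ p T) ∧
  (∀ T : LionsForest V d, lfGrade α β T ≤ γ → 1 ≤ q T) ∧
  (∀ T : LionsForest V d, lfGrade α β T ≤ γ → 1 / p1 = 1 / p T + 1 / q T) ∧
  (∀ T1 T2 T3 : LionsForest V d, lfGrade α β T1 ≤ γ → IsCutOf T1 T2 T3 →
    1 / q T2 + 1 / q T3 ≤ 1 / q T1) ∧
  (∀ T T' : LionsForest V d, lfGrade α β T ≤ γ → lfGrade α β T' ≤ γ → IsInteg T T' →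
    q T' = q T) ∧
  (∀ T1 T2 T3 : LionsForest V d, lfGrade α β T1 ≤ γ → lfGrade α β T2 ≤ γ →
    lfGrade α β T3 ≤ γ → IsProduct T1 T2 T3 → 1 / q T3 = 1 / q T1 + 1 / q T2)

/-- Given integrability functionals `(p1 i, pf i)` for `i = 1, …, n`, each forming a dual
pair with the same dual integrability functional `q`, and `r > 1` with
`1/r + Σᵢ 1/p1 i ≤ 1`, the functional `p` defined by `p[𝟏] = (1/r + Σᵢ 1/(p1 i))⁻¹` and
`p[T] = p[𝟏]·q[T]/(q[T] − p[𝟏])` takes values in `(1, ∞)` on `F^{γ,α,β}`, is an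
integrability functional, and `(p, q)` is a dual pair of integrability functionals. -/
theorem stmt_9 {V : Type*} {d : ℕ} (γ α β : ℝ) (hα : 0 < α) (hβ : 0 < β)
    (hγ : min α β < γ) (n : ℕ) (hn : 1 ≤ n)
    (p1 : Fin n → ℝ) (pf : Fin n → (LionsForest V d → ℝ))
    (q : LionsForest V d → ℝ)
    (hdual : ∀ i, IsDualPair γ α β (p1 i) (pf i) q)
    (r : ℝ) (hr : 1 < r)
    (hsum : 1 / r + ∑ i, 1 / p1 i ≤ 1) :
    (∀ T : LionsForest V d, lfGrade α β T ≤ γ →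
      1 < (1 / r + ∑ i, 1 / p1 i)⁻¹ * q T / (q T - (1 / r + ∑ i, 1 / p1 i)⁻¹)) ∧
    IsDualPair γ α β ((1 / r + ∑ i, 1 / p1 i)⁻¹)
      (fun T => (1 / r + ∑ i, 1 / p1 i)⁻¹ * q T / (q T - (1 / r + ∑ i, 1 / p1 i)⁻¹)) q := by
  set s : ℝ := 1 / r + ∑ i, 1 / p1 i with hs_def
  have hr0 : (0:ℝ) < r := lt_trans one_pos hr
  have hp1pos : ∀ i, (0:ℝ) < p1 i := fun i => lt_of_lt_of_le one_pos (hdual i).1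
  have hsumnn : (0:ℝ) ≤ ∑ i, 1 / p1 i :=
    Finset.sum_nonneg fun i _ => le_of_lt (one_div_pos.2 (hp1pos i))
  have hs_pos : 0 < s := by
    have h1 : (0:ℝ) < 1 / r := by positivity
    rw [hs_def]; linarith
  have hs_le : s ≤ 1 := hsum
  have hP1 : 1 ≤ s⁻¹ := (one_le_inv₀ hs_pos).2 hs_le
  have i0 : Fin n := ⟨0, hn⟩
  -- key: for any admissible T, s⁻¹ < q T
  have key : ∀ T : LionsForest V d, lfGrade α β T ≤ γ → s⁻¹ < q T := by
    intro T hT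
    have hq1 : 1 ≤ q T := (hdual i0).2.2.1 T hT
    have hpf1 : 1 ≤ pf i0 T := (hdual i0).2.1 T hT
    have heq : 1 / p1 i0 = 1 / pf i0 T + 1 / q T := (hdual i0).2.2.2.1 T hT
    have hle : 1 / p1 i0 ≤ ∑ i, 1 / p1 i :=
      Finset.single_le_sum (fun i _ => le_of_lt (one_div_pos.2 (hp1pos i)))
        (Finset.mem_univ i0)
    have hqlt : 1 / q T < s := by
      have hpfpos : (0:ℝ) < 1 / pf i0 T := by positivity
      have h1r : (0:ℝ) < 1 / r := by positivity
      have : 1 / q T < 1 / p1 i0 := by linarith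
      linarith
    have hq0 : (0:ℝ) < q T := lt_of_lt_of_le one_pos hq1
    have := inv_strictAnti₀ (by positivity : (0:ℝ) < 1 / q T) hqlt
    rwa [one_div, inv_inv] at this
  have hgt1 : ∀ T : LionsForest V d, lfGrade α β T ≤ γ →
      1 < s⁻¹ * q T / (q T - s⁻¹) := by
    intro T hT
    have hq1 : 1 ≤ q T := (hdual i0).2.2.1 T hT
    have hk := key T hT
    have hd : 0 < q T - s⁻¹ := by linarith
    rw [lt_div_iff₀ hd]
    nlinarith
  refine ⟨hgt1, hP1, fun T hT => le_of_lt (hgt1 T hT), fun T hT => (hdual i0).2.2.1 T hT,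
    ?_, (hdual i0).2.2.2.2.1, (hdual i0).2.2.2.2.2.1, (hdual i0).2.2.2.2.2.2⟩
  intro T hT
  have hq1 : 1 ≤ q T := (hdual i0).2.2.1 T hT
  have hk := key T hT
  have hq0 : q T ≠ 0 := ne_of_gt (lt_of_lt_of_le one_pos hq1)
  have hs0 : s ≠ 0 := ne_of_gt hs_pos
  have hd : q T - s⁻¹ ≠ 0 := by
    have : 0 < q T - s⁻¹ := by linarith
    exact ne_of_gt this
  field_simp
  ring
end

section
/- There exist Borel measurable functions φ_0, …, φ_{ℓ−1}, with φ_j : S^j → ℝ symmetric under permutations of its arguments (φ_0 being a constant), such that for every proper subset J ⊊ {1, …, ℓ}: E[ f(X1, …, Xℓ) − Σ_{k=0}^{ℓ−1} Σ_{I ⊆ {1, …, ℓ}, |I| = k} φ_k(X_I) | σ(X_j : j ∈ J) ] = 0 almost surely. Moreover, one may take φ_j(x1, …, xj) = (−1)^{ℓ−1−j} ∫_{S^{ℓ−j}} f(x1, …, xℓ) dμ(x_{j+1})⋯dμ(xℓ). -/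
open MeasureTheory ProbabilityTheory Filter

section auxiliary

lemma aux_pi_map_comp {S : Type*} [MeasurableSpace S] {ι κ : Type*} [Fintype ι] [Fintype κ]
    (μ : Measure S) [IsProbabilityMeasure μ] {g : κ → ι} (hg : Function.Injective g) :
    MeasurePreserving (fun (x : ι → S) (k : κ) => x (g k))
      (Measure.pi fun _ : ι => μ) (Measure.pi fun _ : κ => μ) := by
  have hmeas : Measurable (fun (x : ι → S) (k : κ) => x (g k)) :=
    measurable_pi_lambda _ fun k => measurable_pi_apply (g k)
  refine ⟨hmeas, ?_⟩
  refine (Measure.pi_eq fun s hs => ?_).symm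
  classical
  set t : ι → Set S := fun i => ⋂ (k : κ) (_ : g k = i), s k with ht
  have htm : ∀ i, MeasurableSet (t i) := fun i =>
    MeasurableSet.iInter fun k => MeasurableSet.iInter fun h => hs k
  have hpre : (fun (x : ι → S) (k : κ) => x (g k)) ⁻¹' (Set.univ.pi s) = Set.univ.pi t := by
    ext x
    simp only [Set.mem_preimage, Set.mem_pi, Set.mem_univ, forall_true_left, ht,
      Set.mem_iInter]
    constructor
    · intro h i k hk; subst hk; exact h k
    · intro h k; exact h (g k) k rfl
  rw [Measure.map_apply hmeas (MeasurableSet.univ_pi hs), hpre, Measure.pi_pi]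
  have h1 : ∀ i ∉ Finset.univ.image g, μ (t i) = 1 := by
    intro i hi
    have : t i = Set.univ := by
      refine Set.eq_univ_of_forall fun x => ?_
      simp only [ht, Set.mem_iInter]
      intro k hk
      exact absurd (Finset.mem_image.2 ⟨k, Finset.mem_univ k, hk⟩) hi
    rw [this]; exact measure_univ
  have h2 : ∀ k : κ, t (g k) = s k := by
    intro k
    apply Set.Subset.antisymm
    · intro x hx
      simp only [ht, Set.mem_iInter] at hx
      exact hx k rfl
    · intro x hx
      simp only [ht, Set.mem_iInter]
      intro k' hk'
      exact (hg hk') ▸ hx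
  calc ∏ i, μ (t i) = ∏ i ∈ Finset.univ.image g, μ (t i) := by
        refine (Finset.prod_subset (Finset.subset_univ _) ?_).symm
        intro i _ hi; exact h1 i hi
    _ = ∏ k, μ (t (g k)) := Finset.prod_image fun k _ k' _ h => hg h
    _ = ∏ k, μ (s k) := by simp_rw [h2]

lemma happ_meas {S : Type*} [MeasurableSpace S] {j n : ℕ} (q : Fin (j + n)) :
    Measurable (fun p : (Fin j → S) × (Fin n → S) => Fin.append p.1 p.2 q) := by
  refine Fin.addCases (motive := fun q => Measurable
    (fun p : (Fin j → S) × (Fin n → S) => Fin.append p.1 p.2 q)) (fun m => ?_) (fun m => ?_) q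
  · simp only [Fin.append_left]
    exact (measurable_pi_apply m).comp measurable_fst
  · simp only [Fin.append_right]
    exact (measurable_pi_apply m).comp measurable_snd

lemma aux_comb {ℓ : ℕ} (hℓ : 1 ≤ ℓ) (J : Finset (Fin ℓ)) (hJ : J ≠ Finset.univ)
    (Θ : Finset (Fin ℓ) → ℝ) :
    ∑ I ∈ Finset.univ.filter (fun I : Finset (Fin ℓ) => I.card < ℓ),
      (-1 : ℝ) ^ (ℓ - 1 - I.card) * Θ (I ∩ J) = Θ J := by
  classical
  have hlt : ∀ I : Finset (Fin ℓ), (I.card < ℓ ↔ I ≠ Finset.univ) := by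
    intro I
    have := I.card_lt_iff_ne_univ
    rwa [Fintype.card_fin] at this
  have hfilter : Finset.univ.filter (fun I : Finset (Fin ℓ) => I.card < ℓ)
      = Finset.univ.erase Finset.univ := by
    rw [← Finset.filter_ne']
    exact Finset.filter_congr fun I _ => hlt I
  have hsign : ∀ I : Finset (Fin ℓ), I ≠ Finset.univ →
      (-1 : ℝ) ^ (ℓ - 1 - I.card) = (-1 : ℝ) ^ (ℓ - 1) * (-1 : ℝ) ^ I.card := by
    intro I hI
    have h1 : I.card ≤ ℓ - 1 := Nat.le_sub_one_of_lt ((hlt I).2 hI)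
    have h2 : ((-1 : ℝ)) ^ I.card * (-1 : ℝ) ^ I.card = 1 := by
      rw [← pow_add]; exact Even.neg_one_pow ⟨_, rfl⟩
    have h3 : (-1 : ℝ) ^ (ℓ - 1) = (-1 : ℝ) ^ (ℓ - 1 - I.card) * (-1 : ℝ) ^ I.card := by
      rw [← pow_add, Nat.sub_add_cancel h1]
    rw [h3, mul_assoc, h2, mul_one]
  rw [hfilter]
  rw [Finset.sum_congr rfl (fun I hI => by
    rw [hsign I (Finset.mem_erase.1 hI).1, mul_assoc]), ← Finset.mul_sum]
  have hfull : ∑ I : Finset (Fin ℓ), (-1 : ℝ) ^ I.card * Θ (I ∩ J) = 0 := by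
    have hbij : ∑ I : Finset (Fin ℓ), (-1 : ℝ) ^ I.card * Θ (I ∩ J)
        = ∑ p ∈ J.powerset ×ˢ Jᶜ.powerset,
            ((-1 : ℝ) ^ p.1.card * Θ p.1) * (-1 : ℝ) ^ p.2.card := by
      refine Finset.sum_nbij' (i := fun I => (I ∩ J, I \ J)) (j := fun p => p.1 ∪ p.2)
        ?_ ?_ ?_ ?_ ?_
      · intro I _
        simp only [Finset.mem_product, Finset.mem_powerset]
        refine ⟨Finset.inter_subset_right, fun x hx => ?_⟩
        simp only [Finset.mem_compl]
        exact (Finset.mem_sdiff.1 hx).2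
      · intro p hp; exact Finset.mem_univ _
      · intro I _
        show I ∩ J ∪ I \ J = I
        rw [Finset.union_comm, Finset.sdiff_union_inter]
      · intro p hp
        simp only [Finset.mem_product, Finset.mem_powerset] at hp
        obtain ⟨h1, h2⟩ := hp
        have hdisj : Disjoint p.2 J := by
          rw [Finset.disjoint_left]
          intro x hx hxJ
          have := h2 hx
          simp only [Finset.mem_compl] at this
          exact this hxJ
        have e1 : (p.1 ∪ p.2) ∩ J = p.1 := by
          rw [Finset.union_inter_distrib_right, Finset.inter_eq_left.2 h1,
            Finset.disjoint_iff_inter_eq_empty.1 hdisj, Finset.union_empty]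
        have e2 : (p.1 ∪ p.2) \ J = p.2 := by
          rw [Finset.union_sdiff_distrib, Finset.sdiff_eq_empty_iff_subset.2 h1,
            Finset.empty_union, Finset.sdiff_eq_self_of_disjoint hdisj]
        rw [Prod.ext_iff]; exact ⟨e1, e2⟩
      · intro I _
        have hc : (I ∩ J).card + (I \ J).card = I.card := Finset.card_inter_add_card_sdiff I J
        rw [← hc, pow_add]; ring
    rw [hbij, Finset.sum_product]
    have hinner : ∑ A ∈ Jᶜ.powerset, (-1 : ℝ) ^ A.card = 0 := by
      have h0 : Jᶜ.Nonempty := by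
        rw [Finset.nonempty_iff_ne_empty]
        intro h
        exact hJ (by rwa [Finset.compl_eq_empty_iff] at h)
      have := Finset.sum_powerset_neg_one_pow_card_of_nonempty h0
      exact_mod_cast congrArg (fun z : ℤ => (z : ℝ)) this
    rw [Finset.sum_congr rfl (fun T _ =>
      show (∑ y ∈ Jᶜ.powerset, ((-1 : ℝ) ^ T.card * Θ T) * (-1 : ℝ) ^ y.card)
          = 0 from by rw [← Finset.mul_sum, hinner, mul_zero]), Finset.sum_const_zero]
  have herase : ∑ I ∈ Finset.univ.erase Finset.univ, (-1 : ℝ) ^ I.card * Θ (I ∩ J)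
      = - ((-1 : ℝ) ^ ℓ * Θ J) := by
    have h := Finset.sum_erase_eq_sub
      (f := fun I : Finset (Fin ℓ) => (-1 : ℝ) ^ I.card * Θ (I ∩ J))
      (Finset.mem_univ (Finset.univ : Finset (Fin ℓ)))
    rw [h, hfull, zero_sub]
    simp [Finset.card_univ, Finset.univ_inter]
  rw [herase]
  have hpow : (-1 : ℝ) ^ ℓ = (-1 : ℝ) ^ (ℓ - 1) * (-1) := by
    rw [← pow_succ, Nat.sub_add_cancel hℓ]
  have hsq : (-1 : ℝ) ^ (ℓ - 1) * (-1 : ℝ) ^ (ℓ - 1) = 1 := by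
    rw [← pow_add]; exact Even.neg_one_pow ⟨ℓ - 1, rfl⟩
  rw [hpow]
  linear_combination Θ J * hsq


lemma aux_map_pi {Ω S : Type*} [MeasurableSpace Ω] [MeasurableSpace S]
    (P : Measure Ω) [IsProbabilityMeasure P] (μ : Measure S) [IsProbabilityMeasure μ]
    (X : ℕ → Ω → S) (hmeas : ∀ i, Measurable (X i))
    (hindep : iIndepFun (fun i : ℕ => X (i + 1)) P)
    (hident : ∀ i : ℕ, P.map (X (i + 1)) = μ) (ℓ : ℕ) :
    P.map (fun ω (k : Fin ℓ) => X ((k : ℕ) + 1) ω) = Measure.pi (fun _ : Fin ℓ => μ) := by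
  classical
  have hY : Measurable (fun ω (k : Fin ℓ) => X ((k : ℕ) + 1) ω) :=
    measurable_pi_lambda _ fun k => hmeas _
  refine (Measure.pi_eq fun s hs => ?_).symm
  rw [Measure.map_apply hY (MeasurableSet.univ_pi hs)]
  set sets : ℕ → Set S := fun n => if h : n < ℓ then s ⟨n, h⟩ else Set.univ with hsets
  have hsetsm : ∀ i, i ∈ Finset.range ℓ → MeasurableSet (sets i) := by
    intro i _
    by_cases h : i < ℓ
    · simp only [hsets, dif_pos h]; exact hs _
    · simp only [hsets, dif_neg h]; exact MeasurableSet.univ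
  have hpre : (fun ω (k : Fin ℓ) => X ((k : ℕ) + 1) ω) ⁻¹' Set.univ.pi s
      = ⋂ i ∈ Finset.range ℓ, (X (i + 1)) ⁻¹' sets i := by
    ext ω
    simp only [Set.mem_preimage, Set.mem_pi, Set.mem_univ, forall_true_left, Set.mem_iInter,
      Finset.mem_range]
    constructor
    · intro h i hi
      simp only [hsets, dif_pos hi]
      exact h ⟨i, hi⟩
    · intro h k
      have := h k.val k.isLt
      simpa only [hsets, dif_pos k.isLt, Fin.eta] using this
  rw [hpre, hindep.measure_inter_preimage_eq_mul (Finset.range ℓ) hsetsm]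
  rw [← Fin.prod_univ_eq_prod_range (fun i => P (X (i + 1) ⁻¹' sets i)) ℓ]
  refine Finset.prod_congr rfl fun k _ => ?_
  have h1 : sets k.val = s k := by simp only [hsets, dif_pos k.isLt, Fin.eta]
  rw [h1, ← hident k.val, Measure.map_apply (hmeas _) (hs k)]

variable {S : Type*} [MeasurableSpace S]

lemma aux_patch_meas (ℓ : ℕ) (I : Finset (Fin ℓ)) :
    Measurable (fun (p : (Fin ℓ → S) × (Fin ℓ → S)) (i : Fin ℓ) =>
      if i ∈ I then p.1 i else p.2 i) := by
  refine measurable_pi_lambda _ fun i => ?_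
  by_cases h : i ∈ I
  · simp only [if_pos h]; exact (measurable_pi_apply i).comp measurable_fst
  · simp only [if_neg h]; exact (measurable_pi_apply i).comp measurable_snd

lemma aux_patch_mp (μ : Measure S) [IsProbabilityMeasure μ] (ℓ : ℕ) (I : Finset (Fin ℓ)) :
    MeasurePreserving (fun (p : (Fin ℓ → S) × (Fin ℓ → S)) (i : Fin ℓ) =>
      if i ∈ I then p.1 i else p.2 i)
      ((Measure.pi fun _ : Fin ℓ => μ).prod (Measure.pi fun _ : Fin ℓ => μ))
      (Measure.pi fun _ : Fin ℓ => μ) := by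
  classical
  have hEs : MeasurePreserving
      (MeasurableEquiv.sumPiEquivProdPi (fun _ : Fin ℓ ⊕ Fin ℓ => S)).symm
      ((Measure.pi fun _ : Fin ℓ => μ).prod (Measure.pi fun _ : Fin ℓ => μ))
      (Measure.pi fun _ : Fin ℓ ⊕ Fin ℓ => μ) :=
    measurePreserving_sumPiEquivProdPi_symm (fun _ : Fin ℓ ⊕ Fin ℓ => μ)
  set g : Fin ℓ → Fin ℓ ⊕ Fin ℓ := fun i => if i ∈ I then Sum.inl i else Sum.inr i with hg
  have hginj : Function.Injective g := by
    intro a b hab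
    by_cases ha : a ∈ I <;> by_cases hb : b ∈ I <;>
      simp only [hg, if_pos, if_neg, ha, hb] at hab <;> simp_all
  have h1 := (aux_pi_map_comp μ hginj).comp hEs
  have h2 : (fun (x : Fin ℓ ⊕ Fin ℓ → S) (k : Fin ℓ) => x (g k))
      ∘ (MeasurableEquiv.sumPiEquivProdPi (fun _ : Fin ℓ ⊕ Fin ℓ => S)).symm
      = fun (p : (Fin ℓ → S) × (Fin ℓ → S)) (i : Fin ℓ) => if i ∈ I then p.1 i else p.2 i := by
    funext p
    funext i
    by_cases h : i ∈ I
    · simp [hg, if_pos h, MeasurableEquiv.sumPiEquivProdPi, Equiv.sumPiEquivProdPi]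
    · simp [hg, if_neg h, MeasurableEquiv.sumPiEquivProdPi, Equiv.sumPiEquivProdPi]
  rwa [h2] at h1

lemma aux_bridge (μ : Measure S) [IsProbabilityMeasure μ]
    (ℓ : ℕ) (f : (Fin ℓ → S) → ℝ) (hf : Measurable f)
    (hsymm : ∀ (σ : Equiv.Perm (Fin ℓ)) (x : Fin ℓ → S), f (x ∘ σ) = f x)
    (I : Finset (Fin ℓ)) (h : I.card ≤ ℓ) (z : Fin ℓ → S) :
    ∫ y : Fin (ℓ - I.card) → S,
        f (fun i => Fin.append (fun m => z (I.orderIsoOfFin rfl m)) y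
          (Fin.cast (Nat.add_sub_cancel' h).symm i))
        ∂(Measure.pi fun _ : Fin (ℓ - I.card) => μ)
      = ∫ y, f (fun i => if i ∈ I then z i else y i) ∂(Measure.pi fun _ : Fin ℓ => μ) := by
  classical
  set k := I.card with hk
  have hc : Iᶜ.card = ℓ - k := by
    rw [Finset.card_compl, Fintype.card_fin, hk]
  set ι : Fin k → Fin ℓ := fun m => (I.orderIsoOfFin rfl m : Fin ℓ) with hι
  set ιc : Fin (ℓ - k) → Fin ℓ := fun m => (Iᶜ.orderIsoOfFin hc m : Fin ℓ) with hιc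
  have hιmem : ∀ m, ι m ∈ I := fun m => (I.orderIsoOfFin rfl m).2
  have hιcmem : ∀ m, ιc m ∉ I := fun m => by
    have := (Iᶜ.orderIsoOfFin hc m).2
    exact Finset.mem_compl.1 this
  have hιcinj : Function.Injective ιc := fun a b hab => by
    have := Subtype.coe_injective hab
    exact (Iᶜ.orderIsoOfFin hc).injective this
  have hcast : ℓ = k + (ℓ - k) := (Nat.add_sub_cancel' h).symm
  -- the big integrand as function of the small vector
  set F : (Fin (ℓ - k) → S) → ℝ := fun y =>
    f (fun i => Fin.append (fun m => z (ι m)) y (Fin.cast hcast i)) with hF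
  have hFm : Measurable F :=
    hf.comp (measurable_pi_lambda _ fun i =>
      (happ_meas (Fin.cast hcast i)).comp (measurable_const.prodMk measurable_id))
  -- step 1 : replace the small-vector integral by a big-vector integral
  have hmapιc := (aux_pi_map_comp μ hιcinj).map_eq
  have step1 : ∫ y, F y ∂(Measure.pi fun _ : Fin (ℓ - k) => μ)
      = ∫ y : Fin ℓ → S, F (fun m => y (ιc m)) ∂(Measure.pi fun _ : Fin ℓ => μ) := by
    conv_lhs => rw [← hmapιc]
    rw [integral_map (measurable_pi_lambda _ fun m => measurable_pi_apply _).aemeasurable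
      (by rw [hmapιc]; exact hFm.aestronglyMeasurable)]
  -- step 2 : pointwise identification via a permutation
  have hbij : Function.Bijective (Sum.elim ι ιc) := by
    refine (Fintype.bijective_iff_injective_and_card _).2 ⟨?_, ?_⟩
    · intro a b hab
      rcases a with a | a <;> rcases b with b | b
      · simp only [Sum.elim_inl] at hab
        congr 1
        exact (I.orderIsoOfFin rfl).injective (Subtype.coe_injective hab)
      · simp only [Sum.elim_inl, Sum.elim_inr] at hab
        exact absurd (hab ▸ hιmem a) (hιcmem b)
      · simp only [Sum.elim_inl, Sum.elim_inr] at hab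
        exact absurd (hab.symm ▸ hιmem b) (hιcmem a)
      · simp only [Sum.elim_inr] at hab
        congr 1
        exact hιcinj hab
    · simp only [Fintype.card_sum, Fintype.card_fin]
      exact hcast.symm
  set σ : Equiv.Perm (Fin ℓ) :=
    (finCongr hcast).trans ((finSumFinEquiv.symm).trans (Equiv.ofBijective _ hbij)) with hσ
  have step2 : ∀ y : Fin ℓ → S, F (fun m => y (ιc m))
      = f (fun i => if i ∈ I then z i else y i) := by
    intro y
    have key : (fun i => if i ∈ I then z i else y i) ∘ σ
        = fun i => Fin.append (fun m => z (ι m)) (fun m => y (ιc m)) (Fin.cast hcast i) := by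
      funext i
      have hσi : σ i = Sum.elim ι ιc (finSumFinEquiv.symm (Fin.cast hcast i)) := rfl
      rcases hq : finSumFinEquiv.symm (Fin.cast hcast i) with m | m
      · have hci : Fin.cast hcast i = finSumFinEquiv (Sum.inl m) := by
          rw [← hq, Equiv.apply_symm_apply]
        have h1 : σ i = ι m := by rw [hσi, hq, Sum.elim_inl]
        simp only [Function.comp_apply, h1, if_pos (hιmem m), hci,
          finSumFinEquiv_apply_left, Fin.append_left]
      · have hci : Fin.cast hcast i = finSumFinEquiv (Sum.inr m) := by
          rw [← hq, Equiv.apply_symm_apply]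
        have h1 : σ i = ιc m := by rw [hσi, hq, Sum.elim_inr]
        simp only [Function.comp_apply, h1, if_neg (hιcmem m), hci,
          finSumFinEquiv_apply_right, Fin.append_right]
    show f (fun i => Fin.append (fun m => z (ι m)) (fun m => y (ιc m)) (Fin.cast hcast i))
      = f (fun i => if i ∈ I then z i else y i)
    rw [← key]
    exact hsymm σ _
  rw [show (∫ y : Fin (ℓ - I.card) → S,
      f (fun i => Fin.append (fun m => z (I.orderIsoOfFin rfl m)) y
        (Fin.cast (Nat.add_sub_cancel' h).symm i))
      ∂(Measure.pi fun _ : Fin (ℓ - I.card) => μ))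
    = ∫ y, F y ∂(Measure.pi fun _ : Fin (ℓ - k) => μ) from rfl, step1]
  exact integral_congr_ae (Filter.Eventually.of_forall fun y => step2 y)

lemma aux_core (μ : Measure S) [IsProbabilityMeasure μ]
    (ℓ : ℕ) (hℓ : 1 ≤ ℓ) (f : (Fin ℓ → S) → ℝ) (hf : Measurable f)
    (hfπ : Integrable f (Measure.pi fun _ : Fin ℓ => μ))
    (J : Finset (Fin ℓ)) (hJ : J ≠ Finset.univ)
    (t : Set ({x : Fin ℓ // x ∈ J} → S)) (ht : MeasurableSet t) :
    ∫ z in ((fun (z : Fin ℓ → S) (j : {x : Fin ℓ // x ∈ J}) => z (j : Fin ℓ)) ⁻¹' t),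
      (f z - ∑ I ∈ Finset.univ.filter (fun I : Finset (Fin ℓ) => I.card < ℓ),
        (-1 : ℝ) ^ (ℓ - 1 - I.card) *
          ∫ y, f (fun i => if i ∈ I then z i else y i) ∂(Measure.pi fun _ : Fin ℓ => μ))
      ∂(Measure.pi fun _ : Fin ℓ => μ) = 0 := by
  classical
  set π : Measure (Fin ℓ → S) := Measure.pi fun _ : Fin ℓ => μ with hπdef
  set Pi2 : Measure (Fin ℓ ⊕ Fin ℓ → S) := Measure.pi fun _ : Fin ℓ ⊕ Fin ℓ => μ with hPi2def
  set E : (Fin ℓ ⊕ Fin ℓ → S) ≃ᵐ (Fin ℓ → S) × (Fin ℓ → S) :=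
    MeasurableEquiv.sumPiEquivProdPi (fun _ : Fin ℓ ⊕ Fin ℓ => S) with hEdef
  set prJ : (Fin ℓ → S) → ({x : Fin ℓ // x ∈ J} → S) :=
    fun z j => z (j : Fin ℓ) with hprJ
  have hprJm : Measurable prJ := measurable_pi_lambda _ fun j => measurable_pi_apply _
  set A : Set (Fin ℓ → S) := prJ ⁻¹' t with hA
  have hAm : MeasurableSet A := hprJm ht
  set patch : Finset (Fin ℓ) → ((Fin ℓ → S) × (Fin ℓ → S)) → (Fin ℓ → S) :=
    fun I p i => if i ∈ I then p.1 i else p.2 i with hpatch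
  have hpatchm : ∀ I, Measurable (patch I) := by
    intro I
    refine measurable_pi_lambda _ fun i => ?_
    by_cases h : i ∈ I
    · simp only [hpatch, if_pos h]; exact (measurable_pi_apply i).comp measurable_fst
    · simp only [hpatch, if_neg h]; exact (measurable_pi_apply i).comp measurable_snd
  have hEs : MeasurePreserving E.symm (π.prod π) Pi2 :=
    measurePreserving_sumPiEquivProdPi_symm (fun _ : Fin ℓ ⊕ Fin ℓ => μ)
  have hE : MeasurePreserving E Pi2 (π.prod π) := by
    have := hEs.symm
    rwa [MeasurableEquiv.symm_symm] at this
  -- patch is measure preserving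
  have hpatchMP : ∀ I, MeasurePreserving (patch I) (π.prod π) π := by
    intro I
    set g : Fin ℓ → Fin ℓ ⊕ Fin ℓ := fun i => if i ∈ I then Sum.inl i else Sum.inr i with hg
    have hginj : Function.Injective g := by
      intro a b hab
      by_cases ha : a ∈ I <;> by_cases hb : b ∈ I <;>
        simp only [hg, if_pos, if_neg, ha, hb] at hab <;> simp_all
    have h1 := (aux_pi_map_comp μ hginj).comp hEs
    have h2 : (fun (x : Fin ℓ ⊕ Fin ℓ → S) (k : Fin ℓ) => x (g k)) ∘ E.symm = patch I := by
      funext p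
      funext i
      by_cases h : i ∈ I
      · simp [hg, hpatch, if_pos h, hEdef, MeasurableEquiv.sumPiEquivProdPi,
          Equiv.sumPiEquivProdPi]
      · simp [hg, hpatch, if_neg h, hEdef, MeasurableEquiv.sumPiEquivProdPi,
          Equiv.sumPiEquivProdPi]
    rwa [h2] at h1
  have hfint2 : ∀ I, Integrable (fun p => f (patch I p)) (π.prod π) := by
    intro I
    exact ((hpatchMP I).integrable_comp hf.aestronglyMeasurable).2 hfπ
  set Af : Finset (Fin ℓ) → (Fin ℓ → S) → ℝ := fun I x => ∫ y, f (patch I (x, y)) ∂π with hAf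
  have hAfm : ∀ I, Measurable (Af I) := fun I =>
    (hf.comp (hpatchm I)).stronglyMeasurable.integral_prod_right'.measurable
  have hAfint : ∀ I, Integrable (Af I) π := fun I => (hfint2 I).integral_prod_left
  -- the Θ function
  set G : Finset (Fin ℓ) → (Fin ℓ ⊕ Fin ℓ → S) → ℝ := fun T w =>
    Set.indicator t (fun _ => (1 : ℝ))
        (fun j : {x : Fin ℓ // x ∈ J} => if (j : Fin ℓ) ∈ T then w (Sum.inl j) else w (Sum.inr j))
      * f (fun i => w (Sum.inl i)) with hG
  have hGm : ∀ T, Measurable (G T) := by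
    intro T
    refine Measurable.mul ?_ (hf.comp (measurable_pi_lambda _ fun i => measurable_pi_apply _))
    refine (measurable_const.indicator ht).comp ?_
    refine measurable_pi_lambda _ fun j => ?_
    by_cases h : (j : Fin ℓ) ∈ T
    · simp only [if_pos h]; exact measurable_pi_apply _
    · simp only [if_neg h]; exact measurable_pi_apply _
  set Θ : Finset (Fin ℓ) → ℝ := fun T => ∫ w, G T w ∂Pi2 with hΘ
  -- Θ J equals the f-term
  have h2inl := (aux_pi_map_comp μ (Sum.inl_injective : Function.Injective
    (Sum.inl : Fin ℓ → Fin ℓ ⊕ Fin ℓ))).map_eq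
  have hΘJ : ∫ z in A, f z ∂π = Θ J := by
    have h1 : G J = (fun w => Set.indicator A f (fun i => w (Sum.inl i))) := by
      funext w
      have harg : (fun j : {x : Fin ℓ // x ∈ J} =>
          if (j : Fin ℓ) ∈ J then w (Sum.inl j) else w (Sum.inr j))
          = fun j : {x : Fin ℓ // x ∈ J} => w (Sum.inl j) := by
        funext j; exact if_pos j.2
      by_cases h : prJ (fun i => w (Sum.inl i)) ∈ t
      · simp only [hG, harg, hA]
        rw [Set.indicator_of_mem h, Set.indicator_of_mem (by exact h), one_mul]
      · simp only [hG, harg, hA]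
        rw [Set.indicator_of_notMem h, Set.indicator_of_notMem (by exact h), zero_mul]
    have h3 : ∫ w : Fin ℓ ⊕ Fin ℓ → S, Set.indicator A f (fun i => w (Sum.inl i))
          ∂(Measure.pi fun _ : Fin ℓ ⊕ Fin ℓ => μ)
        = ∫ z, Set.indicator A f z ∂(Measure.pi fun _ : Fin ℓ => μ) := by
      conv_rhs => rw [← h2inl]
      rw [integral_map (measurable_pi_lambda _ fun k => measurable_pi_apply _).aemeasurable
        (by rw [h2inl]; exact (hf.indicator hAm).aestronglyMeasurable)]
    show _ = ∫ w, G J w ∂Pi2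
    simp only [h1]
    rw [← integral_indicator hAm, hπdef, hPi2def]
    exact h3.symm
  -- Θ (I ∩ J) equals the Af I term
  have hΘI : ∀ I : Finset (Fin ℓ), ∫ z in A, Af I z ∂π = Θ (I ∩ J) := by
    intro I
    set B : Set ((Fin ℓ → S) × (Fin ℓ → S)) := (fun p => prJ p.1) ⁻¹' t with hB
    have hBm : MeasurableSet B := (hprJm.comp measurable_fst) ht
    set u : ((Fin ℓ → S) × (Fin ℓ → S)) → ℝ := B.indicator (fun p => f (patch I p)) with hu
    have hum : Measurable u := (hf.comp (hpatchm I)).indicator hBm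
    have hu_int : Integrable u (π.prod π) := (hfint2 I).indicator hBm
    have hsB : ∀ (z y : Fin ℓ → S), u (z, y)
        = Set.indicator t (fun _ => (1:ℝ)) (prJ z) * f (patch I (z, y)) := by
      intro z y
      by_cases h : prJ z ∈ t
      · rw [hu, Set.indicator_of_mem (show (z, y) ∈ B from h),
          Set.indicator_of_mem h, one_mul]
      · rw [hu, Set.indicator_of_notMem (show (z, y) ∉ B from h),
          Set.indicator_of_notMem h, zero_mul]
    have hstepAB : ∫ z in A, Af I z ∂π = ∫ z, ∫ y, u (z, y) ∂π ∂π := by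
      rw [← integral_indicator hAm]
      refine integral_congr_ae (Filter.Eventually.of_forall fun z => ?_)
      by_cases h : z ∈ A
      · rw [Set.indicator_of_mem h]
        show Af I z = ∫ y, u (z, y) ∂π
        refine integral_congr_ae (Filter.Eventually.of_forall fun y => ?_)
        show f (patch I (z, y)) = u (z, y)
        rw [hsB z y, Set.indicator_of_mem (by exact h), one_mul]
      · rw [Set.indicator_of_notMem h]
        symm
        have : ∀ y : Fin ℓ → S, u (z, y) = 0 := fun y => by
          rw [hsB z y, Set.indicator_of_notMem (by exact h), zero_mul]
        simp only [this, integral_zero]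
    have hstepC : ∫ z, ∫ y, u (z, y) ∂π ∂π = ∫ p, u p ∂(π.prod π) := by
      simpa using integral_integral (f := fun z y => u (z, y)) hu_int
    have hstepD : ∫ p, u p ∂(π.prod π) = ∫ w, u (E w) ∂Pi2 := by
      rw [← hE.map_eq, integral_map hE.measurable.aemeasurable
        (by rw [hE.map_eq]; exact hum.aestronglyMeasurable)]
    set ρ : Fin ℓ ⊕ Fin ℓ → Fin ℓ ⊕ Fin ℓ :=
      Sum.elim (fun i => if i ∈ I then Sum.inl i else Sum.inr i)
        (fun i => if i ∈ I then Sum.inr i else Sum.inl i) with hρ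
    have hρρ : ∀ v, ρ (ρ v) = v := by
      intro v
      rcases v with a | a
      · by_cases ha : a ∈ I
        · rw [show ρ (Sum.inl a) = Sum.inl a from by
            simp only [hρ, Sum.elim_inl, if_pos ha]]
          simp only [hρ, Sum.elim_inl, if_pos ha]
        · rw [show ρ (Sum.inl a) = Sum.inr a from by
            simp only [hρ, Sum.elim_inl, if_neg ha]]
          simp only [hρ, Sum.elim_inr, if_neg ha]
      · by_cases ha : a ∈ I
        · rw [show ρ (Sum.inr a) = Sum.inr a from by
            simp only [hρ, Sum.elim_inr, if_pos ha]]
          simp only [hρ, Sum.elim_inr, if_pos ha]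
        · rw [show ρ (Sum.inr a) = Sum.inl a from by
            simp only [hρ, Sum.elim_inr, if_neg ha]]
          simp only [hρ, Sum.elim_inl, if_neg ha]
    have hρinj : Function.Injective ρ := Function.LeftInverse.injective hρρ
    have hstepE : ∀ w, G (I ∩ J) (fun v => w (ρ v)) = u (E w) := by
      intro w
      have hEw : E w = (fun i => w (Sum.inl i), fun i => w (Sum.inr i)) := rfl
      rw [hEw, hsB]
      show Set.indicator t (fun _ => (1:ℝ)) (fun j : {x : Fin ℓ // x ∈ J} =>
          if (j : Fin ℓ) ∈ I ∩ J then w (ρ (Sum.inl j)) else w (ρ (Sum.inr j)))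
        * f (fun i => w (ρ (Sum.inl i))) = _
      congr 1
      · congr 1
        funext j
        by_cases h : (j : Fin ℓ) ∈ I
        · rw [if_pos (Finset.mem_inter.2 ⟨h, j.2⟩)]
          simp [hρ, if_pos h, hprJ]
        · rw [if_neg (fun hc => h (Finset.mem_inter.1 hc).1)]
          simp [hρ, if_neg h, hprJ]
      · congr 1
        funext i
        by_cases h : i ∈ I
        · simp [hρ, hpatch, if_pos h]
        · simp [hρ, hpatch, if_neg h]
    have hstepF : ∫ w, G (I ∩ J) (fun v => w (ρ v)) ∂Pi2 = Θ (I ∩ J) := by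
      have h2 := (aux_pi_map_comp μ hρinj).map_eq
      show _ = ∫ w, G (I ∩ J) w ∂Pi2
      conv_rhs => rw [hPi2def, ← h2]
      rw [integral_map (measurable_pi_lambda _ fun k => measurable_pi_apply _).aemeasurable
        (by rw [h2]; exact (hGm _).aestronglyMeasurable)]
    calc ∫ z in A, Af I z ∂π = ∫ p, u p ∂(π.prod π) := by rw [hstepAB, hstepC]
      _ = ∫ w, u (E w) ∂Pi2 := hstepD
      _ = ∫ w, G (I ∩ J) (fun v => w (ρ v)) ∂Pi2 := by
          refine integral_congr_ae (Filter.Eventually.of_forall fun w => ?_)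
          exact (hstepE w).symm
      _ = Θ (I ∩ J) := hstepF
  -- finale
  show ∫ z in A, (f z - ∑ I ∈ Finset.univ.filter (fun I : Finset (Fin ℓ) => I.card < ℓ),
      (-1 : ℝ) ^ (ℓ - 1 - I.card) * Af I z) ∂π = 0
  have hsumint : Integrable (fun z => ∑ I ∈ Finset.univ.filter
      (fun I : Finset (Fin ℓ) => I.card < ℓ),
      (-1 : ℝ) ^ (ℓ - 1 - I.card) * Af I z) π :=
    integrable_finset_sum _ fun I _ => (hAfint I).const_mul _
  rw [integral_sub hfπ.integrableOn hsumint.integrableOn,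
    integral_finset_sum _ fun I _ => ((hAfint I).const_mul _).integrableOn]
  have : ∀ I ∈ Finset.univ.filter (fun I : Finset (Fin ℓ) => I.card < ℓ),
      ∫ z in A, (-1 : ℝ) ^ (ℓ - 1 - I.card) * Af I z ∂π
        = (-1 : ℝ) ^ (ℓ - 1 - I.card) * Θ (I ∩ J) := by
    intro I _
    rw [integral_const_mul, hΘI I]
  rw [Finset.sum_congr rfl this, aux_comb hℓ J hJ Θ, hΘJ, sub_self]

end auxiliary

/-- Hoeffding-type decomposition: let `(X_i)_{i ≥ 1}` be an i.i.d. sequence with common law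
`μ` on a Polish space `S`, `ℓ ≥ 2`, and let `f : S^ℓ → ℝ` be Borel measurable, symmetric,
with `E|f(X_1, …, X_ℓ)| < ∞`. Then there exist Borel measurable functions
`φ_0, …, φ_{ℓ-1}` with `φ_j : S^j → ℝ` symmetric, given by the explicit formula
`φ_j(x_1, …, x_j) = (-1)^{ℓ-1-j} ∫ f(x_1, …, x_ℓ) dμ(x_{j+1}) ⋯ dμ(x_ℓ)`, such that for
every proper subset `J ⊊ {1, …, ℓ}`,
`E[f(X_1,…,X_ℓ) − Σ_{k<ℓ} Σ_{|I|=k} φ_k(X_I) | σ(X_j : j ∈ J)] = 0` a.s. -/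
theorem stmt_15 {Ω S : Type*} [MeasurableSpace Ω] [MeasurableSpace S]
    [TopologicalSpace S] [PolishSpace S] [BorelSpace S]
    (P : Measure Ω) [IsProbabilityMeasure P] (μ : Measure S) [IsProbabilityMeasure μ]
    (X : ℕ → Ω → S) (hmeas : ∀ i, Measurable (X i))
    (hindep : iIndepFun (fun i : ℕ => X (i + 1)) P)
    (hident : ∀ i : ℕ, P.map (X (i + 1)) = μ)
    (ℓ : ℕ) (hℓ : 2 ≤ ℓ) (f : (Fin ℓ → S) → ℝ) (hf : Measurable f)
    (hsymm : ∀ (σ : Equiv.Perm (Fin ℓ)) (x : Fin ℓ → S), f (x ∘ σ) = f x)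
    (hint : Integrable (fun ω => f fun k => X ((k : ℕ) + 1) ω) P) :
    ∃ φ : (j : ℕ) → (Fin j → S) → ℝ,
      (∀ j, j < ℓ → Measurable (φ j)) ∧
      (∀ j, j < ℓ → ∀ (σ : Equiv.Perm (Fin j)) (x : Fin j → S), φ j (x ∘ σ) = φ j x) ∧
      (∀ (j : ℕ) (hj : j < ℓ) (x : Fin j → S),
        φ j x = (-1 : ℝ) ^ (ℓ - 1 - j) *
          ∫ y : Fin (ℓ - j) → S,
            f (fun i => Fin.append x y (Fin.cast (Nat.add_sub_cancel' hj.le).symm i))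
            ∂Measure.pi fun _ : Fin (ℓ - j) => μ) ∧
      (∀ J : Finset (Fin ℓ), J ≠ Finset.univ →
        P[(fun ω => f (fun k => X ((k : ℕ) + 1) ω) -
            ∑ I ∈ Finset.univ.filter (fun I : Finset (Fin ℓ) => I.card < ℓ),
              φ I.card fun m => X (((I.orderIsoOfFin rfl m).val : ℕ) + 1) ω) |
          MeasurableSpace.comap
            (fun ω => fun j : {x : Fin ℓ // x ∈ J} => X (((j : Fin ℓ) : ℕ) + 1) ω)
            inferInstance]
          =ᵐ[P] 0) := by
  classical
  have hone : (1 : ℕ) ≤ ℓ := le_trans one_le_two hℓ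
  set Y : Ω → (Fin ℓ → S) := fun ω k => X ((k : ℕ) + 1) ω with hYdef
  have hY : Measurable Y := measurable_pi_lambda _ fun k => hmeas _
  have hmap : P.map Y = Measure.pi fun _ : Fin ℓ => μ :=
    aux_map_pi P μ X hmeas hindep hident ℓ
  have hfπ : Integrable f (Measure.pi fun _ : Fin ℓ => μ) := by
    rw [← hmap]
    exact (integrable_map_measure hf.aestronglyMeasurable hY.aemeasurable).2 hint
  have hAfm : ∀ I : Finset (Fin ℓ), Measurable (fun x : Fin ℓ → S =>
      ∫ y, f (fun i => if i ∈ I then x i else y i) ∂(Measure.pi fun _ : Fin ℓ => μ)) :=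
    fun I =>
      (hf.comp (aux_patch_meas ℓ I)).stronglyMeasurable.integral_prod_right'.measurable
  have hAfint : ∀ I : Finset (Fin ℓ), Integrable (fun x : Fin ℓ → S =>
      ∫ y, f (fun i => if i ∈ I then x i else y i) ∂(Measure.pi fun _ : Fin ℓ => μ))
      (Measure.pi fun _ : Fin ℓ => μ) :=
    fun I =>
      (((aux_patch_mp μ ℓ I).integrable_comp hf.aestronglyMeasurable).2 hfπ).integral_prod_left
  set Φ : (j : ℕ) → (Fin j → S) → ℝ := fun j x =>
    if h : j ≤ ℓ then (-1 : ℝ) ^ (ℓ - 1 - j) *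
      ∫ y : Fin (ℓ - j) → S,
        f (fun i => Fin.append x y (Fin.cast (Nat.add_sub_cancel' h).symm i))
        ∂Measure.pi fun _ : Fin (ℓ - j) => μ
    else 0 with hΦ
  have hΦmeas : ∀ j, j < ℓ → Measurable (Φ j) := by
    intro j hj
    simp only [hΦ, dif_pos hj.le]
    refine Measurable.const_mul ?_ _
    have hm1 : Measurable (fun p : (Fin j → S) × (Fin (ℓ - j) → S) =>
        f (fun i => Fin.append p.1 p.2 (Fin.cast (Nat.add_sub_cancel' hj.le).symm i))) :=
      hf.comp (measurable_pi_lambda _ fun i => happ_meas _)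
    exact hm1.stronglyMeasurable.integral_prod_right'.measurable
  have hΦsymm : ∀ j, j < ℓ → ∀ (σ : Equiv.Perm (Fin j)) (x : Fin j → S),
      Φ j (x ∘ σ) = Φ j x := by
    intro j hj σ x
    simp only [hΦ, dif_pos hj.le]
    congr 1
    refine integral_congr_ae (Filter.Eventually.of_forall fun y => ?_)
    set h : ℓ = j + (ℓ - j) := (Nat.add_sub_cancel' hj.le).symm
    set τ : Equiv.Perm (Fin ℓ) :=
      (finCongr h).trans ((finSumFinEquiv.symm).trans
        ((Equiv.sumCongr σ (Equiv.refl (Fin (ℓ - j)))).trans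
          (finSumFinEquiv.trans (finCongr h.symm)))) with hτ
    have key : (fun i => Fin.append x y (Fin.cast h i)) ∘ τ
        = fun i => Fin.append (x ∘ σ) y (Fin.cast h i) := by
      funext i
      rcases hq : finSumFinEquiv.symm (Fin.cast h i) with m | m
      · have hci : Fin.cast h i = finSumFinEquiv (Sum.inl m) := by
          rw [← hq, Equiv.apply_symm_apply]
        have hτi : Fin.cast h (τ i) = finSumFinEquiv (Sum.inl (σ m)) := by
          simp [hτ, hq, Fin.cast_cast]
        simp only [Function.comp_apply, hτi, hci, finSumFinEquiv_apply_left, Fin.append_left]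
      · have hci : Fin.cast h i = finSumFinEquiv (Sum.inr m) := by
          rw [← hq, Equiv.apply_symm_apply]
        have hτi : Fin.cast h (τ i) = finSumFinEquiv (Sum.inr m) := by
          simp [hτ, hq, Fin.cast_cast]
        simp only [Function.comp_apply, hτi, hci, finSumFinEquiv_apply_right, Fin.append_right]
    show f (fun i => Fin.append (x ∘ σ) y (Fin.cast h i))
      = f fun i => Fin.append x y (Fin.cast h i)
    rw [← key]
    exact hsymm τ _
  have hbridgeI : ∀ I : Finset (Fin ℓ), I.card < ℓ → ∀ z : Fin ℓ → S,
      Φ I.card (fun m => z (I.orderIsoOfFin rfl m)) = (-1 : ℝ) ^ (ℓ - 1 - I.card) *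
        ∫ y, f (fun i => if i ∈ I then z i else y i) ∂(Measure.pi fun _ : Fin ℓ => μ) := by
    intro I hI z
    have hle : I.card ≤ ℓ := hI.le
    simp only [hΦ, dif_pos hle]
    rw [aux_bridge μ ℓ f hf hsymm I hle z]
  refine ⟨Φ, hΦmeas, hΦsymm, fun j hj x => by simp only [hΦ, dif_pos hj.le], ?_⟩
  intro J hJ
  have hZ : Measurable (fun ω => fun j : {x : Fin ℓ // x ∈ J} =>
      X (((j : Fin ℓ) : ℕ) + 1) ω) := measurable_pi_lambda _ fun j => hmeas _
  have hm := hZ.comap_le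
  refine (ae_eq_condExp_of_forall_setIntegral_eq hm ?_ (fun s _ _ => integrableOn_zero)
    ?_ ?_).symm
  · -- integrability
    refine Integrable.sub hint ?_
    refine integrable_finset_sum _ fun I hI => ?_
    have hIlt : I.card < ℓ := (Finset.mem_filter.1 hI).2
    have h1 : Integrable (fun z : Fin ℓ → S => (-1 : ℝ) ^ (ℓ - 1 - I.card) *
        ∫ y, f (fun i => if i ∈ I then z i else y i) ∂(Measure.pi fun _ : Fin ℓ => μ))
        (Measure.pi fun _ : Fin ℓ => μ) := (hAfint I).const_mul _
    have h2 : Integrable ((fun z : Fin ℓ → S => (-1 : ℝ) ^ (ℓ - 1 - I.card) *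
        ∫ y, f (fun i => if i ∈ I then z i else y i) ∂(Measure.pi fun _ : Fin ℓ => μ)) ∘ Y)
        P := by
      refine (integrable_map_measure (by rw [hmap]; exact h1.aestronglyMeasurable)
        hY.aemeasurable).1 (by rwa [hmap])
    exact h2.congr (Filter.Eventually.of_forall fun ω => (hbridgeI I hIlt (Y ω)).symm)
  · -- set integrals vanish
    intro s hs _
    obtain ⟨t, ht, rfl⟩ := hs
    simp only [Pi.zero_apply, integral_zero]
    symm
    have hAm : MeasurableSet ((fun (z : Fin ℓ → S) (j : {x : Fin ℓ // x ∈ J}) =>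
        z (j : Fin ℓ)) ⁻¹' t) := (measurable_pi_lambda _ fun j => measurable_pi_apply _) ht
    have hG0m : Measurable (fun z : Fin ℓ → S => f z -
        ∑ I ∈ Finset.univ.filter (fun I : Finset (Fin ℓ) => I.card < ℓ),
          Φ I.card (fun m => z (I.orderIsoOfFin rfl m))) := by
      refine hf.sub ?_
      refine Finset.measurable_sum _ fun I hI => ?_
      exact (hΦmeas I.card (Finset.mem_filter.1 hI).2).comp
        (measurable_pi_lambda _ fun m => measurable_pi_apply _)
    have hsm := setIntegral_map (g := Y) (μ := P)
      (f := fun z : Fin ℓ → S => f z -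
        ∑ I ∈ Finset.univ.filter (fun I : Finset (Fin ℓ) => I.card < ℓ),
          Φ I.card (fun m => z (I.orderIsoOfFin rfl m)))
      hAm (by rw [hmap]; exact hG0m.aestronglyMeasurable) hY.aemeasurable
    rw [hmap] at hsm
    have hstep : ∫ z in ((fun (z : Fin ℓ → S) (j : {x : Fin ℓ // x ∈ J}) =>
          z (j : Fin ℓ)) ⁻¹' t),
        (f z - ∑ I ∈ Finset.univ.filter (fun I : Finset (Fin ℓ) => I.card < ℓ),
          Φ I.card (fun m => z (I.orderIsoOfFin rfl m)))
        ∂(Measure.pi fun _ : Fin ℓ => μ) = 0 := by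
      have hcong : ∀ z ∈ ((fun (z : Fin ℓ → S) (j : {x : Fin ℓ // x ∈ J}) =>
            z (j : Fin ℓ)) ⁻¹' t),
          (f z - ∑ I ∈ Finset.univ.filter (fun I : Finset (Fin ℓ) => I.card < ℓ),
            Φ I.card (fun m => z (I.orderIsoOfFin rfl m)))
          = f z - ∑ I ∈ Finset.univ.filter (fun I : Finset (Fin ℓ) => I.card < ℓ),
            (-1 : ℝ) ^ (ℓ - 1 - I.card) *
              ∫ y, f (fun i => if i ∈ I then z i else y i)
                ∂(Measure.pi fun _ : Fin ℓ => μ) := by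
        intro z _
        congr 1
        exact Finset.sum_congr rfl fun I hI =>
          hbridgeI I (Finset.mem_filter.1 hI).2 z
      rw [setIntegral_congr_fun hAm hcong]
      exact aux_core μ ℓ hone f hf hfπ J hJ t ht
    rw [← hstep]
    exact hsm.symm
  · exact stronglyMeasurable_zero.aestronglyMeasurable
end
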